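/- arXiv:2412.07291 — 9 statements merged into one kernel-verified Lean document; each statement's English description precedes it below -/
import Mathlib

section
/- Let n ≥ 1, λ : Fin n → ℝ, and let P(λ) be the population polytope of λ. A set F ⊆ (Fin n → ℝ) is an edge of P(λ) if and only if there exist a coordinate permutation b = λ ∘ σ of λ and indices i, j : Fin n such that b i and b j are adjacent-valued and F is the closed segment [b, b ∘ (Equiv.swap i j)] joining b to the av-swap of b at i, j. -/
open Finset

namespace Stmt0Aux

variable {n : ℕ}

noncomputable def lfun (w : Fin n → ℝ) : (Fin n → ℝ) →L[ℝ] ℝ :=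
  LinearMap.toContinuousLinearMap
     { toFun := fun x => ∑ k, x k * w k
       map_add' := by intros a b; simp [add_mul, Finset.sum_add_distrib]
       map_smul' := by
         intros c a
         simp only [Pi.smul_apply, smul_eq_mul, RingHom.id_apply, Finset.mul_sum]
         exact Finset.sum_congr rfl fun k _ => by ring }

@[simp] lemma lfun_apply (w x : Fin n → ℝ) : lfun w x = ∑ k, x k * w k := rfl

lemma lrep (l : (Fin n → ℝ) →L[ℝ] ℝ) (x : Fin n → ℝ) :
    l x = ∑ k, x k * l (Pi.single k 1) := by
  conv_lhs => rw [pi_eq_sum_univ x, map_sum]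
  refine Finset.sum_congr rfl fun k _ => ?_
  have : (fun j => if k = j then (1:ℝ) else 0) = Pi.single k 1 := by
    funext j
    simp [Pi.single_apply, eq_comm]
  rw [map_smul, this, smul_eq_mul]

lemma convexHull_le_of_le {S : Set (Fin n → ℝ)} (l : (Fin n → ℝ) →L[ℝ] ℝ) (m : ℝ)
    (hmax : ∀ x ∈ S, l x ≤ m) : ∀ y ∈ convexHull ℝ S, l y ≤ m := by
  intro y hy
  have h : convexHull ℝ S ⊆ {z | l z ≤ m} :=
    convexHull_min hmax
      (convex_halfSpace_le ⟨fun a b => map_add l a b, fun c a => map_smul l c a⟩ m)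
  exact h hy

lemma mem_convexHull_argmax {S : Set (Fin n → ℝ)} (l : (Fin n → ℝ) →L[ℝ] ℝ) (m : ℝ)
    (hmax : ∀ x ∈ S, l x ≤ m) {y : Fin n → ℝ} (hy : y ∈ convexHull ℝ S) (hym : l y = m) :
    y ∈ convexHull ℝ {x | x ∈ S ∧ l x = m} := by
  rw [_root_.convexHull_eq] at hy
  obtain ⟨ι, t, a, z, ha0, ha1, hz, hc⟩ := hy
  have hy' : y = ∑ i ∈ t, a i • z i := by
    rw [← hc, Finset.centerMass_eq_of_sum_1 _ _ ha1]
  have hly : l y = ∑ i ∈ t, a i * l (z i) := by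
    rw [hy', map_sum]; exact Finset.sum_congr rfl fun i _ => by rw [map_smul, smul_eq_mul]
  have hsum0 : ∑ i ∈ t, a i * (m - l (z i)) = 0 := by
    have : ∑ i ∈ t, a i * (m - l (z i)) = (∑ i ∈ t, a i) * m - ∑ i ∈ t, a i * l (z i) := by
      rw [Finset.sum_mul, ← Finset.sum_sub_distrib]
      exact Finset.sum_congr rfl fun i _ => by ring
    rw [this, ha1, ← hly, hym]; ring
  have hterm : ∀ i ∈ t, a i * (m - l (z i)) = 0 :=
    (Finset.sum_eq_zero_iff_of_nonneg (fun i hi =>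
      mul_nonneg (ha0 i hi) (by linarith [hmax (z i) (hz i hi)]))).mp hsum0
  have hkey : ∀ i ∈ t, a i ≠ 0 → l (z i) = m := by
    intro i hi hai
    have := hterm i hi
    rcases mul_eq_zero.mp this with h | h
    · exact absurd h hai
    · linarith
  set t' := t.filter (fun i => l (z i) = m) with ht'
  have hzero : ∀ i ∈ t, i ∉ t' → a i = 0 := by
    intro i hi hni
    by_contra hai
    exact hni (Finset.mem_filter.mpr ⟨hi, hkey i hi hai⟩)
  have hsub : t' ⊆ t := Finset.filter_subset _ _
  have ha1' : ∑ i ∈ t', a i = 1 := by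
    rw [← ha1]
    exact (Finset.sum_subset hsub (fun i hi hni => hzero i hi hni)).symm ▸ rfl
  have hy'' : y = ∑ i ∈ t', a i • z i := by
    rw [hy']
    exact (Finset.sum_subset hsub (fun i hi hni => by rw [hzero i hi hni, zero_smul])).symm
  have := Finset.centerMass_mem_convexHull (R := ℝ) t'
    (fun i hi => ha0 i (hsub hi)) (by rw [ha1']; norm_num)
    (fun i hi => (show z i ∈ {x | x ∈ S ∧ l x = m} from
      ⟨hz i (hsub hi), (Finset.mem_filter.mp hi).2⟩))
  rwa [Finset.centerMass_eq_of_sum_1 _ _ ha1', ← hy''] at this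


/-- Two monotone rearrangements of the same tuple coincide. -/
lemma sorted_unique {f : Fin n → ℝ} {π₁ π₂ : Equiv.Perm (Fin n)}
    (h1 : Monotone (f ∘ π₁)) (h2 : Monotone (f ∘ π₂)) : f ∘ π₁ = f ∘ π₂ := by
  rw [Tuple.comp_sort_eq_comp_iff_monotone.mpr h1, Tuple.comp_sort_eq_comp_iff_monotone.mpr h2]

lemma comp_perm_cancel {f g : Fin n → ℝ} (e : Equiv.Perm (Fin n))
    (h : f ∘ e = g ∘ e) : f = g := by
  funext k
  have := congrFun h (e.symm k)
  simpa using this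

lemma sum_mul_swap (x w : Fin n → ℝ) {i j : Fin n} (hij : i ≠ j) :
    ∑ k, x (Equiv.swap i j k) * w k = ∑ k, x k * w k - (x i - x j) * (w i - w j) := by
  have h : ∑ k, (x k * w k - x (Equiv.swap i j k) * w k)
      = ∑ k ∈ ({i, j} : Finset (Fin n)), (x k * w k - x (Equiv.swap i j k) * w k) := by
    refine (Finset.sum_subset (Finset.subset_univ _) ?_).symm
    intro k _ hk
    simp only [Finset.mem_insert, Finset.mem_singleton, not_or] at hk
    rw [Equiv.swap_apply_of_ne_of_ne hk.1 hk.2, sub_self]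
  rw [Finset.sum_pair hij] at h
  rw [Finset.sum_sub_distrib] at h
  rw [Equiv.swap_apply_left, Equiv.swap_apply_right] at h
  have := h
  nlinarith [h]

/-- norms of permutations agree -/
lemma sum_sq_comp (b : Fin n → ℝ) (π : Equiv.Perm (Fin n)) :
    ∑ k, (b (π k))^2 = ∑ k, (b k)^2 := Equiv.sum_comp π (fun k => (b k)^2)

lemma set_perm_eq (lam : Fin n → ℝ) (σ : Equiv.Perm (Fin n)) :
    {x : Fin n → ℝ | ∃ τ : Equiv.Perm (Fin n), x = lam ∘ τ}
      = {x | ∃ π : Equiv.Perm (Fin n), x = (lam ∘ σ) ∘ π} := by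
  ext x
  constructor
  · rintro ⟨τ, rfl⟩
    exact ⟨τ.trans σ.symm, by funext k; simp⟩
  · rintro ⟨π, rfl⟩
    exact ⟨π.trans σ, by funext k; simp⟩

lemma finrank_vectorSpan_segment {b c : Fin n → ℝ} (h : b ≠ c) :
    Module.finrank ℝ ↥(vectorSpan ℝ (segment ℝ b c)) = 1 := by
  have h1 : vectorSpan ℝ (segment ℝ b c) = vectorSpan ℝ ({b, c} : Set (Fin n → ℝ)) := by
    apply le_antisymm
    · have hseg : segment ℝ b c ⊆ (affineSpan ℝ ({b, c} : Set (Fin n → ℝ)) : Set (Fin n → ℝ)) := by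
        have hb : b ∈ affineSpan ℝ ({b, c} : Set (Fin n → ℝ)) :=
          mem_affineSpan ℝ (Set.mem_insert _ _)
        have hc : c ∈ affineSpan ℝ ({b, c} : Set (Fin n → ℝ)) :=
          mem_affineSpan ℝ (Set.mem_insert_of_mem _ rfl)
        exact (AffineSubspace.convex _).segment_subset hb hc
      calc vectorSpan ℝ (segment ℝ b c)
          ≤ vectorSpan ℝ ((affineSpan ℝ ({b, c} : Set (Fin n → ℝ)) : Set (Fin n → ℝ))) :=
            vectorSpan_mono ℝ hseg
        _ = vectorSpan ℝ ({b, c} : Set (Fin n → ℝ)) := by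
            rw [← direction_affineSpan]
            rw [AffineSubspace.affineSpan_coe]
            rw [direction_affineSpan]
    · exact vectorSpan_mono ℝ (by
        intro x hx
        rcases hx with hx | hx
        · rw [hx]; exact left_mem_segment ℝ b c
        · rw [hx]; exact right_mem_segment ℝ b c)
  rw [h1, vectorSpan_pair]
  rw [finrank_span_singleton (by simpa [sub_eq_zero] using h)]


lemma not_three_collinear {lam x y z : Fin n → ℝ}
    (hx : ∃ π : Equiv.Perm (Fin n), x = lam ∘ π)
    (hy : ∃ π : Equiv.Perm (Fin n), y = lam ∘ π)
    (hz : ∃ π : Equiv.Perm (Fin n), z = lam ∘ π)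
    (hcol : Collinear ℝ ({x, y, z} : Set (Fin n → ℝ)))
    (hxy : x ≠ y) (hxz : x ≠ z) (hyz : y ≠ z) : False := by
  rw [collinear_iff_exists_forall_eq_smul_vadd] at hcol
  obtain ⟨p₀, v, hv⟩ := hcol
  obtain ⟨t₁, hx'⟩ := hv x (by simp)
  obtain ⟨t₂, hy'⟩ := hv y (by simp)
  obtain ⟨t₃, hz'⟩ := hv z (by simp)
  set A := ∑ k, (v k)^2 with hA
  set B := ∑ k, v k * p₀ k with hB
  set C := ∑ k, (p₀ k)^2 with hC
  have expand : ∀ t : ℝ, ∑ k, (t * v k + p₀ k)^2 = t^2 * A + 2*t*B + C := by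
    intro t
    have h1 : ∀ k : Fin n, (t * v k + p₀ k)^2
        = t^2 * (v k)^2 + 2*t*(v k * p₀ k) + (p₀ k)^2 := fun k => by ring
    simp_rw [h1]
    rw [Finset.sum_add_distrib, Finset.sum_add_distrib, ← Finset.mul_sum, ← Finset.mul_sum]
  have happ : ∀ (u : Fin n → ℝ) (t : ℝ), u = t • v +ᵥ p₀ → ∀ k, u k = t * v k + p₀ k := by
    intro u t hu k
    rw [hu]; simp [smul_eq_mul]
  have hsq : ∀ (u : Fin n → ℝ), (∃ π : Equiv.Perm (Fin n), u = lam ∘ π) →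
      ∑ k, (u k)^2 = ∑ k, (lam k)^2 := by
    rintro u ⟨π, rfl⟩
    exact Equiv.sum_comp π (fun k => (lam k)^2)
  have hx2 : t₁^2 * A + 2*t₁*B + C = ∑ k, (lam k)^2 := by
    rw [← expand t₁, ← hsq x hx]
    exact Finset.sum_congr rfl fun k _ => by rw [happ x t₁ hx' k]
  have hy2 : t₂^2 * A + 2*t₂*B + C = ∑ k, (lam k)^2 := by
    rw [← expand t₂, ← hsq y hy]
    exact Finset.sum_congr rfl fun k _ => by rw [happ y t₂ hy' k]
  have hz2 : t₃^2 * A + 2*t₃*B + C = ∑ k, (lam k)^2 := by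
    rw [← expand t₃, ← hsq z hz]
    exact Finset.sum_congr rfl fun k _ => by rw [happ z t₃ hz' k]
  have hvne : v ≠ 0 := by
    intro hv0
    apply hxy
    funext k
    rw [happ x t₁ hx' k, happ y t₂ hy' k, hv0]
    simp
  have hApos : 0 < A := by
    rcases (Finset.sum_nonneg (fun k _ => sq_nonneg (v k))).lt_or_eq with h | h
    · exact h
    · exfalso
      apply hvne
      funext k
      have := (Finset.sum_eq_zero_iff_of_nonneg (fun k _ => sq_nonneg (v k))).mp h.symm k
        (Finset.mem_univ k)
      exact pow_eq_zero_iff (by norm_num) |>.mp this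
  have ht12 : t₁ ≠ t₂ := fun h => hxy (by rw [hx', hy', h])
  have ht13 : t₁ ≠ t₃ := fun h => hxz (by rw [hx', hz', h])
  have ht23 : t₂ ≠ t₃ := fun h => hyz (by rw [hy', hz', h])
  have k12 : (t₁ - t₂) * (A*(t₁+t₂) + 2*B) = 0 := by linear_combination hx2 - hy2
  have k13 : (t₁ - t₃) * (A*(t₁+t₃) + 2*B) = 0 := by linear_combination hx2 - hz2
  have e12 : A*(t₁+t₂) + 2*B = 0 :=
    (mul_eq_zero.mp k12).resolve_left (sub_ne_zero.mpr ht12)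
  have e13 : A*(t₁+t₃) + 2*B = 0 :=
    (mul_eq_zero.mp k13).resolve_left (sub_ne_zero.mpr ht13)
  have : A * (t₂ - t₃) = 0 := by linear_combination e12 - e13
  rcases mul_eq_zero.mp this with h | h
  · exact absurd h hApos.ne'
  · exact ht23 (by linarith [sub_eq_zero.mp h])

lemma maxchar {b : Fin n → ℝ} {i j : Fin n} (hij : b j < b i)
    (hadj : ∀ k, ¬(b j < b k ∧ b k < b i)) :
    ∃ w : Fin n → ℝ, w i = w j ∧
      (∀ π : Equiv.Perm (Fin n), ∑ k, w k * b (π k) ≤ ∑ k, w k * b k) ∧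
      (∀ π : Equiv.Perm (Fin n), ∑ k, w k * b (π k) = ∑ k, w k * b k →
        b ∘ π = b ∨ b ∘ π = b ∘ Equiv.swap i j) := by
  have hne : i ≠ j := fun h => absurd (h ▸ hij) (lt_irrefl _)
  have hsplit : ∀ k, b k ≤ b j ∨ b i ≤ b k := by
    intro k
    by_contra h
    push_neg at h
    exact hadj k ⟨h.1, h.2⟩
  set Nv := (Finset.univ.filter (fun k : Fin n => b k ≤ b j)).card with hNvdef
  set r : Fin n → ℕ := fun k =>
    (Finset.univ.filter (fun k' => b k' < b k ∨ (b k' = b k ∧ k' < k))).card with hrdef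
  have memr : ∀ p k', k' ∈ Finset.univ.filter
      (fun k'' => b k'' < b p ∨ (b k'' = b p ∧ k'' < p)) ↔
      (b k' < b p ∨ (b k' = b p ∧ k' < p)) := by
    intro p k'; simp
  have rmono : ∀ p q, b p < b q → r p < r q := by
    intro p q h
    apply Finset.card_lt_card
    rw [Finset.ssubset_iff_of_subset]
    · exact ⟨p, (memr q p).mpr (Or.inl h), fun hc => by
        rcases (memr p p).mp hc with h' | h'
        · exact lt_irrefl _ h'
        · exact lt_irrefl _ h'.2⟩
    · intro k' hk'
      rcases (memr p k').mp hk' with h' | h'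
      · exact (memr q k').mpr (Or.inl (h'.trans h))
      · exact (memr q k').mpr (Or.inl (h'.1.le.trans_lt h))
  have rlex : ∀ p q, b p = b q → p < q → r p < r q := by
    intro p q hbe h
    apply Finset.card_lt_card
    rw [Finset.ssubset_iff_of_subset]
    · exact ⟨p, (memr q p).mpr (Or.inr ⟨hbe, h⟩), fun hc => by
        rcases (memr p p).mp hc with h' | h'
        · exact lt_irrefl _ h'
        · exact lt_irrefl _ h'.2⟩
    · intro k' hk'
      rcases (memr p k').mp hk' with h' | h'
      · exact (memr q k').mpr (Or.inl (hbe ▸ h'))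
      · exact (memr q k').mpr (Or.inr ⟨hbe ▸ h'.1, h'.2.trans h⟩)
  have rinj : ∀ p q, r p = r q → p = q := by
    intro p q h
    rcases lt_trichotomy (b p) (b q) with hb | hb | hb
    · exact absurd h (rmono p q hb).ne
    · rcases lt_trichotomy p q with hpq | hpq | hpq
      · exact absurd h (rlex p q hb hpq).ne
      · exact hpq
      · exact absurd h.symm (rlex q p hb.symm hpq).ne
    · exact absurd h.symm (rmono q p hb).ne
  have rlow : ∀ p, b p ≤ b j → r p < Nv := by
    intro p hp
    apply Finset.card_lt_card
    rw [Finset.ssubset_iff_of_subset]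
    · refine ⟨p, by simp [hp], fun hc => ?_⟩
      rcases (memr p p).mp hc with h' | h'
      · exact lt_irrefl _ h'
      · exact lt_irrefl _ h'.2
    · intro k' hk'
      rcases (memr p k').mp hk' with h' | h'
      · simp [h'.le.trans hp]
      · simp [h'.1.le.trans hp]
  have rhigh : ∀ p, b i ≤ b p → Nv ≤ r p := by
    intro p hp
    apply Finset.card_le_card
    intro k' hk'
    simp only [Finset.mem_filter, Finset.mem_univ, true_and] at hk'
    exact (memr p k').mpr (Or.inl (lt_of_le_of_lt hk' (lt_of_lt_of_le hij hp)))
  set w : Fin n → ℝ := fun k => if k = i ∨ k = j then (Nv : ℝ) - 1/2 else (r k : ℝ) with hwdef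
  have wi : w i = (Nv : ℝ) - 1/2 := by simp [hwdef]
  have wj : w j = (Nv : ℝ) - 1/2 := by simp [hwdef]
  have wij : w i = w j := by rw [wi, wj]
  have wval : ∀ p, p ≠ i → p ≠ j → w p = (r p : ℝ) := by
    intro p h1 h2; simp [hwdef, h1, h2]
  have whigh : ∀ p, p ≠ i → p ≠ j → b i ≤ b p → (Nv : ℝ) - 1/2 < w p := by
    intro p h1 h2 hb
    rw [wval p h1 h2]
    have := rhigh p hb
    have : (Nv : ℝ) ≤ (r p : ℝ) := by exact_mod_cast this
    linarith
  have wlow : ∀ p, p ≠ i → p ≠ j → b p ≤ b j → w p < (Nv : ℝ) - 1/2 := by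
    intro p h1 h2 hb
    rw [wval p h1 h2]
    have h := rlow p hb
    have : (r p : ℝ) + 1 ≤ (Nv : ℝ) := by exact_mod_cast Nat.succ_le_of_lt h
    linarith
  have bspecialle : ∀ p, p = i ∨ p = j → b j ≤ b p ∧ b p ≤ b i := by
    rintro p (rfl | rfl)
    · exact ⟨hij.le, le_refl _⟩
    · exact ⟨le_refl _, hij.le⟩
  -- W1 : Monovary w b
  have W1 : Monovary w b := by
    intro p q h
    by_cases hp : p = i ∨ p = j <;> by_cases hq : q = i ∨ q = j
    · have : w p = (Nv : ℝ) - 1/2 := by rcases hp with rfl | rfl <;> simp [wi, wj]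
      have h2 : w q = (Nv : ℝ) - 1/2 := by rcases hq with rfl | rfl <;> simp [wi, wj]
      rw [this, h2]
    · push_neg at hq
      have hbp : b j ≤ b p := (bspecialle p hp).1
      have hbq : b i ≤ b q := by
        rcases hsplit q with h' | h'
        · exact absurd (lt_of_le_of_lt hbp h) (not_lt.mpr h')
        · exact h'
      have : w p = (Nv : ℝ) - 1/2 := by rcases hp with rfl | rfl <;> simp [wi, wj]
      rw [this]
      exact (whigh q hq.1 hq.2 hbq).le
    · push_neg at hp
      have hbq : b q ≤ b i := (bspecialle q hq).2
      have hbp : b p ≤ b j := by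
        rcases hsplit p with h' | h'
        · exact h'
        · exact absurd (lt_of_lt_of_le h hbq) (not_lt.mpr h')
      have h2 : w q = (Nv : ℝ) - 1/2 := by rcases hq with rfl | rfl <;> simp [wi, wj]
      rw [h2]
      exact (wlow p hp.1 hp.2 hbp).le
    · push_neg at hp; push_neg at hq
      rw [wval p hp.1 hp.2, wval q hq.1 hq.2]
      exact_mod_cast (rmono p q h).le
  -- W3 : w p < w q → b p ≤ b q
  have W3 : ∀ p q, w p < w q → b p ≤ b q := by
    intro p q h
    by_cases hp : p = i ∨ p = j <;> by_cases hq : q = i ∨ q = j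
    · have h1 : w p = (Nv : ℝ) - 1/2 := by rcases hp with rfl | rfl <;> simp [wi, wj]
      have h2 : w q = (Nv : ℝ) - 1/2 := by rcases hq with rfl | rfl <;> simp [wi, wj]
      rw [h1, h2] at h
      exact absurd h (lt_irrefl _)
    · push_neg at hq
      have h1 : w p = (Nv : ℝ) - 1/2 := by rcases hp with rfl | rfl <;> simp [wi, wj]
      rw [h1] at h
      have hbq : b i ≤ b q := by
        rcases hsplit q with h' | h'
        · exact absurd h (not_lt.mpr (wlow q hq.1 hq.2 h').le)
        · exact h'
      exact le_trans (bspecialle p hp).2 hbq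
    · push_neg at hp
      have h2 : w q = (Nv : ℝ) - 1/2 := by rcases hq with rfl | rfl <;> simp [wi, wj]
      rw [h2] at h
      have hbp : b p ≤ b j := by
        rcases hsplit p with h' | h'
        · exact h'
        · exact absurd h (not_lt.mpr (whigh p hp.1 hp.2 h').le)
      exact le_trans hbp (bspecialle q hq).1
    · push_neg at hp; push_neg at hq
      rw [wval p hp.1 hp.2, wval q hq.1 hq.2] at h
      by_contra hc
      push_neg at hc
      exact absurd h (not_lt.mpr (by exact_mod_cast (rmono q p hc).le))
  -- W2 : equal weights only for i,j or equal indices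
  have W2 : ∀ p q, w p = w q → p = q ∨ ((p = i ∨ p = j) ∧ (q = i ∨ q = j)) := by
    intro p q h
    by_cases hp : p = i ∨ p = j <;> by_cases hq : q = i ∨ q = j
    · exact Or.inr ⟨hp, hq⟩
    · push_neg at hq
      exfalso
      have h1 : w p = (Nv : ℝ) - 1/2 := by rcases hp with rfl | rfl <;> simp [wi, wj]
      rw [h1] at h
      rcases hsplit q with h' | h'
      · exact absurd h.symm (wlow q hq.1 hq.2 h').ne
      · exact absurd h (whigh q hq.1 hq.2 h').ne
    · push_neg at hp
      exfalso
      have h2 : w q = (Nv : ℝ) - 1/2 := by rcases hq with rfl | rfl <;> simp [wi, wj]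
      rw [h2] at h
      rcases hsplit p with h' | h'
      · exact absurd h (wlow p hp.1 hp.2 h').ne
      · exact absurd h.symm (whigh p hp.1 hp.2 h').ne
    · push_neg at hp; push_neg at hq
      rw [wval p hp.1 hp.2, wval q hq.1 hq.2] at h
      exact Or.inl (rinj p q (by exact_mod_cast h))
  refine ⟨w, wij, fun π => W1.sum_mul_comp_perm_le_sum_mul, ?_⟩
  intro π hEq
  have hmono : Monovary w (b ∘ π) := (W1.sum_mul_comp_perm_eq_sum_mul_iff).mp hEq
  set x : Fin n → ℝ := b ∘ π with hx
  have H1x : ∀ p q, w p < w q → x p ≤ x q := by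
    intro p q h
    by_contra hc
    push_neg at hc
    exact absurd h (not_lt.mpr (hmono hc))
  -- sorting permutation for w
  set e := Tuple.sort w with he
  have hsort : Monotone (w ∘ e) := Tuple.monotone_sort w
  -- ordered version of {i, j} by slot
  obtain ⟨i₀, j₀, hor, hslot⟩ :
      ∃ i₀ j₀ : Fin n, ((i₀ = i ∧ j₀ = j) ∨ (i₀ = j ∧ j₀ = i)) ∧ e.symm i₀ < e.symm j₀ := by
    have hne' : e.symm i ≠ e.symm j := fun h => hne (e.symm.injective h)
    rcases lt_or_gt_of_ne hne' with h | h
    · exact ⟨i, j, Or.inl ⟨rfl, rfl⟩, h⟩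
    · exact ⟨j, i, Or.inr ⟨rfl, rfl⟩, h⟩
  have hne₀ : i₀ ≠ j₀ := by rcases hor with ⟨rfl, rfl⟩ | ⟨rfl, rfl⟩; exact hne; exact hne.symm
  have wij₀ : w i₀ = w j₀ := by rcases hor with ⟨rfl, rfl⟩ | ⟨rfl, rfl⟩; exact wij; exact wij.symm
  have hswap₀ : Equiv.swap i₀ j₀ = Equiv.swap i j := by
    rcases hor with ⟨rfl, rfl⟩ | ⟨rfl, rfl⟩
    · rfl
    · exact Equiv.swap_comm _ _
  have hspec₀ : (i₀ = i ∨ i₀ = j) ∧ (j₀ = i ∨ j₀ = j) := by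
    rcases hor with ⟨rfl, rfl⟩ | ⟨rfl, rfl⟩
    · exact ⟨Or.inl rfl, Or.inr rfl⟩
    · exact ⟨Or.inr rfl, Or.inl rfl⟩
  have wswap : ∀ p, w (Equiv.swap i₀ j₀ p) = w p := by
    intro p
    rcases eq_or_ne p i₀ with rfl | h1
    · rw [Equiv.swap_apply_left]; exact wij₀.symm
    rcases eq_or_ne p j₀ with rfl | h2
    · rw [Equiv.swap_apply_right]; exact wij₀
    · rw [Equiv.swap_apply_of_ne_of_ne h1 h2]
  -- the key monotonicity lemma
  have MONO : ∀ y : Fin n → ℝ, (∀ p q, w p < w q → y p ≤ y q) → y i₀ ≤ y j₀ →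
      Monotone (y ∘ e) := by
    intro y H1 H2
    intro a a' haa'
    rcases eq_or_lt_of_le haa' with rfl | hlt
    · exact le_refl _
    have hwle : w (e a) ≤ w (e a') := hsort haa'
    rcases lt_or_eq_of_le hwle with hwlt | hweq
    · exact H1 _ _ hwlt
    rcases W2 (e a) (e a') hweq with h | ⟨ha, hb⟩
    · exact absurd (e.injective h) (ne_of_lt hlt)
    -- both e a, e a' ∈ {i, j}, and they are distinct
    have hne' : e a ≠ e a' := fun h => (ne_of_lt hlt) (e.injective h)
    have key : e a = i₀ ∧ e a' = j₀ := by
      have hia : a = e.symm (e a) := (e.symm_apply_apply a).symm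
      have hia' : a' = e.symm (e a') := (e.symm_apply_apply a').symm
      rcases ha with ha | ha <;> rcases hb with hb | hb
      · exact absurd (ha.trans hb.symm) hne'
      · -- e a = i, e a' = j
        rcases hor with ⟨hi₀, hj₀⟩ | ⟨hi₀, hj₀⟩
        · exact ⟨ha.trans hi₀.symm, hb.trans hj₀.symm⟩
        · exfalso
          have : e.symm j < e.symm i := by rwa [hi₀, hj₀] at hslot
          rw [← ha, ← hb, ← hia, ← hia'] at this
          exact absurd hlt (not_lt.mpr this.le)
      · -- e a = j, e a' = i
        rcases hor with ⟨hi₀, hj₀⟩ | ⟨hi₀, hj₀⟩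
        · exfalso
          have : e.symm i < e.symm j := by rwa [hi₀, hj₀] at hslot
          rw [← ha, ← hb, ← hia, ← hia'] at this
          exact absurd hlt (not_lt.mpr this.le)
        · exact ⟨ha.trans hi₀.symm, hb.trans hj₀.symm⟩
      · exact absurd (ha.trans hb.symm) hne'
    show y (e a) ≤ y (e a')
    rw [key.1, key.2]
    exact H2
  -- choose monotone variants
  have hxchoice : ∃ xv : Fin n → ℝ, (xv = x ∨ xv = x ∘ Equiv.swap i₀ j₀) ∧ Monotone (xv ∘ e) := by
    rcases le_total (x i₀) (x j₀) with h | h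
    · exact ⟨x, Or.inl rfl, MONO x H1x h⟩
    · refine ⟨x ∘ Equiv.swap i₀ j₀, Or.inr rfl, MONO _ ?_ ?_⟩
      · intro p q hpq
        have hpq' : w (Equiv.swap i₀ j₀ p) < w (Equiv.swap i₀ j₀ q) := by
          rw [wswap, wswap]; exact hpq
        exact H1x _ _ hpq'
      · show x (Equiv.swap i₀ j₀ i₀) ≤ x (Equiv.swap i₀ j₀ j₀)
        rw [Equiv.swap_apply_left, Equiv.swap_apply_right]
        exact h
  have hbchoice : ∃ bv : Fin n → ℝ, (bv = b ∨ bv = b ∘ Equiv.swap i₀ j₀) ∧ Monotone (bv ∘ e) := by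
    rcases le_total (b i₀) (b j₀) with h | h
    · exact ⟨b, Or.inl rfl, MONO b (fun p q hpq => W3 p q hpq) h⟩
    · refine ⟨b ∘ Equiv.swap i₀ j₀, Or.inr rfl, MONO _ ?_ ?_⟩
      · intro p q hpq
        have hpq' : w (Equiv.swap i₀ j₀ p) < w (Equiv.swap i₀ j₀ q) := by
          rw [wswap, wswap]; exact hpq
        exact W3 _ _ hpq'
      · show b (Equiv.swap i₀ j₀ i₀) ≤ b (Equiv.swap i₀ j₀ j₀)
        rw [Equiv.swap_apply_left, Equiv.swap_apply_right]
        exact h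
  obtain ⟨xv, hxv, hxm⟩ := hxchoice
  obtain ⟨bv, hbv, hbm⟩ := hbchoice
  -- both xv ∘ e and bv ∘ e are monotone rearrangements of b
  have hxveq : xv ∘ e = bv ∘ e := by
    have hx1 : ∃ ρ : Equiv.Perm (Fin n), xv ∘ e = b ∘ ρ := by
      rcases hxv with rfl | rfl
      · exact ⟨e.trans π, by funext a; simp [hx, Equiv.trans_apply]⟩
      · exact ⟨e.trans ((Equiv.swap i₀ j₀).trans π), by
          funext a; simp [hx, Equiv.trans_apply]⟩
    have hb1 : ∃ ρ : Equiv.Perm (Fin n), bv ∘ e = b ∘ ρ := by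
      rcases hbv with rfl | rfl
      · exact ⟨e, rfl⟩
      · exact ⟨e.trans (Equiv.swap i₀ j₀), by funext a; simp [Equiv.trans_apply]⟩
    obtain ⟨ρ₁, h1⟩ := hx1
    obtain ⟨ρ₂, h2⟩ := hb1
    rw [h1, h2]
    exact sorted_unique (h1 ▸ hxm) (h2 ▸ hbm)
  have hxveq' : xv = bv := comp_perm_cancel e hxveq
  -- case bash
  have swapinv : ∀ y : Fin n → ℝ, (y ∘ Equiv.swap i₀ j₀) ∘ Equiv.swap i₀ j₀ = y := by
    intro y; funext k; simp [Equiv.swap_apply_self]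
  rcases hxv with h1 | h1 <;> rcases hbv with h2 | h2
  · rw [h1, h2] at hxveq'
    exact Or.inl hxveq'
  · rw [h1, h2] at hxveq'
    right
    rw [← hswap₀]
    exact hxveq'
  · rw [h1, h2] at hxveq'
    right
    rw [← hswap₀, ← hxveq']
    exact (swapinv x).symm
  · rw [h1, h2] at hxveq'
    left
    rw [← swapinv x, hxveq', swapinv]

lemma exposed_segment (b : Fin n → ℝ) {i j : Fin n} (hij : b j < b i)
    (hadj : ∀ k, ¬(b j < b k ∧ b k < b i)) :
    IsExposed ℝ (convexHull ℝ {x : Fin n → ℝ | ∃ π : Equiv.Perm (Fin n), x = b ∘ π})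
      (segment ℝ b (b ∘ Equiv.swap i j)) := by
  have hne : i ≠ j := fun h => absurd (h ▸ hij) (lt_irrefl _)
  obtain ⟨w, wij, hle, heqc⟩ := maxchar hij hadj
  intro _hne
  refine ⟨lfun w, ?_⟩
  set S := {x : Fin n → ℝ | ∃ π : Equiv.Perm (Fin n), x = b ∘ π} with hS
  have hbS : b ∈ S := ⟨Equiv.refl _, by funext k; simp⟩
  have hcS : b ∘ Equiv.swap i j ∈ S := ⟨Equiv.swap i j, rfl⟩
  have lval : ∀ x : Fin n → ℝ, lfun w x = ∑ k, w k * x k := by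
    intro x
    rw [lfun_apply]
    exact Finset.sum_congr rfl fun k _ => mul_comm _ _
  have hmaxS : ∀ x ∈ S, lfun w x ≤ lfun w b := by
    rintro x ⟨π, rfl⟩
    rw [lval, lval]
    exact hle π
  have hlc : lfun w (b ∘ Equiv.swap i j) = lfun w b := by
    rw [lfun_apply, lfun_apply]
    have := sum_mul_swap b w hne
    rw [show (∑ k, (b ∘ Equiv.swap i j) k * w k) = ∑ k, b (Equiv.swap i j k) * w k from rfl,
      this, wij]
    ring
  have hmaxP : ∀ y ∈ convexHull ℝ S, lfun w y ≤ lfun w b :=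
    convexHull_le_of_le (lfun w) (lfun w b) hmaxS
  ext x
  constructor
  · intro hx
    have hxP : x ∈ convexHull ℝ S :=
      (convex_convexHull ℝ S).segment_subset
        (subset_convexHull ℝ S hbS) (subset_convexHull ℝ S hcS) hx
    refine ⟨hxP, ?_⟩
    obtain ⟨a, c, ha, hc, hac, rfl⟩ := hx
    intro y hy
    have : lfun w (a • b + c • (b ∘ Equiv.swap i j)) = lfun w b := by
      rw [map_add, map_smul, map_smul, hlc, smul_eq_mul, smul_eq_mul, ← add_mul, hac, one_mul]
    rw [this]
    exact hmaxP y hy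
  · rintro ⟨hxP, hxmax⟩
    have hxval : lfun w x = lfun w b :=
      le_antisymm (hmaxP x hxP) (hxmax b (subset_convexHull ℝ S hbS))
    have hxarg : x ∈ convexHull ℝ {z | z ∈ S ∧ lfun w z = lfun w b} :=
      mem_convexHull_argmax (lfun w) (lfun w b) hmaxS hxP hxval
    have hsub : {z | z ∈ S ∧ lfun w z = lfun w b} ⊆ {b, b ∘ Equiv.swap i j} := by
      rintro z ⟨⟨π, rfl⟩, hz⟩
      rw [lval, lval] at hz
      exact heqc π hz
    have := convexHull_mono hsub hxarg
    rwa [convexHull_pair] at this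

lemma forward (lam : Fin n → ℝ) (F : Set (Fin n → ℝ))
    (hFne : F.Nonempty)
    (hexp : IsExposed ℝ
      (convexHull ℝ {x : Fin n → ℝ | ∃ σ : Equiv.Perm (Fin n), x = lam ∘ σ}) F)
    (hrank : Module.finrank ℝ ↥(vectorSpan ℝ F) = 1) :
    ∃ (σ : Equiv.Perm (Fin n)) (i j : Fin n),
        (lam ∘ σ) i ≠ (lam ∘ σ) j ∧
        (∀ k : Fin n,
          ¬((lam ∘ σ) i < (lam ∘ σ) k ∧ (lam ∘ σ) k < (lam ∘ σ) j) ∧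
          ¬((lam ∘ σ) j < (lam ∘ σ) k ∧ (lam ∘ σ) k < (lam ∘ σ) i)) ∧
        F = segment ℝ (lam ∘ σ) ((lam ∘ σ) ∘ (Equiv.swap i j)) := by
  classical
  set S := {x : Fin n → ℝ | ∃ σ : Equiv.Perm (Fin n), x = lam ∘ σ} with hSdef
  obtain ⟨l, hF⟩ := hexp hFne
  obtain ⟨π₀, -, hπ₀⟩ := Finset.exists_max_image (Finset.univ : Finset (Equiv.Perm (Fin n)))
    (fun π => l (lam ∘ π)) ⟨1, Finset.mem_univ 1⟩
  set p : Fin n → ℝ := lam ∘ π₀ with hpdef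
  set m : ℝ := l p with hmdef
  have hmaxS : ∀ x ∈ S, l x ≤ m := by
    rintro x ⟨σ, rfl⟩
    exact hπ₀ σ (Finset.mem_univ σ)
  have hmaxP : ∀ y ∈ convexHull ℝ S, l y ≤ m := convexHull_le_of_le l m hmaxS
  have hpS : p ∈ S := ⟨π₀, rfl⟩
  have hpP : p ∈ convexHull ℝ S := subset_convexHull ℝ S hpS
  set M := {x | x ∈ S ∧ l x = m} with hMdef
  have hpM : p ∈ M := ⟨hpS, rfl⟩
  have hMF : M ⊆ F := by
    intro x hx
    rw [hF]
    exact ⟨subset_convexHull ℝ S hx.1, fun y hy => (hmaxP y hy).trans hx.2.ge⟩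
  have hFM : F = convexHull ℝ M := by
    apply Set.Subset.antisymm
    · intro x hx
      rw [hF] at hx
      have hxval : l x = m := le_antisymm (hmaxP x hx.1) (hx.2 p hpP)
      exact mem_convexHull_argmax l m hmaxS hx.1 hxval
    · intro x hx
      have hxP : x ∈ convexHull ℝ S := convexHull_mono (fun z hz => hz.1) hx
      have hxval : l x = m := by
        have h := convexHull_min (fun z (hz : z ∈ M) => hz.2)
          (convex_hyperplane ⟨fun a b => map_add l a b, fun c a => map_smul l c a⟩ m)
        exact h hx
      rw [hF]
      exact ⟨hxP, fun y hy => (hmaxP y hy).trans hxval.ge⟩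
  have hcolM : Collinear ℝ M := by
    have h1 : vectorSpan ℝ M ≤ vectorSpan ℝ F := vectorSpan_mono ℝ hMF
    have h2 : Module.finrank ℝ ↥(vectorSpan ℝ M) ≤ 1 := by
      rw [← hrank]
      exact Submodule.finrank_mono h1
    exact collinear_iff_finrank_le_one.mpr h2
  have hM2 : ∀ x ∈ M, ∀ y ∈ M, ∀ z ∈ M, x = y ∨ x = z ∨ y = z := by
    intro x hx y hy z hz
    by_contra hc
    push_neg at hc
    have hsub : ({x, y, z} : Set (Fin n → ℝ)) ⊆ M := by
      intro a ha
      simp only [Set.mem_insert_iff, Set.mem_singleton_iff] at ha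
      rcases ha with rfl | rfl | rfl
      · exact hx
      · exact hy
      · exact hz
    exact not_three_collinear hx.1 hy.1 hz.1 (hcolM.subset hsub) hc.1 hc.2.1 hc.2.2
  have hq : ∃ q ∈ M, q ≠ p := by
    by_contra hc
    push_neg at hc
    have hFsub : F ⊆ {p} := by
      rw [hFM]
      calc convexHull ℝ M ⊆ convexHull ℝ {p} := convexHull_mono (fun x hx => hc x hx)
        _ = {p} := convexHull_singleton p
    have hFeq : F = {p} := hFne.subset_singleton_iff.mp hFsub
    rw [hFeq, vectorSpan_singleton, finrank_bot] at hrank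
    exact absurd hrank zero_ne_one
  obtain ⟨q, hqM, hqp⟩ := hq
  have hMpq : ∀ x ∈ M, x = p ∨ x = q := by
    intro x hx
    rcases hM2 x hx p hpM q hqM with h | h | h
    · exact Or.inl h
    · exact Or.inr h
    · exact absurd h.symm hqp
  have hMeq : M = {p, q} := by
    ext x
    constructor
    · intro hx
      rcases hMpq x hx with rfl | rfl
      · exact Set.mem_insert _ _
      · exact Set.mem_insert_of_mem _ rfl
    · intro hx
      rcases hx with rfl | hx
      · exact hpM
      · rw [Set.mem_singleton_iff] at hx; subst hx; exact hqM
  set w : Fin n → ℝ := fun k => l (Pi.single k 1) with hwdef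
  have hlw : ∀ x : Fin n → ℝ, l x = ∑ k, x k * w k := fun x => lrep l x
  have hswapS : ∀ x ∈ S, ∀ a c : Fin n, x ∘ (Equiv.swap a c) ∈ S := by
    rintro x ⟨σ, rfl⟩ a c
    exact ⟨(Equiv.swap a c).trans σ, by funext k; simp [Equiv.trans_apply]⟩
  have hlswap : ∀ (x : Fin n → ℝ) (a c : Fin n), a ≠ c →
      l (x ∘ Equiv.swap a c) = l x - (x a - x c) * (w a - w c) := by
    intro x a c hac
    rw [hlw, hlw]
    exact sum_mul_swap x w hac
  have comono : ∀ x ∈ M, ∀ a c : Fin n, w a < w c → x a ≤ x c := by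
    intro x hx a c hw
    by_contra hcon
    push_neg at hcon
    have hac : a ≠ c := fun h => absurd (h ▸ hw) (lt_irrefl _)
    have h1 : l (x ∘ Equiv.swap a c) ≤ m := hmaxS _ (hswapS x hx.1 a c)
    rw [hlswap x a c hac, hx.2] at h1
    nlinarith [h1]
  have neutral : ∀ x ∈ M, ∀ a c : Fin n, a ≠ c → w a = w c → x ∘ Equiv.swap a c ∈ M := by
    intro x hx a c hac hw
    refine ⟨hswapS x hx.1 a c, ?_⟩
    rw [hlswap x a c hac, hw, hx.2]
    ring
  obtain ⟨τq, hq_eq⟩ := hqM.1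
  set keyp : Fin n → ℝ ×ₗ ℝ := fun k => toLex (w k, p k) with hkeyp
  set keyq : Fin n → ℝ ×ₗ ℝ := fun k => toLex (w k, q k) with hkeyq
  set e := Tuple.sort keyp with he
  set e' := Tuple.sort keyq with he'
  have hkp : Monotone (keyp ∘ e) := Tuple.monotone_sort keyp
  have hkq : Monotone (keyq ∘ e') := Tuple.monotone_sort keyq
  have hmp : Monotone (p ∘ e) := by
    intro a a' h
    rcases Prod.Lex.le_iff.mp (hkp h) with h1 | ⟨h1, h2⟩
    · exact comono p hpM _ _ h1
    · exact h2
  have hmq : Monotone (q ∘ e') := by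
    intro a a' h
    rcases Prod.Lex.le_iff.mp (hkq h) with h1 | ⟨h1, h2⟩
    · exact comono q hqM _ _ h1
    · exact h2
  have hmwe : Monotone (w ∘ e) := by
    intro a a' h
    rcases Prod.Lex.le_iff.mp (hkp h) with h1 | ⟨h1, h2⟩
    · exact h1.le
    · exact h1.le
  have hmwe' : Monotone (w ∘ e') := by
    intro a a' h
    rcases Prod.Lex.le_iff.mp (hkq h) with h1 | ⟨h1, h2⟩
    · exact h1.le
    · exact h1.le
  have hpe : p ∘ e = q ∘ e' := by
    have h1 : p ∘ e = lam ∘ (e.trans π₀ : Equiv.Perm (Fin n)) := by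
      funext a; simp [hpdef, Equiv.trans_apply]
    have h2 : q ∘ e' = lam ∘ (e'.trans τq : Equiv.Perm (Fin n)) := by
      funext a; rw [hq_eq]; simp [Equiv.trans_apply]
    rw [h1, h2]
    exact sorted_unique (h1 ▸ hmp) (h2 ▸ hmq)
  have hwe : w ∘ e = w ∘ e' := sorted_unique hmwe hmwe'
  obtain ⟨i, hi⟩ := Function.ne_iff.mp hqp
  set j := e (e'.symm i) with hj
  have hpj : p j = q i := by
    have h := congrFun hpe (e'.symm i)
    simpa [hj] using h
  have hwj : w j = w i := by
    have h := congrFun hwe (e'.symm i)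
    simpa [hj] using h
  have hpij : p i ≠ p j := by
    intro h
    exact hi (by rw [← hpj, ← h])
  have hij : i ≠ j := fun h => hpij (by rw [← h])
  have hq' : p ∘ Equiv.swap i j ∈ M := neutral p hpM i j hij hwj.symm
  have hq'ne : p ∘ Equiv.swap i j ≠ p := by
    intro h
    have h2 := congrFun h i
    rw [Function.comp_apply, Equiv.swap_apply_left] at h2
    exact hpij h2.symm
  have hq'q : p ∘ Equiv.swap i j = q := (hMpq _ hq').resolve_left hq'ne
  refine ⟨π₀, i, j, hpij, ?_, ?_⟩
  · have hbet : ∀ k, ((p i < p k ∧ p k < p j) ∨ (p j < p k ∧ p k < p i)) → False := by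
      intro k hk
      have hki : k ≠ i := by
        rintro rfl
        rcases hk with ⟨h1, _⟩ | ⟨_, h2⟩
        · exact lt_irrefl _ h1
        · exact lt_irrefl _ h2
      have hkj : k ≠ j := by
        rintro rfl
        rcases hk with ⟨_, h2⟩ | ⟨h1, _⟩
        · exact lt_irrefl _ h2
        · exact lt_irrefl _ h1
      have hpkj : p k ≠ p j := by
        rcases hk with ⟨_, h2⟩ | ⟨h1, _⟩
        · exact h2.ne
        · exact h1.ne'
      rcases lt_trichotomy (w k) (w i) with hw | hw | hw
      · have h1 : p k ≤ p i := comono p hpM k i hw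
        have h2 : p k ≤ p j := comono p hpM k j (by rw [hwj]; exact hw)
        rcases hk with ⟨ha, _⟩ | ⟨ha, _⟩
        · exact absurd h1 (not_le.mpr ha)
        · exact absurd h2 (not_le.mpr ha)
      · have hq'' : p ∘ Equiv.swap k j ∈ M :=
          neutral p hpM k j hkj (by rw [hw, ← hwj])
        have hq''ne : p ∘ Equiv.swap k j ≠ p := by
          intro h
          have h2 := congrFun h k
          rw [Function.comp_apply, Equiv.swap_apply_left] at h2
          exact hpkj h2.symm
        have heq2 := (hMpq _ hq'').resolve_left hq''ne
        rw [← hq'q] at heq2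
        have h2 := congrFun heq2 i
        simp only [Function.comp_apply] at h2
        rw [Equiv.swap_apply_of_ne_of_ne (Ne.symm hki) hij, Equiv.swap_apply_left] at h2
        exact hpij h2
      · have h1 : p i ≤ p k := comono p hpM i k hw
        have h2 : p j ≤ p k := comono p hpM j k (by rw [hwj]; exact hw)
        rcases hk with ⟨_, hb⟩ | ⟨_, hb⟩
        · exact absurd h2 (not_le.mpr hb)
        · exact absurd h1 (not_le.mpr hb)
    intro k
    exact ⟨fun h => hbet k (Or.inl h), fun h => hbet k (Or.inr h)⟩
  · rw [hFM, hMeq, ← hq'q, convexHull_pair]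

end Stmt0Aux

/-- The edges of the population polytope of `lam` are exactly the closed
segments joining a coordinate permutation `b` of `lam` to an adjacent-valued swap of `b`. -/
theorem stmt_0 (n : ℕ) (hn : 1 ≤ n) (lam : Fin n → ℝ)
    (P : Set (Fin n → ℝ))
    (hP : P = convexHull ℝ {x : Fin n → ℝ | ∃ σ : Equiv.Perm (Fin n), x = lam ∘ σ})
    (F : Set (Fin n → ℝ)) :
    (F.Nonempty ∧ IsExposed ℝ P F ∧ Module.finrank ℝ ↥(vectorSpan ℝ F) = 1) ↔
      ∃ (σ : Equiv.Perm (Fin n)) (i j : Fin n),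
        (lam ∘ σ) i ≠ (lam ∘ σ) j ∧
        (∀ k : Fin n,
          ¬((lam ∘ σ) i < (lam ∘ σ) k ∧ (lam ∘ σ) k < (lam ∘ σ) j) ∧
          ¬((lam ∘ σ) j < (lam ∘ σ) k ∧ (lam ∘ σ) k < (lam ∘ σ) i)) ∧
        F = segment ℝ (lam ∘ σ) ((lam ∘ σ) ∘ (Equiv.swap i j)) := by
  constructor
  · rintro ⟨hne, hexp, hrank⟩
    rw [hP] at hexp
    exact Stmt0Aux.forward lam F hne hexp hrank
  · rintro ⟨σ, i, j, hne, hadj, hFeq⟩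
    set b : Fin n → ℝ := lam ∘ σ with hb
    have hswapne : b ≠ b ∘ Equiv.swap i j := by
      intro h
      have h2 := congrFun h i
      rw [Function.comp_apply, Equiv.swap_apply_left] at h2
      exact hne h2
    have hPb : P = convexHull ℝ {x | ∃ π : Equiv.Perm (Fin n), x = b ∘ π} := by
      rw [hP, Stmt0Aux.set_perm_eq lam σ]
    refine ⟨?_, ?_, ?_⟩
    · rw [hFeq]
      exact ⟨b, left_mem_segment ℝ _ _⟩
    · rw [hFeq, hPb]
      rcases hne.lt_or_gt with h | h
      · have hadj' : ∀ k, ¬(b i < b k ∧ b k < b j) := fun k => (hadj k).1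
        have hE := Stmt0Aux.exposed_segment b (i := j) (j := i) h hadj'
        rwa [Equiv.swap_comm] at hE
      · have hadj' : ∀ k, ¬(b j < b k ∧ b k < b i) := fun k => (hadj k).2
        exact Stmt0Aux.exposed_segment b h hadj'
    · rw [hFeq]
      exact Stmt0Aux.finrank_vectorSpan_segment hswapne
end

section
/- Let S ⊆ (Fin n → ℝ) be finite and P = convexHull ℝ S. If F is an edge of P, then there exist two distinct extreme points V and W of P such that F is the closed segment [V, W]; moreover this pair is unique: if V', W' are distinct extreme points of P with F = [V', W'], then {V', W'} = {V, W}. -/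
open Set

lemma aux_image_extreme {E : Type*} [AddCommGroup E] [Module ℝ E]
    (f : ℝ →ᵃ[ℝ] E) (hf : Function.Injective f) {s : Set ℝ} {x : ℝ}
    (hx : x ∈ s.extremePoints ℝ) : f x ∈ (f '' s).extremePoints ℝ := by
  rw [mem_extremePoints_iff_forall_segment] at hx ⊢
  refine ⟨⟨x, hx.1, rfl⟩, ?_⟩
  rintro _ ⟨y, hy, rfl⟩ _ ⟨z, hz, rfl⟩ hseg
  rw [← image_segment] at hseg
  obtain ⟨t, ht, hft⟩ := hseg
  rcases hx.2 y hy z hz ((hf hft) ▸ ht) with h | h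
  · exact Or.inl (congrArg f h)
  · exact Or.inr (congrArg f h)

lemma left_mem_extremePoints_Icc {a b : ℝ} (hab : a ≤ b) :
    a ∈ (Set.Icc a b).extremePoints ℝ := by
  rw [mem_extremePoints_iff_forall_segment]
  refine ⟨⟨le_refl a, hab⟩, fun y hy z hz hseg => ?_⟩
  rw [segment_eq_Icc' ] at hseg
  have h1 : min y z = a := le_antisymm hseg.1 (le_min hy.1 hz.1)
  rcases min_eq_iff.1 h1 with h | h
  · exact Or.inl h.1
  · exact Or.inr h.1

lemma right_mem_extremePoints_Icc {a b : ℝ} (hab : a ≤ b) :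
    b ∈ (Set.Icc a b).extremePoints ℝ := by
  rw [mem_extremePoints_iff_forall_segment]
  refine ⟨⟨hab, le_refl b⟩, fun y hy z hz hseg => ?_⟩
  rw [segment_eq_Icc' ] at hseg
  have h1 : max y z = b := le_antisymm (max_le hy.2 hz.2) hseg.2
  rcases max_eq_iff.1 h1 with h | h
  · exact Or.inl h.1
  · exact Or.inr h.1

/-- Every edge of a polytope is the closed segment joining a unique pair of
distinct extreme points. -/
theorem stmt_1 (n : ℕ) (S : Set (Fin n → ℝ)) (hS : S.Finite)
    (P : Set (Fin n → ℝ)) (hP : P = convexHull ℝ S)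
    (F : Set (Fin n → ℝ)) (hne : F.Nonempty)
    (hexp : IsExposed ℝ P F) (hdim : Module.finrank ℝ ↥(vectorSpan ℝ F) = 1) :
    ∃ V W : Fin n → ℝ, V ∈ Set.extremePoints ℝ P ∧ W ∈ Set.extremePoints ℝ P ∧
      V ≠ W ∧ F = segment ℝ V W ∧
      ∀ V' W' : Fin n → ℝ, V' ∈ Set.extremePoints ℝ P → W' ∈ Set.extremePoints ℝ P →
        V' ≠ W' → F = segment ℝ V' W' → ({V', W'} : Set (Fin n → ℝ)) = {V, W} := by
  have hPconv : Convex ℝ P := hP ▸ convex_convexHull ℝ S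
  have hPcomp : IsCompact P := hP ▸ hS.isCompact_convexHull ℝ
  have hFP : F ⊆ P := hexp.subset
  have hFclosed : IsClosed F := hexp.isClosed hPcomp.isClosed
  have hFcomp : IsCompact F := hPcomp.of_isClosed_subset hFclosed hFP
  have hFconv : Convex ℝ F := hexp.convex hPconv
  obtain ⟨x, hxF⟩ := hne
  obtain ⟨v, hv0, hv⟩ := finrank_eq_one_iff'.1 hdim
  set v₀ : Fin n → ℝ := (v : Fin n → ℝ) with hv₀def
  have hv₀ : v₀ ≠ 0 := fun h => hv0 (Subtype.ext h)
  set f : ℝ →ᵃ[ℝ] (Fin n → ℝ) := AffineMap.lineMap x (x + v₀) with hfdef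
  have hfapp : ∀ t, f t = x + t • v₀ := by
    intro t
    simp [hfdef, AffineMap.lineMap_apply]
    module
  have hfinj : Function.Injective f := by
    apply AffineMap.lineMap_injective
    intro h
    exact hv₀ (by simpa using h.symm)
  have hrep : ∀ y ∈ F, ∃ t, f t = y := by
    intro y hy
    have hmem : y - x ∈ vectorSpan ℝ F := vsub_mem_vectorSpan ℝ hy hxF
    obtain ⟨c, hc⟩ := hv ⟨y - x, hmem⟩
    refine ⟨c, ?_⟩
    have hc' : c • v₀ = y - x := congrArg Subtype.val hc
    rw [hfapp, hc']
    abel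
  set T : Set ℝ := f ⁻¹' F with hTdef
  have hFT : F = f '' T := by
    ext y; constructor
    · intro hy
      obtain ⟨t, ht⟩ := hrep y hy
      exact ⟨t, by simp only [hTdef, mem_preimage, ht]; exact hy, ht⟩
    · rintro ⟨t, ht, rfl⟩; exact ht
  have hTconv : Convex ℝ T := hFconv.affine_preimage f
  obtain ⟨i, hi⟩ : ∃ i, v₀ i ≠ 0 := by
    by_contra h; push_neg at h; exact hv₀ (funext h)
  have hgf : ∀ t, (f t i - x i) / v₀ i = t := by
    intro t
    rw [hfapp]
    simp only [Pi.add_apply, Pi.smul_apply, smul_eq_mul]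
    field_simp
    ring
  have hTg : T = (fun y => (y i - x i) / v₀ i) '' F := by
    ext t; constructor
    · intro ht
      exact ⟨f t, ht, hgf t⟩
    · rintro ⟨y, hy, rfl⟩
      obtain ⟨t', rfl⟩ := hrep y hy
      show (f t' i - x i) / v₀ i ∈ T
      rw [hgf t']
      exact hy
  have hgc : Continuous (fun y : Fin n → ℝ => (y i - x i) / v₀ i) := by fun_prop
  have hTcomp : IsCompact T := hTg ▸ hFcomp.image hgc
  have hTne : T.Nonempty := ⟨0, by
    simp only [hTdef, mem_preimage, hfapp, zero_smul, add_zero]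
    exact hxF⟩
  have hIcc : T = Icc (sInf T) (sSup T) :=
    eq_Icc_of_connected_compact ⟨hTne, hTconv.isPreconnected⟩ hTcomp
  set a := sInf T with hadef
  set b := sSup T with hbdef
  have hab : a ≤ b := by
    rw [hIcc] at hTne
    exact nonempty_Icc.1 hTne
  have hne' : a ≠ b := by
    intro h
    have hFsing : F = {f a} := by
      rw [hFT, hIcc, ← h, Icc_self, image_singleton]
    rw [hFsing, vectorSpan_singleton] at hdim
    simp at hdim
  have hab' : a < b := lt_of_le_of_ne hab hne'
  have key : F = segment ℝ (f a) (f b) := by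
    rw [hFT, hIcc, ← segment_eq_Icc hab, image_segment]
  have haF : f a ∈ F := by rw [key]; exact left_mem_segment ℝ (f a) (f b)
  have hbF : f b ∈ F := by rw [key]; exact right_mem_segment ℝ (f a) (f b)
  have hVext : f a ∈ F.extremePoints ℝ := by
    rw [hFT, hIcc]
    exact aux_image_extreme f hfinj (left_mem_extremePoints_Icc hab)
  have hWext : f b ∈ F.extremePoints ℝ := by
    rw [hFT, hIcc]
    exact aux_image_extreme f hfinj (right_mem_extremePoints_Icc hab)
  have hIsExt : IsExtreme ℝ P F := hexp.isExtreme
  have endpoint_cases : ∀ V' : Fin n → ℝ, V' ∈ Set.extremePoints ℝ P → V' ∈ F →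
      V' = f a ∨ V' = f b := by
    intro V' hV' hV'F
    obtain ⟨t, htT, hft⟩ := (hFT ▸ hV'F : V' ∈ f '' T)
    rw [hIcc] at htT
    rcases eq_or_lt_of_le htT.1 with h1 | h1
    · exact Or.inl (h1 ▸ hft.symm ▸ rfl)
    rcases eq_or_lt_of_le htT.2 with h2 | h2
    · exact Or.inr (h2 ▸ hft.symm ▸ rfl)
    exfalso
    have hopen : V' ∈ openSegment ℝ (f a) (f b) := by
      rw [← image_openSegment, openSegment_eq_Ioo hab']
      exact ⟨t, ⟨h1, h2⟩, hft⟩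
    rw [mem_extremePoints] at hV'
    obtain ⟨heq1, heq2⟩ := hV'.2 (f a) (hFP haF) (f b) (hFP hbF) hopen
    exact hfinj.ne hne' (heq1.trans heq2.symm)
  refine ⟨f a, f b, hIsExt.extremePoints_subset_extremePoints hVext,
    hIsExt.extremePoints_subset_extremePoints hWext, hfinj.ne hne', key, ?_⟩
  intro V' W' hV' hW' hVW' hFseg
  have hV'F : V' ∈ F := hFseg ▸ left_mem_segment ℝ V' W'
  have hW'F : W' ∈ F := hFseg ▸ right_mem_segment ℝ V' W'
  rcases endpoint_cases V' hV' hV'F with rfl | rfl <;>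
    rcases endpoint_cases W' hW' hW'F with rfl | rfl
  · exact absurd rfl hVW'
  · rfl
  · exact Set.pair_comm _ _
  · exact absurd rfl hVW'
end

section
/- Let S ⊆ (Fin n → ℝ) be finite, P = convexHull ℝ S, V an extreme point of P, and let Z₁, …, Z_k be the edge-neighbors of V. Then for every p ∈ P there exist nonnegative reals r₁, …, r_k such that p − V = ∑_{i=1}^k r_i • (Z_i − V). -/
set_option maxHeartbeats 1000000

open Set

/-- `Z` is an edge-neighbor of `V` in `P`: a vertex of `P` distinct from `V` such that the
closed segment `[V, Z]` is an edge (a nonempty exposed face of affine dimension 1) of `P`. -/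
def EdgeNeighbor {n : ℕ} (P : Set (Fin n → ℝ)) (V Z : Fin n → ℝ) : Prop :=
  Z ∈ Set.extremePoints ℝ P ∧ Z ≠ V ∧
    (segment ℝ V Z).Nonempty ∧ IsExposed ℝ P (segment ℝ V Z) ∧
    Module.finrank ℝ ↥(vectorSpan ℝ (segment ℝ V Z)) = 1

lemma rep_sub {n : ℕ} {S : Set (Fin n → ℝ)} (hS : S.Finite) (V : Fin n → ℝ) {y : Fin n → ℝ}
    (hy : y ∈ convexHull ℝ S) :
    ∃ w : (Fin n → ℝ) → ℝ, (∀ s ∈ hS.toFinset.erase V, 0 ≤ w s) ∧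
      y - V = ∑ s ∈ hS.toFinset.erase V, w s • (s - V) := by
  rw [← hS.coe_toFinset, Finset.convexHull_eq] at hy
  obtain ⟨w, hw0, hw1, hy⟩ := hy
  refine ⟨w, fun s hs => hw0 s (Finset.mem_of_mem_erase hs), ?_⟩
  rw [Finset.centerMass_eq_of_sum_1 _ _ hw1] at hy
  have h1 : y - V = ∑ s ∈ hS.toFinset, w s • (s - V) := by
    simp only [smul_sub]
    rw [Finset.sum_sub_distrib, ← Finset.sum_smul, hw1, one_smul]
    simp only [id] at hy
    rw [hy]
  rw [h1]
  symm
  apply Finset.sum_subset (Finset.erase_subset _ _)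
  intro s hs hs'
  have : s = V := by
    by_contra h
    exact hs' (Finset.mem_erase.2 ⟨h, hs⟩)
  simp [this]

lemma exists_edge {n : ℕ} {S : Set (Fin n → ℝ)} (hS : S.Finite) {V : Fin n → ℝ}
    (hVP : V ∈ convexHull ℝ S)
    (m : (Fin n → ℝ) →L[ℝ] ℝ) (hm : ∀ s ∈ S, s ≠ V → 0 < m (s - V))
    {e : Fin n → ℝ}
    (he : e ∈ Set.extremePoints ℝ
      (convexHull ℝ ((fun s => (m (s - V))⁻¹ • (s - V)) '' (S \ {V})))) :
    ∃ (Z : Fin n → ℝ) (t : ℝ), 0 < t ∧ Z - V = t • e ∧ EdgeNeighbor (convexHull ℝ S) V Z := by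
  set T : Set (Fin n → ℝ) := (fun s => (m (s - V))⁻¹ • (s - V)) '' (S \ {V}) with hT
  have hTfin : T.Finite := (hS.subset diff_subset).image _
  have heT : e ∈ T := extremePoints_convexHull_subset he
  obtain ⟨s₀, hs₀, he0⟩ := heT
  have hm0 : 0 < m (s₀ - V) := hm s₀ hs₀.1 hs₀.2
  have hmT : ∀ t ∈ T, m t = 1 := by
    rintro _ ⟨s, hs, rfl⟩
    have h := hm s hs.1 hs.2
    show m ((m (s - V))⁻¹ • (s - V)) = 1
    rw [map_smul, smul_eq_mul, inv_mul_cancel₀ h.ne']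
  have he0' : (m (s₀ - V))⁻¹ • (s₀ - V) = e := he0
  have hme : m e = 1 := hmT e ⟨s₀, hs₀, he0⟩
  have he_ne : e ≠ 0 := by intro h; rw [h] at hme; simp at hme
  -- e is not in the hull of the other generators
  have he_not : e ∉ convexHull ℝ (T \ {e}) := by
    have h2 := ((convex_convexHull ℝ T).mem_extremePoints_iff_mem_diff_convexHull_diff).mp he
    intro hc
    exact h2.2 (convexHull_mono (diff_subset_diff (subset_convexHull ℝ T) subset_rfl) hc)
  obtain ⟨f, u, hfu, huf⟩ := geometric_hahn_banach_closed_point (convex_convexHull ℝ _)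
    ((hTfin.subset diff_subset).isClosed_convexHull (𝕜 := ℝ)) he_not
  set g : (Fin n → ℝ) →L[ℝ] ℝ := f - (f e) • m with hg
  have hge : g e = 0 := by
    simp [hg, ContinuousLinearMap.sub_apply, ContinuousLinearMap.smul_apply, hme]
  have hgT : ∀ t ∈ T, t ≠ e → g t < 0 := by
    intro t ht hne
    have h1 : f t < u := hfu t (subset_convexHull ℝ _ ⟨ht, hne⟩)
    have h2 := hmT t ht
    simp only [hg, ContinuousLinearMap.sub_apply, ContinuousLinearMap.smul_apply, h2,
      smul_eq_mul, mul_one]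
    linarith
  have hgS : ∀ s ∈ S, s ≠ V → g (s - V) ≤ 0 ∧ (g (s - V) = 0 → s - V = (m (s - V)) • e) := by
    intro s hs hsV
    have hms : 0 < m (s - V) := hm s hs hsV
    have hts : (m (s - V))⁻¹ • (s - V) ∈ T := ⟨s, ⟨hs, hsV⟩, rfl⟩
    have hsv : s - V = (m (s - V)) • ((m (s - V))⁻¹ • (s - V)) := (smul_inv_smul₀ hms.ne' _).symm
    by_cases hcase : (m (s - V))⁻¹ • (s - V) = e
    · constructor
      · rw [hsv, hcase, map_smul, hge, smul_zero]
      · intro _; rw [← hcase]; exact hsv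
    · have hlt : g ((m (s - V))⁻¹ • (s - V)) < 0 := hgT _ hts hcase
      have : g (s - V) < 0 := by
        rw [hsv, map_smul, smul_eq_mul]
        exact mul_neg_of_pos_of_neg hms hlt
      exact ⟨this.le, fun h => absurd h this.ne⟩
  have key : ∀ y ∈ convexHull ℝ S, g (y - V) ≤ 0 ∧
      (g (y - V) = 0 → ∃ c : ℝ, 0 ≤ c ∧ y - V = c • e) := by
    intro y hy
    obtain ⟨w, hw0, hyw⟩ := rep_sub hS V hy
    have hmem : ∀ s ∈ hS.toFinset.erase V, s ∈ S ∧ s ≠ V := by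
      intro s hs
      rw [Finset.mem_erase, Set.Finite.mem_toFinset] at hs
      exact ⟨hs.2, hs.1⟩
    have hterm : ∀ s ∈ hS.toFinset.erase V, g (w s • (s - V)) ≤ 0 := by
      intro s hs
      rw [map_smul, smul_eq_mul]
      exact mul_nonpos_of_nonneg_of_nonpos (hw0 s hs) (hgS s (hmem s hs).1 (hmem s hs).2).1
    have hgy : g (y - V) = ∑ s ∈ hS.toFinset.erase V, g (w s • (s - V)) := by
      rw [hyw, map_sum]
    constructor
    · rw [hgy]; exact Finset.sum_nonpos hterm
    · intro h0
      rw [hgy] at h0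
      have hz := (Finset.sum_eq_zero_iff_of_nonpos hterm).1 h0
      refine ⟨∑ s ∈ hS.toFinset.erase V, w s * m (s - V), ?_, ?_⟩
      · exact Finset.sum_nonneg fun s hs =>
          mul_nonneg (hw0 s hs) (hm s (hmem s hs).1 (hmem s hs).2).le
      · rw [hyw, Finset.sum_smul]
        apply Finset.sum_congr rfl
        intro s hs
        by_cases hws : w s = 0
        · simp [hws]
        · have hgs0 : g (s - V) = 0 := by
            have := hz s hs
            rw [map_smul, smul_eq_mul] at this
            exact (mul_eq_zero.1 this).resolve_left hws
          have hrw := (hgS s (hmem s hs).1 (hmem s hs).2).2 hgs0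
          conv_lhs => rw [hrw]
          rw [smul_smul]
  -- the set of admissible parameters along the ray
  set P := convexHull ℝ S with hPdef
  have hPc : IsCompact P := hS.isCompact_convexHull (𝕜 := ℝ)
  set A : Set ℝ := {t : ℝ | 0 ≤ t ∧ V + t • e ∈ P} with hA
  have ht₀A : m (s₀ - V) ∈ A := by
    refine ⟨hm0.le, ?_⟩
    have : (m (s₀ - V)) • e = s₀ - V := by rw [← he0]; exact smul_inv_smul₀ hm0.ne' _
    rw [this, add_sub_cancel]
    exact subset_convexHull ℝ S hs₀.1
  have hAc : IsCompact A := by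
    obtain ⟨C, hC⟩ := hPc.isBounded.exists_norm_le
    have hsub : A ⊆ Icc 0 ((C + ‖V‖) / ‖e‖) := by
      rintro t ⟨ht0, htP⟩
      refine ⟨ht0, ?_⟩
      rw [le_div_iff₀ (norm_pos_iff.2 he_ne)]
      have h1 : ‖t • e‖ = t * ‖e‖ := by rw [norm_smul, Real.norm_eq_abs, abs_of_nonneg ht0]
      have h2 : ‖t • e‖ ≤ ‖V + t • e‖ + ‖V‖ := by
        have h4 := norm_sub_le (V + t • e) V
        have h5 : V + t • e - V = t • e := by abel
        rwa [h5] at h4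
      have := hC _ htP
      calc t * ‖e‖ = ‖t • e‖ := h1.symm
        _ ≤ ‖V + t • e‖ + ‖V‖ := h2
        _ ≤ C + ‖V‖ := by linarith
    have hclosed : IsClosed A := by
      have h1 : Continuous fun t : ℝ => V + t • e :=
        continuous_const.add (continuous_id.smul continuous_const)
      have : A = ((fun t : ℝ => V + t • e) ⁻¹' P) ∩ Ici 0 := by
        ext t
        exact ⟨fun h => ⟨h.2, h.1⟩, fun h => ⟨h.2, h.1⟩⟩
      rw [this]
      exact ((hPc.isClosed.preimage h1)).inter isClosed_Ici
    exact isCompact_Icc.of_isClosed_subset hclosed hsub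
  obtain ⟨tm, htmA, htmub⟩ := hAc.exists_isGreatest ⟨_, ht₀A⟩
  have htm_pos : 0 < tm := lt_of_lt_of_le hm0 (htmub ht₀A)
  set Z := V + tm • e with hZ
  have hZP : Z ∈ P := htmA.2
  have hZsub : Z - V = tm • e := add_sub_cancel_left _ _
  have hZV : Z ≠ V := by
    intro h
    rw [hZ] at h
    have : tm • e = 0 := by
      have := congrArg (fun y => y - V) h
      simpa using this
    exact he_ne ((smul_eq_zero.1 this).resolve_left htm_pos.ne')
  have hVZ : V - Z ≠ 0 := sub_ne_zero.2 (Ne.symm hZV)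
  have hsegP : segment ℝ V Z ⊆ P := (convex_convexHull ℝ S).segment_subset hVP hZP
  have hsegset : segment ℝ V Z = {x ∈ P | ∀ y ∈ P, g y ≤ g x} := by
    ext x
    constructor
    · intro hx
      have hxP : x ∈ P := hsegP hx
      refine ⟨hxP, fun y hy => ?_⟩
      rw [segment_eq_image'] at hx
      obtain ⟨θ, hθ, rfl⟩ := hx
      have hgx : g (V + θ • (Z - V) - V) = 0 := by
        rw [add_sub_cancel_left, hZsub, smul_smul, map_smul, hge, smul_zero]
      have h1 : g (y - V) ≤ 0 := (key y hy).1
      have h2 : g (y - V) = g y - g V := map_sub g y V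
      have h3 : g (V + θ • (Z - V) - V) = g (V + θ • (Z - V)) - g V := map_sub g _ V
      linarith
    · rintro ⟨hxP, hmax⟩
      have h0 : g (x - V) = 0 := by
        have h1 : g (x - V) ≤ 0 := (key x hxP).1
        have h2 : g V ≤ g x := hmax V hVP
        have h3 : g (x - V) = g x - g V := map_sub g x V
        linarith
      obtain ⟨c, hc0, hcx⟩ := (key x hxP).2 h0
      have hxeq : x = V + c • e := by rw [← hcx]; abel
      have hcA : c ∈ A := ⟨hc0, hxeq ▸ hxP⟩
      have hct : c ≤ tm := htmub hcA
      rw [segment_eq_image']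
      refine ⟨c / tm, ⟨div_nonneg hc0 htm_pos.le, div_le_one_of_le₀ hct htm_pos.le⟩, ?_⟩
      show V + (c / tm) • (Z - V) = x
      rw [hZsub, smul_smul, div_mul_cancel₀ _ htm_pos.ne']
      exact hxeq.symm
  have hexp : IsExposed ℝ P (segment ℝ V Z) := fun _ => ⟨g, hsegset⟩
  have hZseg_ext : Z ∈ Set.extremePoints ℝ (segment ℝ V Z) := by
    refine ⟨right_mem_segment ℝ V Z, ?_⟩
    intro a ha b hb hZo
    rw [segment_eq_image'] at ha hb
    obtain ⟨α, hα, rfl⟩ := ha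
    obtain ⟨β, hβ, rfl⟩ := hb
    rw [openSegment_eq_image'] at hZo
    obtain ⟨θ, hθ, hZeq⟩ := hZo
    have hv : Z - V ≠ 0 := sub_ne_zero.2 hZV
    have h5 : V + α • (Z - V) + θ • (V + β • (Z - V) - (V + α • (Z - V))) = Z := by
      have := hZeq; simp only [] at this ⊢; exact this
    have hkey : (α + θ * (β - α)) • (Z - V) = Z - V := by
      calc (α + θ * (β - α)) • (Z - V)
          = V + α • (Z - V) + θ • (V + β • (Z - V) - (V + α • (Z - V))) - V := by module
        _ = Z - V := by rw [h5]
    have hc1 : α + θ * (β - α) = 1 := by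
      by_contra hne
      have : (α + θ * (β - α) - 1) • (Z - V) = 0 := by
        rw [sub_smul, one_smul, hkey, sub_self]
      exact hne (by
        have := (smul_eq_zero.1 this).resolve_right hv
        linarith [sub_eq_zero.1 (by linarith [this] : α + θ * (β - α) - 1 = 0)])
    have hαβ : α = 1 ∧ β = 1 := by
      obtain ⟨hα0, hα1⟩ := hα
      obtain ⟨hβ0, hβ1⟩ := hβ
      obtain ⟨hθ0, hθ1⟩ := hθ
      constructor <;> nlinarith
    show V + α • (Z - V) = Z
    rw [hαβ.1, one_smul]; abel
  have hZext : Z ∈ Set.extremePoints ℝ P :=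
    (hexp.isExtreme).extremePoints_subset_extremePoints hZseg_ext
  have hrank : Module.finrank ℝ ↥(vectorSpan ℝ (segment ℝ V Z)) = 1 := by
    have hvs : vectorSpan ℝ (segment ℝ V Z) = Submodule.span ℝ {Z - V} := by
      apply le_antisymm
      · rw [vectorSpan_def, Submodule.span_le]
        rintro v ⟨a, ha, b, hb, rfl⟩
        rw [segment_eq_image'] at ha hb
        obtain ⟨α, _, rfl⟩ := ha
        obtain ⟨β, _, rfl⟩ := hb
        rw [SetLike.mem_coe, Submodule.mem_span_singleton]
        refine ⟨α - β, ?_⟩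
        show (α - β) • (Z - V) = (V + α • (Z - V)) -ᵥ (V + β • (Z - V))
        simp only [vsub_eq_sub]
        module
      · rw [Submodule.span_singleton_le_iff_mem]
        have := vsub_mem_vectorSpan ℝ (right_mem_segment ℝ V Z) (left_mem_segment ℝ V Z)
        simpa [vsub_eq_sub] using this
    rw [hvs]
    exact finrank_span_singleton (sub_ne_zero.2 hZV)
  exact ⟨Z, tm, htm_pos, hZsub,
    hZext, hZV, ⟨V, left_mem_segment ℝ V Z⟩, hexp, hrank⟩

/-- For a vertex `V` of a polytope `P`, every `p ∈ P` has `p − V` a nonnegative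
combination of the vectors `Z − V` where `Z` ranges over the edge-neighbors of `V`. -/
theorem stmt_2 (n : ℕ) (S : Set (Fin n → ℝ)) (hS : S.Finite)
    (P : Set (Fin n → ℝ)) (hP : P = convexHull ℝ S)
    (V : Fin n → ℝ) (hV : V ∈ Set.extremePoints ℝ P)
    (p : Fin n → ℝ) (hp : p ∈ P) :
    ∃ r : (Fin n → ℝ) →₀ ℝ, (∀ Z, 0 ≤ r Z) ∧
      (∀ Z ∈ r.support, EdgeNeighbor P V Z) ∧
      p - V = r.sum (fun Z c => c • (Z - V)) := by
  classical
  by_cases hpV : p = V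
  · refine ⟨0, ?_, ?_, ?_⟩
    · intro Z; simp
    · intro Z hZ; simp at hZ
    · simp [hpV]
  · have hVP' : V ∈ Set.extremePoints ℝ (convexHull ℝ S) := hP ▸ hV
    have hVS : V ∈ S := extremePoints_convexHull_subset hVP'
    have hVP : V ∈ convexHull ℝ S := subset_convexHull ℝ S hVS
    have hVnc : V ∉ convexHull ℝ (S \ {V}) := by
      have h2 := ((convex_convexHull ℝ S).mem_extremePoints_iff_mem_diff_convexHull_diff).mp hVP'
      intro hc
      exact h2.2 (convexHull_mono (diff_subset_diff (subset_convexHull ℝ S) subset_rfl) hc)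
    obtain ⟨f, u, hfu, huf⟩ := geometric_hahn_banach_closed_point (convex_convexHull ℝ _)
      ((hS.subset diff_subset).isClosed_convexHull (𝕜 := ℝ)) hVnc
    set m : (Fin n → ℝ) →L[ℝ] ℝ := -f with hmdef
    have hm : ∀ s ∈ S, s ≠ V → 0 < m (s - V) := by
      intro s hs hsV
      have h1 : f s < u := hfu s (subset_convexHull ℝ _ ⟨hs, hsV⟩)
      have h2 : m (s - V) = f V - f s := by
        show -f (s - V) = f V - f s
        rw [map_sub]; ring
      rw [h2]; linarith
    set T : Set (Fin n → ℝ) := (fun s => (m (s - V))⁻¹ • (s - V)) '' (S \ {V}) with hT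
    have hTfin : T.Finite := (hS.subset diff_subset).image _
    set B := convexHull ℝ T with hB
    have hEsub : Set.extremePoints ℝ B ⊆ T := extremePoints_convexHull_subset
    have hEfin : (Set.extremePoints ℝ B).Finite := hTfin.subset hEsub
    have hBeq : B = convexHull ℝ (Set.extremePoints ℝ B) :=
      (closure_convexHull_extremePoints (hTfin.isCompact_convexHull (𝕜 := ℝ))
        (convex_convexHull ℝ T)).symm.trans ((hEfin.isClosed_convexHull (𝕜 := ℝ)).closure_eq)
    obtain ⟨w, hw0, hxw⟩ := rep_sub hS V (show p ∈ convexHull ℝ S from hP ▸ hp)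
    set x := p - V with hxdef
    have hx0 : x ≠ 0 := sub_ne_zero.2 hpV
    have hmem : ∀ s ∈ hS.toFinset.erase V, s ∈ S ∧ s ≠ V := by
      intro s hs
      rw [Finset.mem_erase, Set.Finite.mem_toFinset] at hs
      exact ⟨hs.2, hs.1⟩
    have hmxsum : m x = ∑ s ∈ hS.toFinset.erase V, w s * m (s - V) := by
      rw [hxw, map_sum]
      simp only [map_smul, smul_eq_mul]
    have hsum_nonneg : ∀ s ∈ hS.toFinset.erase V, 0 ≤ w s * m (s - V) := fun s hs =>
      mul_nonneg (hw0 s hs) (hm s (hmem s hs).1 (hmem s hs).2).le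
    have hmx : 0 < m x := by
      rcases (Finset.sum_nonneg hsum_nonneg).lt_or_eq with h | h
      · rw [hmxsum]; exact h
      · exfalso
        apply hx0
        have hz := (Finset.sum_eq_zero_iff_of_nonneg hsum_nonneg).1 h.symm
        rw [hxw]
        apply Finset.sum_eq_zero
        intro s hs
        have hws : w s = 0 :=
          (mul_eq_zero.1 (hz s hs)).resolve_right (hm s (hmem s hs).1 (hmem s hs).2).ne'
        simp [hws]
    set x' := (m x)⁻¹ • x with hx'def
    have hx'B : x' ∈ B := by
      have h1 : ∑ s ∈ hS.toFinset.erase V,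
          (w s * m (s - V)) • ((m (s - V))⁻¹ • (s - V)) = x := by
        rw [hxw]
        apply Finset.sum_congr rfl
        intro s hs
        rw [smul_smul, mul_assoc, mul_inv_cancel₀ (hm s (hmem s hs).1 (hmem s hs).2).ne', mul_one]
      have hcm := Finset.centerMass_mem_convexHull (hS.toFinset.erase V)
        (w := fun s => w s * m (s - V)) (z := fun s => (m (s - V))⁻¹ • (s - V)) (s := T)
        hsum_nonneg (by rw [← hmxsum]; exact hmx)
        (fun s hs => ⟨s, ⟨(hmem s hs).1, (hmem s hs).2⟩, rfl⟩)
      have heq : (hS.toFinset.erase V).centerMass (fun s => w s * m (s - V))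
          (fun s => (m (s - V))⁻¹ • (s - V)) = x' := by
        rw [Finset.centerMass, ← hmxsum, h1]
      rw [heq] at hcm
      exact hcm
    rw [hBeq, ← hEfin.coe_toFinset, Finset.convexHull_eq] at hx'B
    obtain ⟨ω, hω0, hω1, hx'eq⟩ := hx'B
    rw [Finset.centerMass_eq_of_sum_1 _ _ hω1] at hx'eq
    have hch : ∀ el : Fin n → ℝ, ∃ Zt : (Fin n → ℝ) × ℝ,
        el ∈ Set.extremePoints ℝ B → 0 < Zt.2 ∧ Zt.1 - V = Zt.2 • el ∧
          EdgeNeighbor (convexHull ℝ S) V Zt.1 := by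
      intro el
      by_cases h : el ∈ Set.extremePoints ℝ B
      · obtain ⟨Z, t, h1, h2, h3⟩ := exists_edge hS hVP m hm h
        exact ⟨(Z, t), fun _ => ⟨h1, h2, h3⟩⟩
      · exact ⟨(0, 0), fun h' => absurd h' h⟩
    choose Zt hZt using hch
    refine ⟨∑ el ∈ hEfin.toFinset, Finsupp.single (Zt el).1 (m x * ω el / (Zt el).2),
      ?_, ?_, ?_⟩
    · intro Z0
      rw [Finsupp.finset_sum_apply]
      apply Finset.sum_nonneg
      intro el hel
      have h := hZt el (hEfin.mem_toFinset.1 hel)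
      rw [Finsupp.single_apply]
      split
      · exact div_nonneg (mul_nonneg hmx.le (hω0 el hel)) h.1.le
      · exact le_refl 0
    · intro Z0 hZ0
      have h1 := Finsupp.support_finset_sum hZ0
      rw [Finset.mem_biUnion] at h1
      obtain ⟨el, hel, hmem'⟩ := h1
      have h := hZt el (hEfin.mem_toFinset.1 hel)
      have hZ0eq : Z0 = (Zt el).1 := by
        have := Finsupp.support_single_subset hmem'
        simpa using this
      rw [hZ0eq, hP]
      exact h.2.2
    · rw [← Finsupp.sum_finset_sum_index (fun z => zero_smul ℝ (z - V))
        (fun z c1 c2 => add_smul c1 c2 (z - V))]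
      have hterm : ∀ el ∈ hEfin.toFinset,
          (Finsupp.single (Zt el).1 (m x * ω el / (Zt el).2)).sum
            (fun Z c => c • (Z - V)) = (m x * ω el) • el := by
        intro el hel
        have h := hZt el (hEfin.mem_toFinset.1 hel)
        rw [Finsupp.sum_single_index (h := fun Z c => c • (Z - V)) (zero_smul ℝ _)]
        rw [h.2.1, smul_smul, div_mul_cancel₀ _ h.1.ne']
      rw [Finset.sum_congr rfl hterm]
      have hfin : ∑ el ∈ hEfin.toFinset, (m x * ω el) • el = (m x) • x' := by
        rw [← hx'eq, Finset.smul_sum]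
        apply Finset.sum_congr rfl
        intro el _
        rw [smul_smul]
        simp [id]
      rw [hfin, hx'def, smul_inv_smul₀ hmx.ne']
end

section
/- Let S ⊆ (Fin n → ℝ) be finite, P = convexHull ℝ S, V an extreme point of P, and Z an edge-neighbor of V. Then Z − V cannot be written as a nonnegative linear combination of the other vertex vectors at V: there is no finitely supported family of nonnegative reals (r_W), indexed by the extreme points W of P with W ≠ V and W ≠ Z, such that Z − V = ∑_W r_W • (W − V). -/
/-- If `Z` is an edge-neighbor of the vertex `V` of a polytope `P`, then `Z − V`
is not a nonnegative linear combination of the other vertex vectors at `V`. -/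
theorem stmt_3 (n : ℕ) (S : Set (Fin n → ℝ)) (hS : S.Finite)
    (P : Set (Fin n → ℝ)) (hP : P = convexHull ℝ S)
    (V : Fin n → ℝ) (hV : V ∈ Set.extremePoints ℝ P)
    (Z : Fin n → ℝ) (hZ : EdgeNeighbor P V Z) :
    ¬ ∃ r : (Fin n → ℝ) →₀ ℝ, (∀ W, 0 ≤ r W) ∧
        (∀ W ∈ r.support, W ∈ Set.extremePoints ℝ P ∧ W ≠ V ∧ W ≠ Z) ∧
        Z - V = r.sum (fun W c => c • (W - V)) := by

  rintro ⟨r, hr0, hrs, hsum⟩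
  obtain ⟨hZex, hZV, hne, hexp, hdim⟩ := hZ
  obtain ⟨l, hl⟩ := hexp hne
  have hVseg : V ∈ segment ℝ V Z := left_mem_segment ℝ V Z
  have hZseg : Z ∈ segment ℝ V Z := right_mem_segment ℝ V Z
  rw [hl] at hVseg hZseg
  have hlVZ : l V = l Z := le_antisymm (hZseg.2 V hVseg.1) (hVseg.2 Z hZseg.1)
  have hterm : ∀ W ∈ r.support, r W * (l W - l V) ≤ 0 := by
    intro W hW
    have hWP : W ∈ P := (hrs W hW).1.1
    have h1 : l W ≤ l V := hVseg.2 W hWP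
    have := hr0 W
    nlinarith
  have hsum0 : ∑ W ∈ r.support, r W * (l W - l V) = 0 := by
    have h := congrArg l hsum
    rw [map_sub, ← hlVZ, sub_self, Finsupp.sum, map_sum] at h
    have h2 : ∀ W ∈ r.support, l (r W • (W - V)) = r W * (l W - l V) := by
      intro W _
      rw [map_smul, map_sub]
      rfl
    rw [Finset.sum_congr rfl h2] at h
    exact h.symm
  have hall : ∀ W ∈ r.support, r W * (l W - l V) = 0 :=
    (Finset.sum_eq_zero_iff_of_nonpos hterm).1 hsum0
  have hempty : r.support = ∅ := by
    by_contra h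
    obtain ⟨W, hW⟩ := Finset.nonempty_iff_ne_empty.2 h
    obtain ⟨hWex, hWV, hWZ⟩ := hrs W hW
    have hrW : r W ≠ 0 := Finsupp.mem_support_iff.1 hW
    have hlW : l W = l V := by
      rcases mul_eq_zero.1 (hall W hW) with h1 | h1
      · exact absurd h1 hrW
      · linarith [sub_eq_zero.1 h1]
    have hWseg : W ∈ segment ℝ V Z := by
      rw [hl]
      exact ⟨hWex.1, fun y hy => hlW ▸ hVseg.2 y hy⟩
    have hWopen : W ∈ openSegment ℝ V Z :=
      mem_openSegment_of_ne_left_right hWV.symm hWZ.symm hWseg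
    exact hWV (hWex.2 hV.1 hZex.1 hWopen).symm
  rw [Finsupp.sum, hempty, Finset.sum_empty, sub_eq_zero] at hsum
  exact hZV hsum.symm.symm
end

section
/- Let S ⊆ (Fin n → ℝ) be finite, P = convexHull ℝ S, V an extreme point of P, K_V the convex cone generated by the vertex vectors at V, and Z an edge-neighbor of V. Then the ray R = {t • (Z − V) : t ∈ ℝ, t ≥ 0} is an extreme subset of K_V (Mathlib's IsExtreme ℝ K_V R): R ⊆ K_V and whenever x, y ∈ K_V and the open segment between x and y meets R, both x and y lie in R. -/
/-- The convex cone `K_V` generated by the vertex vectors at `V`: all finite nonnegative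
combinations `∑_W r_W • (W − V)`, `W` ranging over the extreme points of `P` other than `V`. -/
def Kcone {n : ℕ} (P : Set (Fin n → ℝ)) (V : Fin n → ℝ) : Set (Fin n → ℝ) :=
  {x | ∃ r : (Fin n → ℝ) →₀ ℝ, (∀ W, 0 ≤ r W) ∧
    (∀ W ∈ r.support, W ∈ Set.extremePoints ℝ P ∧ W ≠ V) ∧
    x = r.sum (fun W c => c • (W - V))}

/-- If `Z` is an edge-neighbor of the vertex `V` of a polytope `P`, then the ray
spanned by `Z − V` is an extreme subset of the cone `K_V`. -/
theorem stmt_4 (n : ℕ) (S : Set (Fin n → ℝ)) (hS : S.Finite)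
    (P : Set (Fin n → ℝ)) (hP : P = convexHull ℝ S)
    (V : Fin n → ℝ) (hV : V ∈ Set.extremePoints ℝ P)
    (Z : Fin n → ℝ) (hZ : EdgeNeighbor P V Z) :
    IsExtreme ℝ (Kcone P V) {x : Fin n → ℝ | ∃ t : ℝ, 0 ≤ t ∧ x = t • (Z - V)} := by
  obtain ⟨hZex, hZV, hne, hexp, -⟩ := hZ
  obtain ⟨l, hl⟩ := hexp hne
  have hVP : V ∈ P := hV.1
  have hZP : Z ∈ P := hZex.1
  have hVseg : V ∈ segment ℝ V Z := left_mem_segment ℝ V Z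
  have hZseg : Z ∈ segment ℝ V Z := right_mem_segment ℝ V Z
  rw [hl] at hVseg hZseg
  have hlV : ∀ y ∈ P, l y ≤ l V := hVseg.2
  have hlZV : l Z = l V := le_antisymm (hlV Z hZP) (hZseg.2 V hVP)
  -- strict inequality for other vertices
  have hkey : ∀ W, W ∈ Set.extremePoints ℝ P → W ≠ V → W ≠ Z → l W < l V := by
    intro W hWex hWV hWZ
    rcases lt_or_eq_of_le (hlV W hWex.1) with h | h
    · exact h
    · exfalso
      have hWseg : W ∈ segment ℝ V Z := by
        rw [hl]
        exact ⟨hWex.1, fun y hy => h ▸ hlV y hy⟩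
      rcases (mem_extremePoints_iff_forall_segment.mp hWex).2 V hVP Z hZP hWseg with h' | h'
      · exact hWV h'.symm
      · exact hWZ h'.symm
  -- computing l on cone elements
  have hcompute : ∀ r : (Fin n → ℝ) →₀ ℝ,
      l (r.sum fun W c => c • (W - V)) = ∑ W ∈ r.support, r W * (l W - l V) := by
    intro r
    rw [map_finsuppSum, Finsupp.sum]
    refine Finset.sum_congr rfl fun W _ => ?_
    show l (r W • (W - V)) = r W * (l W - l V)
    rw [map_smul, map_sub, smul_eq_mul]
  -- l is nonpositive on the cone
  have hKle : ∀ x ∈ Kcone P V, l x ≤ 0 := by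
    rintro x ⟨r, hr0, hrsupp, rfl⟩
    rw [hcompute]
    apply Finset.sum_nonpos
    intro W hW
    exact mul_nonpos_of_nonneg_of_nonpos (hr0 W)
      (sub_nonpos.mpr (hlV W (hrsupp W hW).1.1))
  -- cone elements with l = 0 lie on the ray
  have hmem : ∀ x ∈ Kcone P V, l x = 0 → ∃ t : ℝ, 0 ≤ t ∧ x = t • (Z - V) := by
    rintro x ⟨r, hr0, hrsupp, rfl⟩ hx0
    have hsum : ∑ W ∈ r.support, r W * (l W - l V) = 0 := by
      rw [← hcompute]; exact hx0
    have hzero : ∀ W ∈ r.support, r W * (l W - l V) = 0 := by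
      intro W hW
      refine (Finset.sum_eq_zero_iff_of_nonpos ?_).mp hsum W hW
      intro U hU
      exact mul_nonpos_of_nonneg_of_nonpos (hr0 U)
        (sub_nonpos.mpr (hlV U (hrsupp U hU).1.1))
    have hsub : r.support ⊆ {Z} := by
      intro W hW
      simp only [Finset.mem_singleton]
      by_contra hWZ
      obtain ⟨hWex, hWV⟩ := hrsupp W hW
      have hlt := hkey W hWex hWV hWZ
      have hrW : r W ≠ 0 := Finsupp.mem_support_iff.mp hW
      have := hzero W hW
      rcases mul_eq_zero.mp this with h | h
      · exact hrW h
      · exact (sub_ne_zero.mpr (ne_of_lt hlt)) h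
    have : r = Finsupp.single Z (r Z) := Finsupp.support_subset_singleton.mp hsub
    refine ⟨r Z, hr0 Z, ?_⟩
    rw [this, Finsupp.sum_single_index (by simp)]
    simp
  constructor
  · -- the ray is contained in the cone
    rintro x ⟨t, ht, rfl⟩
    refine ⟨Finsupp.single Z t, ?_, ?_, ?_⟩
    · intro W
      rw [Finsupp.single_apply]
      split_ifs with h
      · exact ht
      · exact le_rfl
    · intro W hW
      have : W = Z := Finset.mem_singleton.mp (Finsupp.support_single_subset hW)
      subst this
      exact ⟨hZex, hZV⟩
    · rw [Finsupp.sum_single_index (by simp)]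
  · rintro x₁ h₁ x₂ h₂ x ⟨t, ht, rfl⟩ hseg
    obtain ⟨a, b, ha, hb, hab, hxeq⟩ := hseg
    have hlx : l (t • (Z - V)) = 0 := by
      rw [map_smul, map_sub, hlZV]; simp
    have hcomb : a * l x₁ + b * l x₂ = 0 := by
      have : l (a • x₁ + b • x₂) = 0 := by rw [hxeq]; exact hlx
      simpa [map_add, map_smul] using this
    have h1le := hKle x₁ h₁
    have h2le := hKle x₂ h₂
    have h1 : l x₁ = 0 := by nlinarith
    have h2 : l x₂ = 0 := by nlinarith
    exact hmem x₁ h₁ h1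
end

section
/- Let S ⊆ (Fin n → ℝ) be finite and nonempty, P = convexHull ℝ S, and a, E : Fin n → ℝ. Define ω : ℝ → ℝ by ω(α) = sInf {E·p | p ∈ P ∧ a·p = α}. Then ω is convex on the set {a·p | p ∈ P}, i.e. ConvexOn ℝ ((fun p => a·p) '' P) ω holds. -/
/-- The minimal cost function `ω(α) = inf {E·p | p ∈ P, a·p = α}` of a polytope
`P` is convex on the set of attainable target values `{a·p | p ∈ P}`. -/
theorem stmt_5 (n : ℕ) (S : Set (Fin n → ℝ)) (hSf : S.Finite) (hSn : S.Nonempty)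
    (P : Set (Fin n → ℝ)) (hP : P = convexHull ℝ S)
    (a E : Fin n → ℝ) (ω : ℝ → ℝ)
    (hω : ∀ α : ℝ,
      ω α = sInf {e : ℝ | ∃ p ∈ P, (∑ i, a i * p i) = α ∧ e = ∑ i, E i * p i}) :
    ConvexOn ℝ ((fun p => ∑ i, a i * p i) '' P) ω := by
  set f : (Fin n → ℝ) → ℝ := fun p => ∑ i, a i * p i with hf
  set g : (Fin n → ℝ) → ℝ := fun p => ∑ i, E i * p i with hg
  have hfc : Continuous f := by
    apply continuous_finset_sum
    intro i _
    exact (continuous_const.mul (continuous_apply i))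
  have hgc : Continuous g := by
    apply continuous_finset_sum
    intro i _
    exact (continuous_const.mul (continuous_apply i))
  have hflin : ∀ (c d : ℝ) (p q : Fin n → ℝ), f (c • p + d • q) = c * f p + d * f q := by
    intro c d p q
    simp only [hf, Pi.add_apply, Pi.smul_apply, smul_eq_mul, Finset.mul_sum,
      ← Finset.sum_add_distrib]
    exact Finset.sum_congr rfl fun i _ => by ring
  have hglin : ∀ (c d : ℝ) (p q : Fin n → ℝ), g (c • p + d • q) = c * g p + d * g q := by
    intro c d p q
    simp only [hg, Pi.add_apply, Pi.smul_apply, smul_eq_mul, Finset.mul_sum,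
      ← Finset.sum_add_distrib]
    exact Finset.sum_congr rfl fun i _ => by ring
  have hPc : IsCompact P := hP ▸ hSf.isCompact_convexHull (𝕜 := ℝ)
  have hPconv : Convex ℝ P := hP ▸ convex_convexHull ℝ S
  have hbdd : BddBelow (g '' P) := (hPc.image hgc).bddBelow
  have hset : ∀ α : ℝ, {e : ℝ | ∃ p ∈ P, (∑ i, a i * p i) = α ∧ e = ∑ i, E i * p i}
      = g '' (P ∩ f ⁻¹' {α}) := by
    intro α
    ext e
    constructor
    · rintro ⟨p, hp, hfp, he⟩
      exact ⟨p, ⟨hp, hfp⟩, he.symm⟩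
    · rintro ⟨p, ⟨hp, hfp⟩, he⟩
      exact ⟨p, hp, hfp, he.symm⟩
  -- minimizer existence
  have hmin : ∀ α ∈ f '' P, ∃ p, p ∈ P ∧ f p = α ∧ ω α = g p := by
    intro α hα
    obtain ⟨p0, hp0, hfp0⟩ := hα
    have hKc : IsCompact (P ∩ f ⁻¹' {α}) :=
      hPc.inter_right ((isClosed_singleton).preimage hfc)
    have hKne : (P ∩ f ⁻¹' {α}).Nonempty := ⟨p0, hp0, hfp0⟩
    obtain ⟨p, hpK, hpmin⟩ := hKc.exists_isMinOn hKne hgc.continuousOn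
    refine ⟨p, hpK.1, hpK.2, ?_⟩
    rw [hω α, hset α]
    refine le_antisymm (csInf_le (hbdd.mono (Set.image_mono (f := g) Set.inter_subset_left))
      ⟨p, hpK, rfl⟩) ?_
    refine le_csInf ⟨g p, ⟨p, hpK, rfl⟩⟩ ?_
    rintro b ⟨q, hqK, rfl⟩
    exact hpmin hqK
  constructor
  · exact hPconv.is_linear_image ⟨fun p q => by
      simpa using hflin 1 1 p q, fun c p => by
      have := hflin c 0 p 0
      simpa using this⟩
  · intro x hx y hy t s ht hs hts
    obtain ⟨p, hpP, hfp, hωx⟩ := hmin x hx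
    obtain ⟨q, hqP, hfq, hωy⟩ := hmin y hy
    have hrP : t • p + s • q ∈ P := hPconv hpP hqP ht hs hts
    have hfr : f (t • p + s • q) = t • x + s • y := by
      rw [hflin, hfp, hfq]; simp [smul_eq_mul]
    have hle : ω (t • x + s • y) ≤ g (t • p + s • q) := by
      rw [hω, hset]
      exact csInf_le (hbdd.mono (Set.image_mono (f := g) Set.inter_subset_left))
        ⟨t • p + s • q, ⟨hrP, hfr⟩, rfl⟩
    calc ω (t • x + s • y) ≤ g (t • p + s • q) := hle
      _ = t * g p + s * g q := hglin t s p q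
      _ = t • ω x + s • ω y := by rw [hωx, hωy]; simp [smul_eq_mul]
end

section
/- Let S ⊆ (Fin n → ℝ) be finite, P = convexHull ℝ S, a, E : Fin n → ℝ, and let V be a cost-optimal extreme point of P. Assume the sets N₊ and N₋ of edge-neighbors of V that respectively increase and decrease the target are both nonempty, and let γ⁺min and γ⁻max be as defined. Then: (i) for every p ∈ P with a·p > a·V one has (E·p − E·V)/(a·p − a·V) ≥ γ⁺min; (ii) γ⁺min ≥ γ⁻max; and (iii) for every p ∈ P with a·p < a·V one has (E·p − E·V)/(a·p − a·V) ≤ γ⁻max. -/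
/-- The dot product `a·p = ∑ i, a i * p i`. -/
def dot {n : ℕ} (a p : Fin n → ℝ) : ℝ := ∑ i, a i * p i

section Aux

open Module Set

variable {n : ℕ}

local notation "Vec" => (Fin n → ℝ)




lemma aux_hull_le {T : Set Vec} (f : Vec →L[ℝ] ℝ) {M : ℝ} (hT : ∀ s ∈ T, f s ≤ M)
    {x : Vec} (hx : x ∈ convexHull ℝ T) : f x ≤ M := by
  have h := convexHull_min (t := {w | f w ≤ M}) hT
    (convex_halfSpace_le (IsLinearMap.mk f.map_add f.map_smul) M)
  exact h hx

lemma mem_hull_inter_of_isExtreme {P F : Set Vec} (hF : IsExtreme ℝ P F) :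
    ∀ T : Finset Vec, convexHull ℝ (↑T : Set Vec) ⊆ P →
      ∀ x ∈ convexHull ℝ (↑T : Set Vec), x ∈ F → x ∈ convexHull ℝ ((↑T : Set Vec) ∩ F) := by
  intro T
  induction T using Finset.induction_on with
  | empty => simp
  | @insert s₀ T₀ hs₀ ih =>
    intro hTP x hx hxF
    rcases T₀.eq_empty_or_nonempty with rfl | hT₀ne
    · have hxs : x = s₀ := by simpa using hx
      subst hxs
      exact subset_convexHull ℝ _ ⟨by simp, hxF⟩
    · rw [Finset.coe_insert, convexHull_insert (Finset.coe_nonempty.2 hT₀ne),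
        mem_convexJoin] at hx
      obtain ⟨w, hw, z, hz, hxz⟩ := hx
      rw [mem_singleton_iff] at hw
      have hT₀P : convexHull ℝ (↑T₀ : Set Vec) ⊆ P := (convexHull_mono (by simp)).trans hTP
      have hmono : convexHull ℝ ((↑T₀ : Set Vec) ∩ F) ⊆
          convexHull ℝ ((↑(insert s₀ T₀) : Set Vec) ∩ F) :=
        convexHull_mono (inter_subset_inter_left _ (by simp))
      obtain ⟨a, b, ha, hb, hab, hxab⟩ := hxz
      rcases eq_or_lt_of_le ha with ha0 | hapos
      · have hxz' : x = z := by
          rw [← hxab, hw, ← ha0, zero_smul, zero_add]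
          rw [← ha0, zero_add] at hab
          rw [hab, one_smul]
        rw [hxz']
        exact hmono (ih hT₀P z hz (hxz' ▸ hxF))
      rcases eq_or_lt_of_le hb with hb0 | hbpos
      · have hxs : x = s₀ := by
          rw [← hxab, hw, ← hb0, zero_smul, add_zero]
          rw [← hb0, add_zero] at hab
          rw [hab, one_smul]
        subst hxs
        exact subset_convexHull ℝ _ ⟨by simp, hxF⟩
      · -- open segment case
        have hseg : x ∈ openSegment ℝ s₀ z := ⟨a, b, hapos, hbpos, hab, by rw [← hxab, hw]⟩
        have hs₀P : s₀ ∈ P := hTP (subset_convexHull ℝ _ (by simp))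
        have hzP : z ∈ P := hT₀P hz
        obtain ⟨hs₀F, hzF⟩ := And.intro (hF.2 hs₀P hzP hxF hseg)
          (hF.right_mem_of_mem_openSegment hs₀P hzP hxF hseg)
        have hzhull := ih hT₀P z hz hzF
        have hs₀hull : s₀ ∈ convexHull ℝ ((↑(insert s₀ T₀) : Set Vec) ∩ F) :=
          subset_convexHull ℝ _ ⟨by simp, hs₀F⟩
        have hconv := convex_convexHull ℝ ((↑(insert s₀ T₀) : Set Vec) ∩ F)
        have := hconv.segment_subset hs₀hull (hmono hzhull)
        exact this ⟨a, b, ha, hb, hab, by rw [← hxab, hw]⟩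

lemma face_eq_hull {S : Set Vec} (hS : S.Finite) {F : Set Vec}
    (hexp : IsExposed ℝ (convexHull ℝ S) F) : F = convexHull ℝ (S ∩ F) := by
  apply Subset.antisymm
  · intro x hx
    have hxP : x ∈ convexHull ℝ S := hexp.subset hx
    have h := mem_hull_inter_of_isExtreme hexp.isExtreme hS.toFinset
      (by rw [hS.coe_toFinset]) x (by rwa [hS.coe_toFinset]) hx
    rwa [hS.coe_toFinset] at h
  · exact convexHull_min inter_subset_right (hexp.convex (convex_convexHull ℝ S))



lemma exposing_functional {S : Set Vec} (hS : S.Finite) {P : Set Vec} (hP : P = convexHull ℝ S)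
    {V : Vec} (hV : V ∈ Set.extremePoints ℝ P) {T : Set Vec} (hT : T ⊆ S) :
    ∃ e : Vec →L[ℝ] ℝ, ∀ s ∈ T, s ≠ V → e s < e V := by
  classical
  have hTfin : (T \ {V}).Finite := (hS.subset hT).subset diff_subset
  set K := convexHull ℝ (T \ {V}) with hK
  have hVK : V ∉ K := by
    intro hVK
    have hKP : K ⊆ P := by
      rw [hP]; exact convexHull_mono (diff_subset.trans hT)
    have hext : IsExtreme ℝ K {V} :=
      (isExtreme_singleton.mpr hV).mono hKP (singleton_subset_iff.2 hVK)
    have h := mem_hull_inter_of_isExtreme hext hTfin.toFinset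
      (by rw [hTfin.coe_toFinset]) V (by rwa [hTfin.coe_toFinset]) rfl
    rw [hTfin.coe_toFinset] at h
    have : (T \ {V}) ∩ {V} = ∅ := by
      ext y; simp (config := {contextual := true}) [mem_diff]
    rw [this, convexHull_empty] at h
    exact h
  obtain ⟨f, u, hfV, hfK⟩ := geometric_hahn_banach_point_closed
    (convex_convexHull ℝ _) (hTfin.isClosed_convexHull ℝ) hVK
  refine ⟨-f, fun s hs hsV => ?_⟩
  have hsK : s ∈ K := subset_convexHull ℝ _ ⟨hs, hsV⟩
  have := hfK s hsK
  simp only [ContinuousLinearMap.neg_apply, neg_lt_neg_iff]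
  linarith


lemma isExposed_trans {S : Set Vec} (hS : S.Finite) {P F G : Set Vec}
    (hP : P = convexHull ℝ S) (hF : IsExposed ℝ P F) (hG : IsExposed ℝ F G) :
    IsExposed ℝ P G := by
  classical
  intro hGne
  obtain ⟨g₀, hg₀⟩ := hGne
  have hg₀F : g₀ ∈ F := hG.subset hg₀
  obtain ⟨l₀, hl₀⟩ := hF ⟨g₀, hg₀F⟩
  obtain ⟨l₁, hl₁⟩ := hG ⟨g₀, hg₀⟩
  have hFP : F ⊆ P := hF.subset
  set m₀ := l₀ g₀ with hm₀
  set m₁ := l₁ g₀ with hm₁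
  have hg₀P : g₀ ∈ P := hFP hg₀F
  have hPbound : ∀ y ∈ P, l₀ y ≤ m₀ := by
    have := hl₀ ▸ hg₀F
    exact fun y hy => this.2 y hy
  have hFval : ∀ x ∈ F, l₀ x = m₀ := by
    intro x hx
    have hx' := hl₀ ▸ hx
    exact le_antisymm (hPbound x (hFP hx)) (hx'.2 g₀ hg₀P)
  have hFbound : ∀ y ∈ F, l₁ y ≤ m₁ := by
    have := hl₁ ▸ hg₀
    exact fun y hy => this.2 y hy
  have hGval : ∀ x ∈ G, l₁ x = m₁ := by
    intro x hx
    have hx' := hl₁ ▸ hx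
    exact le_antisymm (hFbound x (hG.subset hx)) (hx'.2 g₀ hg₀F)
  have hSP : S ⊆ P := hP ▸ subset_convexHull ℝ S
  have hstrict : ∀ s ∈ S, s ∉ F → l₀ s < m₀ := by
    intro s hs hsF
    rcases lt_or_eq_of_le (hPbound s (hSP hs)) with h | h
    · exact h
    · exact absurd (hl₀ ▸ (⟨hSP hs, fun y hy => (hPbound y hy).trans_eq h.symm⟩ :
        s ∈ {x ∈ P | ∀ y ∈ P, l₀ y ≤ l₀ x})) hsF
  -- choose ε
  set U : Finset Vec := hS.toFinset.filter (fun s => s ∉ F) with hU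
  have hUmem : ∀ s ∈ U, s ∈ S ∧ s ∉ F := by
    intro s hs
    rw [hU, Finset.mem_filter, hS.mem_toFinset] at hs
    exact hs
  set q : Vec → ℝ := fun s => (m₀ - l₀ s) / (1 + |m₁ - l₁ s|) with hq
  have hqpos : ∀ s ∈ U, 0 < q s := by
    intro s hs
    obtain ⟨hsS, hsF⟩ := hUmem s hs
    exact div_pos (by linarith [hstrict s hsS hsF]) (by positivity)
  obtain ⟨ε, hεpos, hεle⟩ : ∃ ε : ℝ, 0 < ε ∧ ∀ s ∈ U, ε ≤ q s := by
    rcases U.eq_empty_or_nonempty with hUe | hUne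
    · exact ⟨1, one_pos, fun s hs => absurd hs (by simp [hUe])⟩
    · exact ⟨U.inf' hUne q, (Finset.lt_inf'_iff hUne).2 (fun s hs => hqpos s hs),
        fun s hs => Finset.inf'_le q hs⟩
  set l : Vec →L[ℝ] ℝ := l₀ + ε • l₁ with hl
  have hlval : ∀ x, l x = l₀ x + ε * l₁ x := fun x => rfl
  have hSbound : ∀ s ∈ S, l s ≤ m₀ + ε * m₁ := by
    intro s hs
    by_cases hsF : s ∈ F
    · rw [hlval, hFval s hsF]
      have := hFbound s hsF
      nlinarith
    · have hsU : s ∈ U := by rw [hU, Finset.mem_filter, hS.mem_toFinset]; exact ⟨hs, hsF⟩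
      have h1 := hεle s hsU
      have h2 := hstrict s hs hsF
      rw [hlval]
      by_cases hcmp : l₁ s ≤ m₁
      · nlinarith
      · push_neg at hcmp
        have habs : |m₁ - l₁ s| = l₁ s - m₁ := by rw [abs_of_neg (by linarith)]; ring
        rw [hq] at h1
        simp only [habs] at h1
        rw [le_div_iff₀ (by linarith)] at h1
        nlinarith
  have hSstrict : ∀ s ∈ S, s ∉ F → l s < m₀ + ε * m₁ := by
    intro s hs hsF
    have hsU : s ∈ U := by rw [hU, Finset.mem_filter, hS.mem_toFinset]; exact ⟨hs, hsF⟩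
    have h1 := hεle s hsU
    have h2 := hstrict s hs hsF
    rw [hlval]
    by_cases hcmp : l₁ s ≤ m₁
    · nlinarith
    · push_neg at hcmp
      have habs : |m₁ - l₁ s| = l₁ s - m₁ := by rw [abs_of_neg (by linarith)]; ring
      rw [hq] at h1
      simp only [habs] at h1
      rw [le_div_iff₀ (by linarith)] at h1
      nlinarith
  have hPle : ∀ y ∈ P, l y ≤ m₀ + ε * m₁ := by
    intro y hy
    exact aux_hull_le l hSbound (hP ▸ hy)
  have hg₀l : l g₀ = m₀ + ε * m₁ := by rw [hlval, ← hm₀, ← hm₁]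
  refine ⟨l, ?_⟩
  ext x
  constructor
  · intro hx
    have hxF : x ∈ F := hG.subset hx
    have hxl : l x = m₀ + ε * m₁ := by rw [hlval, hFval x hxF, hGval x hx]
    exact ⟨hFP hxF, fun y hy => (hPle y hy).trans_eq hxl.symm⟩
  · rintro ⟨hxP, hxmax⟩
    have hxl : l x = m₀ + ε * m₁ :=
      le_antisymm (hPle x hxP) ((hxmax g₀ hg₀P).trans_eq' hg₀l.symm)
    -- the argmax face H
    set H : Set Vec := {y ∈ P | ∀ z ∈ P, l z ≤ l y} with hH
    have hHexp : IsExposed ℝ P H := fun _ => ⟨l, rfl⟩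
    have hxH : x ∈ H := ⟨hxP, hxmax⟩
    have hHval : ∀ y ∈ H, l y = m₀ + ε * m₁ := by
      intro y hy
      exact le_antisymm (hPle y hy.1) ((hy.2 g₀ hg₀P).trans_eq' hg₀l.symm)
    have hHhull : H = convexHull ℝ (S ∩ H) := by
      exact face_eq_hull hS (hP ▸ hHexp)
    have hSH : S ∩ H ⊆ S ∩ F := by
      rintro s ⟨hsS, hsH⟩
      refine ⟨hsS, ?_⟩
      by_contra hsF
      exact absurd (hHval s hsH) (ne_of_lt (hSstrict s hsS hsF))
    have hxF : x ∈ F := by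
      have hx1 : x ∈ convexHull ℝ (S ∩ F) := by
        rw [hHhull] at hxH
        exact convexHull_mono hSH hxH
      exact (convexHull_min inter_subset_right (hF.convex (hP ▸ convex_convexHull ℝ S))) hx1
    have hl₁x : l₁ x = m₁ := by
      have h0 : l₀ x = m₀ := hFval x hxF
      have := hxl
      rw [hlval, h0] at this
      have := mul_left_cancel₀ (ne_of_gt hεpos) (by linarith : ε * l₁ x = ε * m₁)
      exact this
    rw [hl₁]
    exact ⟨hxF, fun y hy => (hFbound y hy).trans_eq hl₁x.symm⟩


set_option maxHeartbeats 1000000 in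
/-- One-dimensional exposed face containing extreme point `V` gives an edge-neighbor. -/
lemma onedim_edge {S : Set Vec} (hS : S.Finite) {P : Set Vec} (hP : P = convexHull ℝ S)
    {F : Set Vec} (hexp : IsExposed ℝ P F)
    (hrank : Module.finrank ℝ ↥(vectorSpan ℝ F) = 1)
    {V : Vec} (hV : V ∈ Set.extremePoints ℝ P) (hVF : V ∈ F)
    (f : Vec →L[ℝ] ℝ) (hex : ∃ x ∈ F, f V < f x) :
    ∃ Z, EdgeNeighbor P V Z ∧ f V < f Z := by
  classical
  have hPconv : Convex ℝ P := hP ▸ convex_convexHull ℝ S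
  have hPcl : IsClosed P := hP ▸ hS.isClosed_convexHull ℝ
  have hPcomp : IsCompact P := hP ▸ hS.isCompact_convexHull ℝ
  have hFcl : IsClosed F := hexp.isClosed hPcl
  have hFcomp : IsCompact F := hexp.isCompact hPcomp
  have hFP : F ⊆ P := hexp.subset
  -- get a spanning vector
  have hne : vectorSpan ℝ F ≠ ⊥ := by
    intro h
    rw [h] at hrank
    simp at hrank
  obtain ⟨v, hvmem, hv0⟩ := Submodule.exists_mem_ne_zero_of_ne_bot hne
  have hspan : vectorSpan ℝ F = Submodule.span ℝ {v} := by
    refine (Submodule.eq_of_le_of_finrank_le ((Submodule.span_singleton_le_iff_mem v _).2 hvmem)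
      ?_).symm
    rw [hrank, finrank_span_singleton hv0]
  -- dual functional
  obtain ⟨d, _, hdv⟩ := exists_dual_vector ℝ v (norm_ne_zero_iff.2 hv0)
  set φ : Vec →L[ℝ] ℝ := ‖v‖⁻¹ • d with hφ
  have hφv : φ v = 1 := by
    rw [hφ]
    simp only [ContinuousLinearMap.smul_apply, hdv, smul_eq_mul]
    exact inv_mul_cancel₀ (norm_ne_zero_iff.2 hv0)
  -- representation
  have hrep : ∀ x ∈ F, x - V = φ (x - V) • v := by
    intro x hx
    have hmem : x - V ∈ vectorSpan ℝ F := by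
      have := vsub_mem_vectorSpan ℝ hx hVF
      simpa using this
    rw [hspan, Submodule.mem_span_singleton] at hmem
    obtain ⟨c, hc⟩ := hmem
    have : φ (x - V) = c := by rw [← hc, map_smul, hφv, smul_eq_mul, mul_one]
    rw [this, hc]
  -- sign dichotomy
  have hsign : (∀ x ∈ F, 0 ≤ φ (x - V)) ∨ (∀ x ∈ F, φ (x - V) ≤ 0) := by
    by_contra hcon
    push_neg at hcon
    obtain ⟨⟨x, hx, hxneg⟩, ⟨y, hy, hypos⟩⟩ := hcon
    have hxy : x ≠ y := by
      intro h; rw [h] at hxneg; linarith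
    set cx := φ (x - V) with hcx
    set cy := φ (y - V) with hcy
    have hd : 0 < cy - cx := by linarith
    set μ := cy / (cy - cx) with hμdef
    set ν := -cx / (cy - cx) with hνdef
    have hμpos : 0 < μ := div_pos hypos hd
    have hνpos : 0 < ν := div_pos (by linarith) hd
    have hμν : μ + ν = 1 := by rw [hμdef, hνdef]; field_simp; ring
    have hc : μ * cx + ν * cy = 0 := by rw [hμdef, hνdef]; field_simp; ring
    have hVseg : V ∈ openSegment ℝ x y := by
      refine ⟨μ, ν, hμpos, hνpos, hμν, ?_⟩
      have h1 : x = V + cx • v := by rw [← hrep x hx]; abel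
      have h2 : y = V + cy • v := by rw [← hrep y hy]; abel
      rw [h1, h2]
      calc μ • (V + cx • v) + ν • (V + cy • v)
          = (μ + ν) • V + (μ * cx + ν * cy) • v := by module
        _ = V := by rw [hμν, hc, one_smul, zero_smul, add_zero]
    obtain ⟨hxV, -⟩ := (mem_extremePoints.1 hV).2 _ (hFP hx) _ (hFP hy) hVseg
    have hz : cx = 0 := by rw [hcx, hxV]; simp
    linarith
  -- normalize sign
  obtain ⟨ψ, w, hrep', hpos⟩ : ∃ (ψ : Vec →L[ℝ] ℝ) (w : Vec),
      (∀ x ∈ F, x - V = ψ (x - V) • w) ∧ (∀ x ∈ F, 0 ≤ ψ (x - V)) := by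
    rcases hsign with h | h
    · exact ⟨φ, v, hrep, h⟩
    · refine ⟨-φ, -v, fun x hx => ?_, fun x hx => by simpa using h x hx⟩
      rw [ContinuousLinearMap.neg_apply, neg_smul, smul_neg, neg_neg]
      exact hrep x hx
  -- maximize ψ over F
  obtain ⟨Z, hZF, hZmax'⟩ := hFcomp.exists_isMaxOn ⟨V, hVF⟩ ψ.continuous.continuousOn
  have hZmax : ∀ x ∈ F, ψ x ≤ ψ Z := fun x hx => hZmax' hx
  have hcoord : ∀ x ∈ F, ψ (x - V) ≤ ψ (Z - V) := by
    intro x hx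
    rw [map_sub, map_sub]
    linarith [hZmax x hx]
  obtain ⟨x₀, hx₀F, hfx₀⟩ := hex
  have hx₀V : x₀ ≠ V := fun h => by rw [h] at hfx₀; linarith
  have hx₀c : 0 < ψ (x₀ - V) := by
    rcases lt_or_eq_of_le (hpos x₀ hx₀F) with h | h
    · exact h
    · exfalso
      apply hx₀V
      have := hrep' x₀ hx₀F
      rw [← h, zero_smul] at this
      exact sub_eq_zero.1 this
  have hcZ : 0 < ψ (Z - V) := lt_of_lt_of_le hx₀c (hcoord x₀ hx₀F)
  have hZV : Z ≠ V := by
    intro h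
    rw [h] at hcZ
    simp at hcZ
  -- F = segment V Z
  have hFseg : F = segment ℝ V Z := by
    apply Subset.antisymm
    · intro x hx
      set t := ψ (x - V) / ψ (Z - V) with ht
      have ht0 : 0 ≤ t := div_nonneg (hpos x hx) (le_of_lt hcZ)
      have ht1 : t ≤ 1 := (div_le_one hcZ).2 (hcoord x hx)
      refine ⟨1 - t, t, by linarith, ht0, by ring, ?_⟩
      have hxrep := hrep' x hx
      have hZrep := hrep' Z hZF
      have : t • (Z - V) = x - V := by
        rw [hZrep, smul_smul, ht, div_mul_cancel₀ _ (ne_of_gt hcZ), ← hxrep]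
      have hgoal : x = V + t • (Z - V) := by rw [this]; abel
      rw [hgoal]
      rw [smul_sub]
      module
    · exact (hexp.convex hPconv).segment_subset hVF hZF
  have hfZ : f V < f Z := by
    obtain ⟨a, b, ha, hb, hab, hx₀⟩ : x₀ ∈ segment ℝ V Z := hFseg ▸ hx₀F
    have hfx : f x₀ = a * f V + b * f Z := by rw [← hx₀]; simp
    by_contra hle
    push_neg at hle
    have ha' : a = 1 - b := by linarith
    rw [ha'] at hfx
    have hint : b * f Z ≤ b * f V := mul_le_mul_of_nonneg_left hle hb
    nlinarith [hint]
  -- Z is an extreme point of P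
  have hZext : IsExtreme ℝ F {Z} := by
    constructor
    · exact singleton_subset_iff.2 hZF
    · intro x₁ h₁ x₂ h₂ x hx hseg
      rw [mem_singleton_iff] at hx
      obtain ⟨a, b, ha, hb, hab, habZ⟩ := hseg
      rw [hx] at habZ
      have hc₁ := hcoord x₁ h₁
      have hc₂ := hcoord x₂ h₂
      have hv : a • (x₁ - V) + b • (x₂ - V) = Z - V := by
        have hmod : a • x₁ + b • x₂ - (a + b) • V = a • (x₁ - V) + b • (x₂ - V) := by
          module
        rw [← hmod, habZ, hab, one_smul]
      have hsum : a * ψ (x₁ - V) + b * ψ (x₂ - V) = ψ (Z - V) := by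
        calc a * ψ (x₁ - V) + b * ψ (x₂ - V) = ψ (a • (x₁ - V) + b • (x₂ - V)) := by
              rw [map_add, map_smul, map_smul]; simp [smul_eq_mul]
          _ = ψ (Z - V) := by rw [hv]
      have he₁ : ψ (x₁ - V) = ψ (Z - V) := by nlinarith
      have he₂ : ψ (x₂ - V) = ψ (Z - V) := by nlinarith
      have hx₁Z : x₁ = Z := by
        have r1 := hrep' x₁ h₁
        rw [he₁, ← hrep' Z hZF] at r1
        exact sub_left_inj.1 r1
      have hx₂Z : x₂ = Z := by
        have r2 := hrep' x₂ h₂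
        rw [he₂, ← hrep' Z hZF] at r2
        exact sub_left_inj.1 r2
      exact mem_singleton_iff.2 hx₁Z
  have hZep : Z ∈ Set.extremePoints ℝ P := (hexp.isExtreme.trans hZext).mem_extremePoints
  refine ⟨Z, ⟨hZep, hZV, ⟨V, left_mem_segment ℝ V Z⟩, ?_, ?_⟩, hfZ⟩
  · rw [← hFseg]; exact hexp
  · rw [← hFseg]; exact hrank


set_option maxHeartbeats 1000000 in
/-- Descent: given an exposed face `F` of `P` containing the extreme point `V`, a functional `h`
increasing from `V` to some generator, and a generator `s' ≠ V` not increased by `h`, there is a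
strictly smaller exposed face `G` containing `V` and a generator `b` with `h V < h b`. -/
lemma descent_face {S : Set Vec} (hS : S.Finite) {P : Set Vec} (hP : P = convexHull ℝ S)
    {F : Set Vec} (hexp : IsExposed ℝ P F)
    {V : Vec} (hV : V ∈ Set.extremePoints ℝ P) (hVF : V ∈ F)
    (h : Vec →L[ℝ] ℝ) (T : Finset Vec) (hT : ↑T = S ∩ F)
    (hA : ∃ s ∈ T, h V < h s) (hs' : ∃ s' ∈ T, s' ≠ V ∧ ¬ h V < h s') :
    ∃ G, IsExposed ℝ P G ∧ V ∈ G ∧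
      Module.finrank ℝ ↥(vectorSpan ℝ G) < Module.finrank ℝ ↥(vectorSpan ℝ F) ∧
      ∃ b ∈ G, b ∈ T ∧ h V < h b := by
  classical
  have hTS : (↑T : Set Vec) ⊆ S := hT ▸ inter_subset_left
  have hTF : (↑T : Set Vec) ⊆ F := hT ▸ inter_subset_right
  have hFhull : F = convexHull ℝ (↑T : Set Vec) := by
    rw [hT]
    exact face_eq_hull hS (hP ▸ hexp)
  obtain ⟨e, he⟩ := exposing_functional hS hP hV hTS
  set A : Finset Vec := T.filter (fun s => h V < h s) with hAdef
  have hAmem : ∀ s, s ∈ A ↔ s ∈ T ∧ h V < h s := by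
    intro s; rw [hAdef, Finset.mem_filter]
  have hAne : A.Nonempty := by
    obtain ⟨s, hsT, hs⟩ := hA
    exact ⟨s, (hAmem s).2 ⟨hsT, hs⟩⟩
  have hAV : ∀ s ∈ A, s ≠ V := by
    intro s hs heq
    have := ((hAmem s).1 hs).2
    rw [heq] at this
    exact lt_irrefl _ this
  set ρ : Vec → ℝ := fun s => (e V - e s) / (h s - h V) with hρ
  have hρpos : ∀ s ∈ A, 0 < ρ s := by
    intro s hs
    obtain ⟨hsT, hsh⟩ := (hAmem s).1 hs
    exact div_pos (by linarith [he s hsT (hAV s hs)]) (by linarith)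
  set t : ℝ := A.inf' hAne ρ with ht
  have htpos : 0 < t := (Finset.lt_inf'_iff hAne).2 hρpos
  set l : Vec →L[ℝ] ℝ := e + t • h with hl
  have hlval : ∀ x, l x = e x + t * h x := fun _ => rfl
  have hbound : ∀ s ∈ T, l s ≤ l V := by
    intro s hsT
    by_cases hsV : s = V
    · rw [hsV]
    by_cases hsA : s ∈ A
    · have h1 : t ≤ ρ s := Finset.inf'_le ρ hsA
      have h2 : 0 < h s - h V := by
        have := ((hAmem s).1 hsA).2; linarith
      rw [hρ] at h1
      rw [le_div_iff₀ h2] at h1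
      rw [hlval, hlval]
      nlinarith
    · have h1 : ¬ h V < h s := fun hc => hsA ((hAmem s).2 ⟨hsT, hc⟩)
      push_neg at h1
      have h2 := he s hsT hsV
      rw [hlval, hlval]
      nlinarith
  have hstrict : ∀ s ∈ T, s ≠ V → s ∉ A → l s < l V := by
    intro s hsT hsV hsA
    have h1 : ¬ h V < h s := fun hc => hsA ((hAmem s).2 ⟨hsT, hc⟩)
    push_neg at h1
    have h2 := he s hsT hsV
    rw [hlval, hlval]
    nlinarith
  -- the new face
  set G : Set Vec := {x ∈ F | ∀ y ∈ F, l y ≤ l x} with hG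
  have hGexpF : IsExposed ℝ F G := fun _ => ⟨l, rfl⟩
  have hFbound : ∀ y ∈ F, l y ≤ l V := by
    intro y hy
    rw [hFhull] at hy
    exact aux_hull_le l hbound hy
  have hVG : V ∈ G := ⟨hVF, hFbound⟩
  -- the minimizing generator b
  obtain ⟨b, hbA, hbmin⟩ := Finset.exists_mem_eq_inf' hAne ρ
  have hbT : b ∈ T := ((hAmem b).1 hbA).1
  have hbh : h V < h b := ((hAmem b).1 hbA).2
  have hbl : l b = l V := by
    have hd : h b - h V ≠ 0 := by linarith
    have hrb : ρ b = t := hbmin.symm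
    rw [hρ] at hrb
    simp only [] at hrb
    rw [div_eq_iff hd] at hrb
    rw [hlval, hlval]
    linarith [hrb]
  have hbG : b ∈ G := ⟨hTF (by exact_mod_cast hbT), fun y hy => (hFbound y hy).trans_eq hbl.symm⟩
  -- s' witnesses G ≠ F and the rank drop
  obtain ⟨s', hs'T, hs'V, hs'h⟩ := hs'
  have hs'A : s' ∉ A := fun hc => hs'h ((hAmem s').1 hc).2
  have hs'F : s' ∈ F := hTF (by exact_mod_cast hs'T)
  have hs'l : l s' < l V := hstrict s' hs'T hs'V hs'A
  have hGval : ∀ x ∈ G, l x = l V := by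
    intro x hx
    exact le_antisymm (hFbound x hx.1) (hx.2 V hVF)
  -- rank drop
  have hGF : G ⊆ F := fun x hx => hx.1
  set N : Submodule ℝ Vec := vectorSpan ℝ F ⊓ LinearMap.ker (l : Vec →ₗ[ℝ] ℝ) with hN
  have hGN : vectorSpan ℝ G ≤ N := by
    rw [hN]
    apply le_inf
    · exact vectorSpan_mono ℝ hGF
    · rw [vectorSpan_def]
      rw [Submodule.span_le]
      rintro u hu
      obtain ⟨x, hx, y, hy, rfl⟩ := hu
      have hx' := hGval x hx
      have hy' := hGval y hy
      simp only [SetLike.mem_coe, LinearMap.mem_ker]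
      show l (x - y) = 0
      rw [map_sub, hx', hy', sub_self]
  have hNlt : N < vectorSpan ℝ F := by
    refine lt_of_le_of_ne inf_le_left ?_
    intro hEq
    have hmem : V - s' ∈ vectorSpan ℝ F := by
      have := vsub_mem_vectorSpan ℝ hVF hs'F
      simpa using this
    rw [← hEq] at hmem
    have : l (V - s') = 0 := by
      have := hmem.2
      simpa using this
    rw [map_sub] at this
    linarith
  refine ⟨G, isExposed_trans hS hP hexp hGexpF, hVG, ?_, b, hbG, hbT, hbh⟩
  calc Module.finrank ℝ ↥(vectorSpan ℝ G) ≤ Module.finrank ℝ ↥N := Submodule.finrank_mono hGN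
    _ < Module.finrank ℝ ↥(vectorSpan ℝ F) := Submodule.finrank_lt_finrank_of_lt hNlt


set_option maxHeartbeats 1000000 in
/-- KEY: if `f` takes a value above `f V` on an exposed face containing the extreme point `V`,
then some edge-neighbor of `V` has `f`-value above `f V`. -/
lemma key_edge {S : Set Vec} (hS : S.Finite) {P : Set Vec} (hP : P = convexHull ℝ S)
    {V : Vec} (hV : V ∈ Set.extremePoints ℝ P) (f : Vec →L[ℝ] ℝ) :
    ∀ (d : ℕ) (F : Set Vec), IsExposed ℝ P F → Module.finrank ℝ ↥(vectorSpan ℝ F) = d →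
      V ∈ F → (∃ x ∈ F, f V < f x) → ∃ Z, EdgeNeighbor P V Z ∧ f V < f Z := by
  classical
  intro d
  induction d using Nat.strong_induction_on with
  | _ d ih =>
  intro F hexp hrank hVF hex
  match d, hrank, ih with
  | 0, hrank, ih =>
    exfalso
    obtain ⟨x, hxF, hfx⟩ := hex
    have hxV : x ≠ V := fun h => by rw [h] at hfx; exact lt_irrefl _ hfx
    have hmem : x - V ∈ vectorSpan ℝ F := by
      simpa using vsub_mem_vectorSpan ℝ hxF hVF
    have hle : Submodule.span ℝ {x - V} ≤ vectorSpan ℝ F :=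
      (Submodule.span_singleton_le_iff_mem _ _).2 hmem
    have h1 := Submodule.finrank_mono hle
    rw [hrank, finrank_span_singleton (sub_ne_zero.2 hxV)] at h1
    omega
  | 1, hrank, ih => exact onedim_edge hS hP hexp hrank hV hVF f hex
  | (k+2), hrank, ih => ?_
  have hT := (hS.inter_of_left F)
  set T : Finset Vec := hT.toFinset with hTdef
  have hTcoe : (↑T : Set Vec) = S ∩ F := hT.coe_toFinset
  have hVS : V ∈ S := by
    rw [hP] at hV
    exact extremePoints_convexHull_subset hV
  have hVT : V ∈ T := by rw [← Finset.mem_coe, hTcoe]; exact ⟨hVS, hVF⟩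
  have hFhull : F = convexHull ℝ (↑T : Set Vec) := by
    rw [hTcoe]
    exact face_eq_hull hS (hP ▸ hexp)
  have hA : ∃ s ∈ T, f V < f s := by
    by_contra hcon
    push_neg at hcon
    obtain ⟨x, hxF, hfx⟩ := hex
    have := aux_hull_le f (fun s hs => hcon s hs) (hFhull ▸ hxF)
    linarith
  by_cases hcase : ∃ s' ∈ T, s' ≠ V ∧ ¬ f V < f s'
  · obtain ⟨G, hGexp, hVG, hlt, b, hbG, hbT, hbf⟩ :=
      descent_face hS hP hexp hV hVF f T hTcoe hA hcase
    rw [hrank] at hlt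
    exact ih _ hlt G hGexp rfl hVG ⟨b, hbG, hbf⟩
  · push_neg at hcase
    -- every generator other than V is above V for f
    have hvs : vectorSpan ℝ F = vectorSpan ℝ (↑T : Set Vec) := by
      rw [hFhull, ← direction_affineSpan, affineSpan_convexHull, direction_affineSpan]
    obtain ⟨s₁, hs₁T, hs₁0⟩ : ∃ s₁ ∈ T, s₁ - V ≠ 0 := by
      by_contra hcon
      push_neg at hcon
      have hsub : (↑T : Set Vec) ⊆ {V} := by
        intro s hs
        have := hcon s hs
        rw [sub_eq_zero] at this
        simp [this]
      have h1 : vectorSpan ℝ (↑T : Set Vec) ≤ vectorSpan ℝ ({V} : Set Vec) :=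
        vectorSpan_mono ℝ hsub
      rw [vectorSpan_singleton] at h1
      have h2 := Submodule.finrank_mono h1
      rw [← hvs, hrank] at h2
      simp at h2
    obtain ⟨s₂, hs₂T, hs₂span⟩ : ∃ s₂ ∈ T, s₂ - V ∉ Submodule.span ℝ {s₁ - V} := by
      by_contra hcon
      push_neg at hcon
      have hle : vectorSpan ℝ (↑T : Set Vec) ≤ Submodule.span ℝ {s₁ - V} := by
        rw [vectorSpan_eq_span_vsub_set_right ℝ (show V ∈ (↑T : Set Vec) from hVT)]
        rw [Submodule.span_le]
        rintro u ⟨s, hs, rfl⟩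
        have := hcon s hs
        simpa using this
      have h1 := Submodule.finrank_mono hle
      rw [← hvs, hrank, finrank_span_singleton hs₁0] at h1
      omega
    obtain ⟨φₗ, hφ0, hφmap⟩ := Submodule.exists_dual_map_eq_bot_of_notMem hs₂span inferInstance
    have hφ1 : φₗ (s₁ - V) = 0 := by
      have hmm : φₗ (s₁ - V) ∈ Submodule.map φₗ (Submodule.span ℝ {s₁ - V}) :=
        Submodule.mem_map_of_mem (Submodule.mem_span_singleton_self _)
      rw [hφmap] at hmm
      simpa using hmm
    set φ : Vec →L[ℝ] ℝ := LinearMap.toContinuousLinearMap φₗ with hφdef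
    have hφapp : ∀ x, φ x = φₗ x := fun x => rfl
    obtain ⟨h, hh2, hh1⟩ : ∃ h : Vec →L[ℝ] ℝ, h V < h s₂ ∧ h s₁ = h V := by
      rcases lt_or_gt_of_ne hφ0 with hneg | hpos
      · refine ⟨-φ, ?_, ?_⟩
        · have : φ s₂ - φ V = φₗ (s₂ - V) := by rw [hφapp, hφapp, ← map_sub]
          simp only [ContinuousLinearMap.neg_apply]
          linarith
        · have : φ s₁ - φ V = φₗ (s₁ - V) := by rw [hφapp, hφapp, ← map_sub]
          simp only [ContinuousLinearMap.neg_apply]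
          linarith
      · refine ⟨φ, ?_, ?_⟩
        · have : φ s₂ - φ V = φₗ (s₂ - V) := by rw [hφapp, hφapp, ← map_sub]
          linarith
        · have : φ s₁ - φ V = φₗ (s₁ - V) := by rw [hφapp, hφapp, ← map_sub]
          linarith
    have hs₁V : s₁ ≠ V := fun hh => hs₁0 (by rw [hh]; simp)
    obtain ⟨G, hGexp, hVG, hlt, b, hbG, hbT, hbh⟩ :=
      descent_face hS hP hexp hV hVF h T hTcoe ⟨s₂, hs₂T, hh2⟩
        ⟨s₁, hs₁T, hs₁V, by rw [hh1]; exact lt_irrefl _⟩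
    have hbV : b ≠ V := fun hh => by rw [hh] at hbh; exact lt_irrefl _ hbh
    have hbf : f V < f b := hcase b hbT hbV
    rw [hrank] at hlt
    exact ih _ hlt G hGexp rfl hVG ⟨b, hbG, hbf⟩


lemma dot_smul_add {n : ℕ} (c : Fin n → ℝ) (r s : ℝ) (x y : Fin n → ℝ) :
    dot c (r • x + s • y) = r * dot c x + s * dot c y := by
  unfold dot
  rw [Finset.mul_sum, Finset.mul_sum, ← Finset.sum_add_distrib]
  apply Finset.sum_congr rfl
  intro i _
  simp only [Pi.add_apply, Pi.smul_apply, smul_eq_mul]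
  ring

lemma dot_mu {n : ℕ} (μ : ℝ) (a E p : Fin n → ℝ) :
    dot (fun i => μ * a i - E i) p = μ * dot a p - dot E p := by
  unfold dot
  rw [Finset.mul_sum, ← Finset.sum_sub_distrib]
  apply Finset.sum_congr rfl
  intro i _
  ring

/-- `dot c ·` as a continuous linear map. -/
noncomputable def dotL {n : ℕ} (c : Fin n → ℝ) : (Fin n → ℝ) →L[ℝ] ℝ :=
  LinearMap.toContinuousLinearMap
    { toFun := fun p => dot c p
      map_add' := by
        intro p q
        unfold dot
        rw [← Finset.sum_add_distrib]
        apply Finset.sum_congr rfl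
        intro i _
        simp only [Pi.add_apply]
        ring
      map_smul' := by
        intro m p
        unfold dot
        simp only [RingHom.id_apply, smul_eq_mul, Finset.mul_sum]
        apply Finset.sum_congr rfl
        intro i _
        simp only [Pi.smul_apply, smul_eq_mul]
        ring }

lemma dotL_apply {n : ℕ} (c p : Fin n → ℝ) : dotL c p = dot c p := rfl


end Aux

open Set in
/-- At a cost-optimal vertex `V` of a polytope, with both target-increasing and
target-decreasing edge-neighbors present, the cost-vs-target gradient towards any point of the
polytope is at least `γ⁺min` if the target increases and at most `γ⁻max` if it decreases, and
`γ⁺min ≥ γ⁻max`. -/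
theorem stmt_6 (n : ℕ) (S : Set (Fin n → ℝ)) (hS : S.Finite)
    (P : Set (Fin n → ℝ)) (hP : P = convexHull ℝ S)
    (a E : Fin n → ℝ)
    (V : Fin n → ℝ) (hV : V ∈ Set.extremePoints ℝ P)
    (hopt : ∀ p ∈ P, dot a p = dot a V → dot E V ≤ dot E p)
    (Nplus Nminus : Set (Fin n → ℝ))
    (hNp : Nplus = {Z | EdgeNeighbor P V Z ∧ dot a V < dot a Z})
    (hNm : Nminus = {Z | EdgeNeighbor P V Z ∧ dot a Z < dot a V})
    (hNpne : Nplus.Nonempty) (hNmne : Nminus.Nonempty)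
    (γp γm : ℝ)
    (hγp : IsLeast ((fun Z => (dot E Z - dot E V) / (dot a Z - dot a V)) '' Nplus) γp)
    (hγm : IsGreatest ((fun Z => (dot E Z - dot E V) / (dot a Z - dot a V)) '' Nminus) γm) :
    (∀ p ∈ P, dot a V < dot a p →
      γp ≤ (dot E p - dot E V) / (dot a p - dot a V)) ∧
    γm ≤ γp ∧
    (∀ p ∈ P, dot a p < dot a V →
      (dot E p - dot E V) / (dot a p - dot a V) ≤ γm) := by
  have hVP : V ∈ P := hV.1
  have hPconv : Convex ℝ P := hP ▸ convex_convexHull ℝ S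
  -- extract the witnessing edge-neighbors
  obtain ⟨Zp, hZpN, hZpval⟩ := hγp.1
  obtain ⟨Zm, hZmN, hZmval⟩ := hγm.1
  rw [hNp, mem_setOf_eq] at hZpN
  rw [hNm, mem_setOf_eq] at hZmN
  have hZpP : Zp ∈ P := extremePoints_subset hZpN.1.1
  have hZmP : Zm ∈ P := extremePoints_subset hZmN.1.1
  have hαpos : 0 < dot a Zp - dot a V := by have := hZpN.2; linarith
  have hβpos : 0 < dot a V - dot a Zm := by have := hZmN.2; linarith
  have hEp : dot E Zp - dot E V = γp * (dot a Zp - dot a V) := by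
    have := hZpval
    simp only [] at this
    rw [div_eq_iff (by linarith : dot a Zp - dot a V ≠ 0)] at this
    linarith [this]
  have hEm : dot E Zm - dot E V = γm * (dot a Zm - dot a V) := by
    have := hZmval
    simp only [] at this
    rw [div_eq_iff (by linarith : dot a Zm - dot a V ≠ 0)] at this
    linarith [this]
  -- (ii) : γm ≤ γp, via the convex combination on the hyperplane
  have hii : γm ≤ γp := by
    set θ : ℝ := (dot a Zp - dot a V) / ((dot a Zp - dot a V) + (dot a V - dot a Zm))
      with hθdef
    have hden : 0 < (dot a Zp - dot a V) + (dot a V - dot a Zm) := by linarith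
    have hθ0 : 0 < θ := div_pos hαpos hden
    have hθ1 : θ < 1 := by
      rw [hθdef, div_lt_one hden]; linarith
    set p₀ : Fin n → ℝ := θ • Zm + (1 - θ) • Zp with hp₀def
    have hp₀P : p₀ ∈ P := hPconv hZmP hZpP (le_of_lt hθ0) (by linarith) (by ring)
    have hθden : θ * ((dot a Zp - dot a V) + (dot a V - dot a Zm)) = dot a Zp - dot a V := by
      rw [hθdef]; field_simp
    have h1 : θ * (dot a V - dot a Zm) = (1 - θ) * (dot a Zp - dot a V) := by
      linear_combination hθden
    have hsa : dot a p₀ = θ * dot a Zm + (1 - θ) * dot a Zp := dot_smul_add a θ (1 - θ) Zm Zp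
    have hse : dot E p₀ = θ * dot E Zm + (1 - θ) * dot E Zp := dot_smul_add E θ (1 - θ) Zm Zp
    have hp₀a : dot a p₀ = dot a V := by rw [hsa]; linear_combination -h1
    have hoptp := hopt p₀ hp₀P hp₀a
    have e1 : dot E p₀ - dot E V = θ * (dot E Zm - dot E V) + (1 - θ) * (dot E Zp - dot E V) := by
      rw [hse]; ring
    have e2 : θ * (dot E Zm - dot E V) = -(γm * ((1 - θ) * (dot a Zp - dot a V))) := by
      rw [hEm]; linear_combination (-γm) * h1
    have e3 : (1 - θ) * (dot E Zp - dot E V) = γp * ((1 - θ) * (dot a Zp - dot a V)) := by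
      rw [hEp]; ring
    have hc : 0 < (1 - θ) * (dot a Zp - dot a V) := mul_pos (by linarith) hαpos
    have hfin : 0 ≤ (γp - γm) * ((1 - θ) * (dot a Zp - dot a V)) := by nlinarith
    by_contra hcc
    push_neg at hcc
    nlinarith [mul_pos hc (by linarith : (0:ℝ) < γm - γp)]
  -- the central bound
  have central : ∀ μ : ℝ, γm ≤ μ → μ ≤ γp →
      ∀ p ∈ P, μ * (dot a p - dot a V) ≤ dot E p - dot E V := by
    intro μ hmμ hμp p hpP
    by_contra hcon
    push_neg at hcon
    set f : (Fin n → ℝ) →L[ℝ] ℝ := dotL (fun i => μ * a i - E i) with hfdef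
    have hfval : ∀ x, f x = μ * dot a x - dot E x := by
      intro x
      rw [hfdef, dotL_apply, dot_mu]
    have hfp : f V < f p := by
      rw [hfval, hfval]
      linarith
    have hPP : IsExposed ℝ P P := fun _ => ⟨0, by ext x; simp⟩
    obtain ⟨Z, hZedge, hfZ⟩ := key_edge hS hP hV f
      (Module.finrank ℝ ↥(vectorSpan ℝ P)) P hPP rfl hVP ⟨p, hpP, hfp⟩
    rw [hfval, hfval] at hfZ
    have hZP : Z ∈ P := extremePoints_subset hZedge.1
    rcases lt_trichotomy (dot a Z) (dot a V) with hlt | heq | hgt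
    · have hZN : Z ∈ Nminus := by rw [hNm]; exact ⟨hZedge, hlt⟩
      have hub := hγm.2 ⟨Z, hZN, rfl⟩
      simp only [] at hub
      rw [div_le_iff_of_neg (by linarith : dot a Z - dot a V < 0)] at hub
      have hmul : μ * (dot a Z - dot a V) ≤ γm * (dot a Z - dot a V) :=
        mul_le_mul_of_nonpos_right hmμ (by linarith)
      linarith
    · rw [heq] at hfZ
      have := hopt Z hZP heq
      linarith
    · have hZN : Z ∈ Nplus := by rw [hNp]; exact ⟨hZedge, hgt⟩
      have hlb := hγp.2 ⟨Z, hZN, rfl⟩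
      simp only [] at hlb
      rw [le_div_iff₀ (by linarith : (0:ℝ) < dot a Z - dot a V)] at hlb
      have hmul : μ * (dot a Z - dot a V) ≤ γp * (dot a Z - dot a V) :=
        mul_le_mul_of_nonneg_right hμp (by linarith)
      linarith
  refine ⟨?_, hii, ?_⟩
  · intro p hpP hlt
    have h := central γp hii le_rfl p hpP
    rw [le_div_iff₀ (by linarith : (0:ℝ) < dot a p - dot a V)]
    linarith
  · intro p hpP hlt
    have h := central γm le_rfl hii p hpP
    rw [div_le_iff_of_neg (by linarith : dot a p - dot a V < 0)]
    linarith
end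

section
/- Let S ⊆ (Fin n → ℝ) be finite, P = convexHull ℝ S, a, E : Fin n → ℝ, and let V be a cost-optimal extreme point of P whose target value is minimal: a·V ≤ a·p for all p ∈ P. Assume the set N₊ of edge-neighbors Z of V with a·Z > a·V is nonempty, with minimal gradient γ⁺min. Then for every p ∈ P with a·p > a·V one has (E·p − E·V)/(a·p − a·V) ≥ γ⁺min. -/
namespace Stmt7

variable {n : ℕ}

lemma dot_add_right (c x y : Fin n → ℝ) : dot c (x + y) = dot c x + dot c y := by
  simp [dot, mul_add, Finset.sum_add_distrib]

lemma dot_smul_right (c : Fin n → ℝ) (r : ℝ) (x : Fin n → ℝ) :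
    dot c (r • x) = r * dot c x := by
  simp only [dot, Pi.smul_apply, smul_eq_mul, Finset.mul_sum]
  exact Finset.sum_congr rfl fun i _ => by ring

lemma dot_isLinear (c : Fin n → ℝ) : IsLinearMap ℝ (dot c) :=
  ⟨dot_add_right c, fun r x => dot_smul_right c r x⟩

/-- `dot c` as a linear map. -/
def dotL (c : Fin n → ℝ) : (Fin n → ℝ) →ₗ[ℝ] ℝ := IsLinearMap.mk' _ (dot_isLinear c)

lemma dotL_apply (c x : Fin n → ℝ) : dotL c x = dot c x := rfl

lemma dot_add_left (c d x : Fin n → ℝ) : dot (c + d) x = dot c x + dot d x := by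
  simp [dot, add_mul, Finset.sum_add_distrib]

lemma dot_smul_left (r : ℝ) (c x : Fin n → ℝ) : dot (r • c) x = r * dot c x := by
  simp only [dot, Pi.smul_apply, smul_eq_mul, Finset.mul_sum]
  exact Finset.sum_congr rfl fun i _ => by ring

lemma dot_sub_left (c d x : Fin n → ℝ) : dot (c - d) x = dot c x - dot d x := by
  simp [dot, sub_mul, Finset.sum_sub_distrib]

lemma dot_zero_left (x : Fin n → ℝ) : dot (0 : Fin n → ℝ) x = 0 := by simp [dot]

lemma dot_neg_left (c x : Fin n → ℝ) : dot (-c) x = -dot c x := by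
  simp [dot, Finset.sum_neg_distrib]

lemma dot_sub_right (c x y : Fin n → ℝ) : dot c (x - y) = dot c x - dot c y := by
  simp [dot, mul_sub, Finset.sum_sub_distrib]

lemma dot_self_pos {u : Fin n → ℝ} (hu : u ≠ 0) : 0 < dot u u := by
  have : ∃ i, u i ≠ 0 := by
    by_contra h; push_neg at h; exact hu (funext h)
  obtain ⟨i, hi⟩ := this
  have : (0:ℝ) < u i * u i := mul_self_pos.2 hi
  refine Finset.sum_pos' (fun j _ => mul_self_nonneg _) ⟨i, Finset.mem_univ i, this⟩

lemma dot_le_on_hull {A : Set (Fin n → ℝ)} {c : Fin n → ℝ} {M : ℝ}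
    (h : ∀ s ∈ A, dot c s ≤ M) {x : Fin n → ℝ} (hx : x ∈ convexHull ℝ A) : dot c x ≤ M :=
  convexHull_min h (convex_halfSpace_le (dot_isLinear c) M) hx

lemma face_subset_hull_argmax (A : Finset (Fin n → ℝ)) {c : Fin n → ℝ} {M : ℝ}
    (hub : ∀ s ∈ A, dot c s ≤ M) {x : Fin n → ℝ}
    (hx : x ∈ convexHull ℝ (↑A : Set (Fin n → ℝ))) (hxM : dot c x = M) :
    x ∈ convexHull ℝ (↑(A.filter (fun s => dot c s = M)) : Set (Fin n → ℝ)) := by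
  rw [Finset.convexHull_eq] at hx
  obtain ⟨w, hw0, hw1, hcm⟩ := hx
  rw [Finset.centerMass_eq_of_sum_1 _ _ hw1] at hcm
  have hdot : dot c x = ∑ y ∈ A, w y * dot c y := by
    rw [← hcm, ← dotL_apply, map_sum]
    exact Finset.sum_congr rfl fun y _ => by rw [map_smul]; rfl
  have hzero : ∀ y ∈ A, w y * (M - dot c y) = 0 := by
    have hsum : ∑ y ∈ A, w y * (M - dot c y) = 0 := by
      have : ∑ y ∈ A, w y * (M - dot c y) = M * (∑ y ∈ A, w y) - ∑ y ∈ A, w y * dot c y := by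
        rw [Finset.mul_sum, ← Finset.sum_sub_distrib]
        exact Finset.sum_congr rfl fun y _ => by ring
      rw [this, hw1, ← hdot, hxM]; ring
    intro y hy
    have := (Finset.sum_eq_zero_iff_of_nonneg (fun y hy =>
      mul_nonneg (hw0 y hy) (sub_nonneg.2 (hub y hy)))).1 hsum
    exact this y hy
  set B := A.filter (fun s => dot c s = M) with hB
  have hwz : ∀ y ∈ A, y ∉ B → w y = 0 := by
    intro y hy hyB
    have hne : dot c y ≠ M := fun h => hyB (Finset.mem_filter.2 ⟨hy, h⟩)
    rcases mul_eq_zero.1 (hzero y hy) with h | h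
    · exact h
    · exact absurd (by linarith [sub_eq_zero.1 h] : dot c y = M) hne
  have hsumB : ∑ y ∈ B, w y = 1 := by
    rw [← hw1]
    exact Finset.sum_subset (Finset.filter_subset _ _) (fun y hy hyB => hwz y hy hyB)
  have hxB : ∑ y ∈ B, w y • y = x := by
    rw [← hcm]
    exact Finset.sum_subset (Finset.filter_subset _ _) (fun y hy hyB => by
      rw [hwz y hy hyB, zero_smul])
  rw [Finset.convexHull_eq]
  exact ⟨w, fun y hy => hw0 y (Finset.filter_subset _ _ hy), hsumB, by
    rw [Finset.centerMass_eq_of_sum_1 _ _ hsumB]; exact hxB⟩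


lemma rotation (A : Finset (Fin n → ℝ)) (V m w : Fin n → ℝ) (hV : V ∈ A)
    (hm : ∀ s ∈ A, s ≠ V → dot m s < dot m V)
    (hw : ∃ s ∈ A, dot w V < dot w s) :
    ∃ f : Fin n → ℝ, (∀ s ∈ A, dot f s ≤ dot f V) ∧
      (∃ s ∈ A, s ≠ V ∧ dot f s = dot f V) ∧
      (∀ s ∈ A, dot f s = dot f V → s ≠ V → dot w V < dot w s) ∧
      (∀ s₁ ∈ A, ∀ s₂ ∈ A, dot f s₁ = dot f V → dot f s₂ = dot f V → s₁ ≠ V → s₂ ≠ V →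
        (dot w s₁ - dot w V) * (dot m V - dot m s₂)
          = (dot w s₂ - dot w V) * (dot m V - dot m s₁)) := by
  classical
  set Ap := A.filter (fun s => dot w V < dot w s) with hAp
  obtain ⟨s₀, hs₀A, hs₀⟩ := hw
  have hApne : Ap.Nonempty := ⟨s₀, Finset.mem_filter.2 ⟨hs₀A, hs₀⟩⟩
  have hApV : ∀ s ∈ Ap, s ≠ V := by
    intro s hs h
    have := (Finset.mem_filter.1 hs).2
    rw [h] at this; exact lt_irrefl _ this
  set σ : (Fin n → ℝ) → ℝ := fun s => (dot w s - dot w V) / (dot m V - dot m s) with hσ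
  set σm := Ap.sup' hApne σ with hσm
  obtain ⟨sm, hsmAp, hsmeq⟩ := Finset.exists_mem_eq_sup' hApne σ
  have hd : ∀ s ∈ A, s ≠ V → 0 < dot m V - dot m s := by
    intro s hs hse; exact sub_pos.2 (hm s hs hse)
  have hσpos : 0 < σm := by
    rw [hσm, hsmeq]
    have h1 := (Finset.mem_filter.1 hsmAp).2
    exact div_pos (sub_pos.2 h1) (hd sm (Finset.mem_filter.1 hsmAp).1 (hApV sm hsmAp))
  refine ⟨w + σm • m, ?_, ?_, ?_, ?_⟩
  · intro s hs
    by_cases hse : s = V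
    · subst hse; exact le_refl _
    · have hds := hd s hs hse
      rw [dot_add_left, dot_add_left, dot_smul_left, dot_smul_left]
      by_cases hsp : s ∈ Ap
      · have : σ s ≤ σm := Finset.le_sup' σ hsp
        have := (div_le_iff₀ hds).1 this
        nlinarith
      · have : ¬ dot w V < dot w s := fun h => hsp (Finset.mem_filter.2 ⟨hs, h⟩)
        push_neg at this
        nlinarith
  · refine ⟨sm, (Finset.mem_filter.1 hsmAp).1, hApV sm hsmAp, ?_⟩
    have hds := hd sm (Finset.mem_filter.1 hsmAp).1 (hApV sm hsmAp)
    have : σ sm = σm := hsmeq.symm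
    rw [hσ] at this
    have heq : dot w sm - dot w V = σm * (dot m V - dot m sm) := by
      field_simp at this; linarith
    rw [dot_add_left, dot_add_left, dot_smul_left, dot_smul_left]
    linarith
  · intro s hs heq hse
    have hds := hd s hs hse
    rw [dot_add_left, dot_add_left, dot_smul_left, dot_smul_left] at heq
    have : dot w s - dot w V = σm * (dot m V - dot m s) := by linarith
    nlinarith
  · intro s₁ h₁ s₂ h₂ he₁ he₂ hv₁ hv₂
    have hd₁ := hd s₁ h₁ hv₁
    have hd₂ := hd s₂ h₂ hv₂
    rw [dot_add_left, dot_add_left, dot_smul_left, dot_smul_left] at he₁ he₂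
    have e₁ : dot w s₁ - dot w V = σm * (dot m V - dot m s₁) := by linarith
    have e₂ : dot w s₂ - dot w V = σm * (dot m V - dot m s₂) := by linarith
    rw [e₁, e₂]; ring

lemma compose (A : Finset (Fin n → ℝ)) (V f c : Fin n → ℝ) (hV : V ∈ A)
    (hf : ∀ s ∈ A, dot f s ≤ dot f V)
    (hc : ∀ s ∈ A, dot f s = dot f V → dot c s ≤ dot c V) :
    ∃ F : Fin n → ℝ, (∀ s ∈ A, dot F s ≤ dot F V) ∧
      ∀ s ∈ A, (dot F s = dot F V ↔ (dot f s = dot f V ∧ dot c s = dot c V)) := by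
  classical
  set D := A.filter (fun s => dot f s ≠ dot f V) with hD
  set G := insert (1:ℝ) (D.image (fun s => dot f V - dot f s)) with hG
  have hGne : G.Nonempty := ⟨1, Finset.mem_insert_self _ _⟩
  set δ := G.min' hGne with hδ
  have hδpos : 0 < δ := by
    rw [hδ, Finset.lt_min'_iff]
    intro g hg
    rcases Finset.mem_insert.1 hg with h | h
    · rw [h]; norm_num
    · obtain ⟨s, hsD, rfl⟩ := Finset.mem_image.1 h
      have hsA := (Finset.mem_filter.1 hsD).1
      have hne := (Finset.mem_filter.1 hsD).2
      rcases lt_or_eq_of_le (hf s hsA) with h' | h'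
      · linarith
      · exact absurd h' hne
  have hRne : (A.image (fun s => |dot c s - dot c V|)).Nonempty :=
    ⟨|dot c V - dot c V|, Finset.mem_image.2 ⟨V, hV, rfl⟩⟩
  set R := (A.image (fun s => |dot c s - dot c V|)).max' hRne with hR
  have hRb : ∀ s ∈ A, |dot c s - dot c V| ≤ R := fun s hs => by
    rw [hR]
    exact Finset.le_max' (A.image fun s => |dot c s - dot c V|) _ (Finset.mem_image.2 ⟨s, hs, rfl⟩)
  have hRnn : 0 ≤ R := le_trans (abs_nonneg _) (hRb V hV)
  set ε := δ / (2 * (R + 1)) with hε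
  have hεpos : 0 < ε := div_pos hδpos (by linarith)
  have hstrict : ∀ s ∈ A, dot f s ≠ dot f V →
      dot f s + ε * dot c s < dot f V + ε * dot c V := by
    intro s hs hfe
    have hgap : δ ≤ dot f V - dot f s := by
      rw [hδ]
      exact Finset.min'_le _ _ (Finset.mem_insert_of_mem
        (Finset.mem_image.2 ⟨s, Finset.mem_filter.2 ⟨hs, hfe⟩, rfl⟩))
    have hcb := (abs_le.1 (hRb s hs)).2
    have hcb2 := (abs_le.1 (hRb s hs)).1
    have h2 : ε * R < δ := by
      rw [hε, div_mul_eq_mul_div, div_lt_iff₀ (by linarith : (0:ℝ) < 2*(R+1))]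
      nlinarith
    nlinarith
  refine ⟨f + ε • c, ?_, ?_⟩
  · intro s hs
    rw [dot_add_left, dot_add_left, dot_smul_left, dot_smul_left]
    by_cases hfe : dot f s = dot f V
    · have := hc s hs hfe; rw [hfe]; nlinarith
    · exact le_of_lt (hstrict s hs hfe)
  · intro s hs
    rw [dot_add_left, dot_add_left, dot_smul_left, dot_smul_left]
    constructor
    · intro h
      by_cases hfe : dot f s = dot f V
      · refine ⟨hfe, mul_left_cancel₀ (ne_of_gt hεpos) ?_⟩
        rw [hfe] at h; linarith
      · exact absurd h (ne_of_lt (hstrict s hs hfe))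
    · rintro ⟨h1, h2⟩; rw [h1, h2]


lemma dot_pair_right (c x y : Fin n → ℝ) (α β : ℝ) :
    dot c (α • x + β • y) = α * dot c x + β * dot c y := by
  rw [dot_add_right, dot_smul_right, dot_smul_right]

lemma exists_exposing (A : Finset (Fin n → ℝ)) (V : Fin n → ℝ)
    (hV : V ∉ convexHull ℝ (↑(A.erase V) : Set (Fin n → ℝ))) :
    ∃ m : Fin n → ℝ, ∀ s ∈ A, s ≠ V → dot m s < dot m V := by
  have hcl : IsClosed (convexHull ℝ (↑(A.erase V) : Set (Fin n → ℝ))) :=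
    (A.erase V).finite_toSet.isClosed_convexHull (𝕜 := ℝ)
  obtain ⟨l, u, hlV, hl⟩ := geometric_hahn_banach_point_closed (convex_convexHull ℝ _) hcl hV
  have key : ∀ x : Fin n → ℝ, dot (fun i => -(l (Pi.single i 1))) x = -(l x) := by
    intro x
    have hrep : l x = ∑ i, x i * l (Pi.single i 1) := by
      conv_lhs => rw [← Finset.univ_sum_single x]
      rw [map_sum]
      refine Finset.sum_congr rfl fun i _ => ?_
      have h1 : (Pi.single i (x i) : Fin n → ℝ) = x i • (Pi.single i 1 : Fin n → ℝ) := by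
        funext j
        by_cases h : j = i <;> simp [Pi.single_apply, h]
      rw [h1, map_smul, smul_eq_mul]
    rw [dot, hrep, ← Finset.sum_neg_distrib]
    exact Finset.sum_congr rfl fun i _ => by ring
  refine ⟨fun i => -(l (Pi.single i 1)), fun s hs hsV => ?_⟩
  have hsl : u < l s := hl s (subset_convexHull ℝ _
    (Finset.mem_coe.2 (Finset.mem_erase.2 ⟨hsV, hs⟩)))
  rw [key, key]; linarith

lemma mainLemma (N : ℕ) : ∀ (A : Finset (Fin n → ℝ)) (V g : Fin n → ℝ),
    A.card ≤ N → V ∈ A →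
    V ∉ convexHull ℝ (↑(A.erase V) : Set (Fin n → ℝ)) →
    (∀ s ∈ A, dot g V ≤ dot g s) →
    (∃ s ∈ A, dot g V < dot g s) →
    ∃ Z ∈ A, dot g V < dot g Z ∧ ∃ c : Fin n → ℝ,
      (∀ s ∈ A, dot c s ≤ dot c V) ∧ dot c Z = dot c V ∧
      (∀ s ∈ A, dot c s = dot c V → s ∈ segment ℝ V Z) := by
  induction N with
  | zero =>
    intro A V g hcard hV _ _ _
    rw [Nat.le_zero, Finset.card_eq_zero] at hcard
    subst hcard; simp at hV
  | succ N ih =>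
    intro A V g hcard hVA herase hg1 hg2
    classical
    by_cases hseg : ∃ Z ∈ A, (↑A : Set (Fin n → ℝ)) ⊆ segment ℝ V Z
    · obtain ⟨Z, hZA, hsub⟩ := hseg
      obtain ⟨s₀, hs₀A, hs₀⟩ := hg2
      obtain ⟨u, v, hu, hv, huv, hx⟩ := hsub (Finset.mem_coe.2 hs₀A)
      have hgs : dot g s₀ = u * dot g V + v * dot g Z := by
        rw [← hx, dot_pair_right]
      have hu1 : u = 1 - v := by linarith
      rw [hu1] at hgs
      have h1 : dot g s₀ - dot g V = v * (dot g Z - dot g V) := by linear_combination hgs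
      have hgZ : dot g V < dot g Z := by nlinarith
      refine ⟨Z, hZA, hgZ, 0, fun s _ => ?_, ?_, fun s hs _ => hsub (Finset.mem_coe.2 hs)⟩
      · rw [dot_zero_left, dot_zero_left]
      · rw [dot_zero_left, dot_zero_left]
    · obtain ⟨m, hm⟩ := exists_exposing A V herase
      -- helper to finish from a strictly smaller exposed sub-face
      have key : ∀ f' : Fin n → ℝ, (∀ s ∈ A, dot f' s ≤ dot f' V) →
          (A.filter (fun s => dot f' s = dot f' V)).card ≤ N →
          (∃ s ∈ A.filter (fun s => dot f' s = dot f' V), dot g V < dot g s) →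
          ∃ Z ∈ A, dot g V < dot g Z ∧ ∃ c : Fin n → ℝ,
            (∀ s ∈ A, dot c s ≤ dot c V) ∧ dot c Z = dot c V ∧
            (∀ s ∈ A, dot c s = dot c V → s ∈ segment ℝ V Z) := by
        intro f' hub hcard' hgB2
        set B' := A.filter (fun s => dot f' s = dot f' V) with hB'
        have hVB' : V ∈ B' := Finset.mem_filter.2 ⟨hVA, rfl⟩
        have herase' : V ∉ convexHull ℝ (↑(B'.erase V) : Set (Fin n → ℝ)) := fun h =>
          herase (convexHull_mono (Finset.coe_subset.2
            (Finset.erase_subset_erase V (Finset.filter_subset _ _))) h)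
        have hg1' : ∀ s ∈ B', dot g V ≤ dot g s := fun s hs =>
          hg1 s (Finset.filter_subset _ _ hs)
        obtain ⟨Z, hZB', hgZ, c, hc1, hc2, hc3⟩ := ih B' V g hcard' hVB' herase' hg1' hgB2
        obtain ⟨F, hF1, hF2⟩ := compose A V f' c hVA hub
          (fun s hs hfe => hc1 s (Finset.mem_filter.2 ⟨hs, hfe⟩))
        refine ⟨Z, Finset.filter_subset _ _ hZB', hgZ, F, hF1, ?_, ?_⟩
        · exact (hF2 Z (Finset.filter_subset _ _ hZB')).2 ⟨(Finset.mem_filter.1 hZB').2, hc2⟩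
        · intro s hs hFe
          obtain ⟨hfe, hce⟩ := (hF2 s hs).1 hFe
          exact hc3 s (Finset.mem_filter.2 ⟨hs, hfe⟩) hce
      obtain ⟨f, hf1, hf2, hf3, hf4⟩ := rotation A V m g hVA hm hg2
      by_cases hBA : A.filter (fun s => dot f s = dot f V) = A
      · -- degenerate case: every other point is g-increasing
        have hallg : ∀ s ∈ A, s ≠ V → dot g V < dot g s := by
          intro s hs hsV
          have hsB : s ∈ A.filter (fun s => dot f s = dot f V) := by rw [hBA]; exact hs
          exact hf3 s hs (Finset.mem_filter.1 hsB).2 hsV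
        have hpair : ∃ s₁ ∈ A, ∃ s₂ ∈ A, s₁ ≠ V ∧ s₂ ≠ V ∧
            (dot m V - dot m s₂) • (s₁ - V) - (dot m V - dot m s₁) • (s₂ - V) ≠ 0 := by
          by_contra hno
          push_neg at hno
          apply hseg
          obtain ⟨s₀, hs₀A, hs₀⟩ := hg2
          have hs₀V : s₀ ≠ V := fun h => by rw [h] at hs₀; exact lt_irrefl _ hs₀
          have hAe : (A.erase V).Nonempty := ⟨s₀, Finset.mem_erase.2 ⟨hs₀V, hs₀A⟩⟩
          obtain ⟨Z, hZe, hZmax⟩ :=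
            Finset.exists_max_image (A.erase V) (fun s => dot m V - dot m s) hAe
          have hZA := (Finset.mem_erase.1 hZe).2
          have hZV := (Finset.mem_erase.1 hZe).1
          refine ⟨Z, hZA, fun x hx => ?_⟩
          rcases eq_or_ne x V with rfl | hxV
          · exact left_mem_segment ℝ _ _
          · have hxA := Finset.mem_coe.1 hx
            have hwx : 0 < dot m V - dot m x := sub_pos.2 (hm x hxA hxV)
            have hwz : 0 < dot m V - dot m Z := sub_pos.2 (hm Z hZA hZV)
            have hle : dot m V - dot m x ≤ dot m V - dot m Z :=
              hZmax x (Finset.mem_erase.2 ⟨hxV, hxA⟩)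
            have heq : (dot m V - dot m Z) • (x - V) = (dot m V - dot m x) • (Z - V) := by
              have h0 := hno x hxA Z hZA hxV hZV
              rwa [sub_eq_zero] at h0
            set wx := dot m V - dot m x
            set wz := dot m V - dot m Z
            have ht0 : 0 ≤ wx / wz := le_of_lt (div_pos hwx hwz)
            have ht1 : wx / wz ≤ 1 := (div_le_one hwz).2 hle
            refine ⟨1 - wx / wz, wx / wz, by linarith, ht0, by ring, ?_⟩
            have hx' : x - V = (wx / wz) • (Z - V) := by
              have h2 : (wz⁻¹ * wz) • (x - V) = (wz⁻¹ * wx) • (Z - V) := by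
                rw [mul_smul, mul_smul, heq]
              rw [inv_mul_cancel₀ (ne_of_gt hwz), one_smul] at h2
              rw [h2, div_eq_inv_mul]
            have hx2 : x = (wx/wz) • (Z - V) + V := sub_eq_iff_eq_add.1 hx'
            rw [hx2, sub_smul, one_smul, smul_sub]; abel
        obtain ⟨s₁, h₁A, s₂, h₂A, h₁V, h₂V, hune⟩ := hpair
        set u := (dot m V - dot m s₂) • (s₁ - V) - (dot m V - dot m s₁) • (s₂ - V) with hudef
        have hcross : dot u u = (dot m V - dot m s₂) * (dot u s₁ - dot u V)
            - (dot m V - dot m s₁) * (dot u s₂ - dot u V) := by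
          calc dot u u
              = dot u ((dot m V - dot m s₂) • (s₁ - V) - (dot m V - dot m s₁) • (s₂ - V)) := by
                rw [← hudef]
            _ = _ := by
                rw [dot_sub_right, dot_smul_right, dot_smul_right, dot_sub_right, dot_sub_right]
        have hupos : 0 < dot u u := dot_self_pos hune
        have hex : (∃ s ∈ A, dot u V < dot u s) ∨ (∃ s ∈ A, dot (-u) V < dot (-u) s) := by
          by_contra hcon
          push_neg at hcon
          obtain ⟨hcon1, hcon2⟩ := hcon
          have e₁ : dot u s₁ = dot u V := by
            have ha := hcon1 s₁ h₁A
            have hb := hcon2 s₁ h₁A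
            rw [dot_neg_left, dot_neg_left] at hb
            linarith
          have e₂ : dot u s₂ = dot u V := by
            have ha := hcon1 s₂ h₂A
            have hb := hcon2 s₂ h₂A
            rw [dot_neg_left, dot_neg_left] at hb
            linarith
          rw [e₁, e₂] at hcross
          simp at hcross
          linarith
        have main2 : ∀ h : Fin n → ℝ, (∃ s ∈ A, dot h V < dot h s) →
            ((dot m V - dot m s₂) * (dot h s₁ - dot h V)
              ≠ (dot m V - dot m s₁) * (dot h s₂ - dot h V)) →
            ∃ Z ∈ A, dot g V < dot g Z ∧ ∃ c : Fin n → ℝ,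
              (∀ s ∈ A, dot c s ≤ dot c V) ∧ dot c Z = dot c V ∧
              (∀ s ∈ A, dot c s = dot c V → s ∈ segment ℝ V Z) := by
          intro h hhex hhne
          obtain ⟨f₂, h2f1, h2f2, _h2f3, h2f4⟩ := rotation A V m h hVA hm hhex
          have hBne : A.filter (fun s => dot f₂ s = dot f₂ V) ≠ A := by
            intro hBA2
            have he₁ : dot f₂ s₁ = dot f₂ V := by
              have : s₁ ∈ A.filter (fun s => dot f₂ s = dot f₂ V) := by rw [hBA2]; exact h₁A
              exact (Finset.mem_filter.1 this).2
            have he₂ : dot f₂ s₂ = dot f₂ V := by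
              have : s₂ ∈ A.filter (fun s => dot f₂ s = dot f₂ V) := by rw [hBA2]; exact h₂A
              exact (Finset.mem_filter.1 this).2
            have := h2f4 s₁ h₁A s₂ h₂A he₁ he₂ h₁V h₂V
            exact hhne (by linarith)
          have hcard2 : (A.filter (fun s => dot f₂ s = dot f₂ V)).card ≤ N := by
            have hlt : (A.filter (fun s => dot f₂ s = dot f₂ V)).card < A.card :=
              Finset.card_lt_card (Finset.ssubset_iff_subset_ne.2
                ⟨Finset.filter_subset _ _, hBne⟩)
            omega
          apply key f₂ h2f1 hcard2
          obtain ⟨s, hsA, hsV, hse⟩ := h2f2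
          exact ⟨s, Finset.mem_filter.2 ⟨hsA, hse⟩, hallg s hsA hsV⟩
        rcases hex with hu1 | hu2
        · refine main2 u hu1 (fun hh => ?_)
          rw [hcross] at hupos; linarith
        · refine main2 (-u) hu2 (fun hh => ?_)
          rw [dot_neg_left, dot_neg_left, dot_neg_left] at hh
          rw [hcross] at hupos
          have : (dot m V - dot m s₂) * (dot u s₁ - dot u V)
              = (dot m V - dot m s₁) * (dot u s₂ - dot u V) := by linarith
          linarith
      · -- nondegenerate: the rotated face is strictly smaller
        have hcard2 : (A.filter (fun s => dot f s = dot f V)).card ≤ N := by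
          have hlt : (A.filter (fun s => dot f s = dot f V)).card < A.card :=
            Finset.card_lt_card (Finset.ssubset_iff_subset_ne.2
              ⟨Finset.filter_subset _ _, hBA⟩)
          omega
        apply key f hf1 hcard2
        obtain ⟨s, hsA, hsV, hse⟩ := hf2
        exact ⟨s, Finset.mem_filter.2 ⟨hsA, hse⟩, hf3 s hsA hse hsV⟩



end Stmt7

set_option maxHeartbeats 2000000

/-- At a cost-optimal vertex `V` of minimal target value, the cost-vs-target
gradient towards any point of the polytope with larger target value is at least `γ⁺min`, the
minimal gradient over target-increasing edge-neighbors. -/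
theorem stmt_7 (n : ℕ) (S : Set (Fin n → ℝ)) (hS : S.Finite)
    (P : Set (Fin n → ℝ)) (hP : P = convexHull ℝ S)
    (a E : Fin n → ℝ)
    (V : Fin n → ℝ) (hV : V ∈ Set.extremePoints ℝ P)
    (hopt : ∀ p ∈ P, dot a p = dot a V → dot E V ≤ dot E p)
    (hmin : ∀ p ∈ P, dot a V ≤ dot a p)
    (Nplus : Set (Fin n → ℝ))
    (hNp : Nplus = {Z | EdgeNeighbor P V Z ∧ dot a V < dot a Z})
    (hNpne : Nplus.Nonempty)
    (γp : ℝ)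
    (hγp : IsLeast ((fun Z => (dot E Z - dot E V) / (dot a Z - dot a V)) '' Nplus) γp) :
    ∀ p ∈ P, dot a V < dot a p →
      γp ≤ (dot E p - dot E V) / (dot a p - dot a V) := by
  classical
  open Stmt7 in
  intro p hp hap
  have hPc : Convex ℝ P := hP ▸ convex_convexHull ℝ S
  set Sf := hS.toFinset with hSf
  have hcoe : (↑Sf : Set (Fin n → ℝ)) = S := hS.coe_toFinset
  have hPf : P = convexHull ℝ (↑Sf : Set (Fin n → ℝ)) := by rw [hcoe, hP]
  have hVS : V ∈ S := by
    rw [hP] at hV; exact extremePoints_convexHull_subset hV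
  have hVSf : V ∈ Sf := by rw [hSf, Set.Finite.mem_toFinset]; exact hVS
  have hsub : ∀ s ∈ Sf, s ∈ P := fun s hs => by
    rw [hPf]; exact subset_convexHull ℝ _ (Finset.mem_coe.2 hs)
  set Sp := Sf.filter (fun s => dot a V < dot a s) with hSp
  have hSpne : Sp.Nonempty := by
    by_contra hne
    rw [Finset.not_nonempty_iff_eq_empty] at hne
    have hall : ∀ s ∈ Sf, dot a s ≤ dot a V := by
      intro s hs
      by_contra h
      push_neg at h
      have hmem : s ∈ Sp := Finset.mem_filter.2 ⟨hs, h⟩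
      rw [hne] at hmem; simp at hmem
    have := dot_le_on_hull (fun s hs => hall s (Finset.mem_coe.1 hs)) (hPf ▸ hp)
    linarith
  set β := Sp.inf' hSpne (fun s => (dot E s - dot E V) / (dot a s - dot a V)) with hβ
  set c₀ := β • a - E with hc₀def
  have hc₀ : ∀ x, dot c₀ x = β * dot a x - dot E x := fun x => by
    rw [hc₀def, dot_sub_left, dot_smul_left]
  have hub₀ : ∀ s ∈ Sf, dot c₀ s ≤ dot c₀ V := by
    intro s hs
    rw [hc₀, hc₀]
    rcases lt_or_eq_of_le (hmin s (hsub s hs)) with hlt | heq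
    · have hmem : s ∈ Sp := Finset.mem_filter.2 ⟨hs, hlt⟩
      have hble : β ≤ (dot E s - dot E V) / (dot a s - dot a V) := by
        rw [hβ]; exact Finset.inf'_le _ hmem
      have hd : 0 < dot a s - dot a V := sub_pos.2 hlt
      have h1 : β * (dot a s - dot a V) ≤ dot E s - dot E V := by
        calc β * (dot a s - dot a V)
            ≤ ((dot E s - dot E V) / (dot a s - dot a V)) * (dot a s - dot a V) :=
              mul_le_mul_of_nonneg_right hble (le_of_lt hd)
          _ = dot E s - dot E V := by field_simp
      nlinarith
    · have h2 := hopt s (hsub s hs) heq.symm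
      rw [← heq]
      nlinarith
  have hc0p : dot c₀ p ≤ dot c₀ V :=
    dot_le_on_hull (fun s hs => hub₀ s (Finset.mem_coe.1 hs)) (hPf ▸ hp)
  have stepA : β ≤ (dot E p - dot E V) / (dot a p - dot a V) := by
    rw [hc₀, hc₀] at hc0p
    rw [le_div_iff₀ (sub_pos.2 hap)]
    nlinarith
  -- Step B : γp ≤ β, by constructing an edge-neighbor of gradient β
  suffices hB : γp ≤ β by linarith
  set S0 := Sf.filter (fun s => dot c₀ s = dot c₀ V) with hS0
  have hVS0 : V ∈ S0 := Finset.mem_filter.2 ⟨hVSf, rfl⟩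
  obtain ⟨sm, hsmSp, hsmeq⟩ :=
    Finset.exists_mem_eq_inf' hSpne (fun s => (dot E s - dot E V) / (dot a s - dot a V))
  have hsmA : sm ∈ Sf := (Finset.mem_filter.1 hsmSp).1
  have hsma : dot a V < dot a sm := (Finset.mem_filter.1 hsmSp).2
  have hsmS0 : sm ∈ S0 := by
    refine Finset.mem_filter.2 ⟨hsmA, ?_⟩
    rw [hc₀, hc₀]
    have hd : dot a sm - dot a V ≠ 0 := ne_of_gt (sub_pos.2 hsma)
    have hbeq : β = (dot E sm - dot E V) / (dot a sm - dot a V) := by rw [hβ]; exact hsmeq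
    have h2 := (eq_div_iff hd).1 hbeq
    nlinarith
  have hVext : V ∉ convexHull ℝ (P \ {V}) :=
    (Set.mem_diff _).1 ((hPc.mem_extremePoints_iff_mem_diff_convexHull_diff).1 hV) |>.2
  have herase : V ∉ convexHull ℝ (↑(S0.erase V) : Set (Fin n → ℝ)) := by
    intro h
    refine hVext (convexHull_mono ?_ h)
    intro s hs
    have hs' := Finset.mem_coe.1 hs
    exact ⟨hsub s (Finset.filter_subset _ _ (Finset.mem_erase.1 hs').2),
      (Finset.mem_erase.1 hs').1⟩
  obtain ⟨Z, hZS0, haZ, c, hc1, hc2, hc3⟩ :=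
    Stmt7.mainLemma S0.card S0 V a le_rfl hVS0 herase
      (fun s hs => hmin s (hsub s (Finset.filter_subset _ _ hs))) ⟨sm, hsmS0, hsma⟩
  obtain ⟨F, hF1, hF2⟩ := Stmt7.compose Sf V c₀ c hVSf hub₀
    (fun s hs hfe => hc1 s (Finset.mem_filter.2 ⟨hs, hfe⟩))
  have hZSf : Z ∈ Sf := Finset.filter_subset _ _ hZS0
  have hZS : Z ∈ S := by rwa [hSf, Set.Finite.mem_toFinset] at hZSf
  have hZV : Z ≠ V := fun h => by rw [h] at haZ; exact lt_irrefl _ haZ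
  have hFZ : dot F Z = dot F V := (hF2 Z hZSf).2 ⟨(Finset.mem_filter.1 hZS0).2, hc2⟩
  set l := LinearMap.toContinuousLinearMap (Stmt7.dotL F) with hldef
  have hl : ∀ x, l x = dot F x := fun x => by
    rw [hldef, LinearMap.coe_toContinuousLinearMap']; rfl
  have hsegP : segment ℝ V Z ⊆ P := by
    rw [← convexHull_pair, hP]
    exact convexHull_mono (Set.insert_subset_iff.2 ⟨hVS, Set.singleton_subset_iff.2 hZS⟩)
  have hface : {x ∈ P | ∀ y ∈ P, l y ≤ l x} = segment ℝ V Z := by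
    apply Set.Subset.antisymm
    · rintro x ⟨hxP, hxmax⟩
      have hxle : dot F x ≤ dot F V :=
        dot_le_on_hull (fun s hs => hF1 s (Finset.mem_coe.1 hs)) (hPf ▸ hxP)
      have hxge : dot F V ≤ dot F x := by
        have := hxmax V (hsub V hVSf); rwa [hl, hl] at this
      have hxeq : dot F x = dot F V := le_antisymm hxle hxge
      have hmem := Stmt7.face_subset_hull_argmax Sf hF1 (hPf ▸ hxP) hxeq
      refine convexHull_min ?_ (convex_segment V Z) hmem
      intro s hs
      have hs' := Finset.mem_coe.1 hs
      have hsSf := (Finset.mem_filter.1 hs').1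
      have h2 := (hF2 s hsSf).1 (Finset.mem_filter.1 hs').2
      exact hc3 s (Finset.mem_filter.2 ⟨hsSf, h2.1⟩) h2.2
    · intro x hx
      have hxP : x ∈ P := hsegP hx
      obtain ⟨u, v, hu, hv, huv, hxe⟩ := hx
      refine ⟨hxP, fun y hy => ?_⟩
      have h1 : dot F x = dot F V := by
        rw [← hxe, Stmt7.dot_pair_right, hFZ]
        linear_combination dot F V * huv
      rw [hl, hl, h1]
      exact dot_le_on_hull (fun s hs => hF1 s (Finset.mem_coe.1 hs)) (hPf ▸ hy)
  have hexp : IsExposed ℝ P (segment ℝ V Z) := fun _ => ⟨l, hface.symm⟩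
  have hrank : Module.finrank ℝ ↥(vectorSpan ℝ (segment ℝ V Z)) = 1 := by
    have h1 : vectorSpan ℝ (segment ℝ V Z) = vectorSpan ℝ ({V, Z} : Set (Fin n → ℝ)) := by
      rw [← convexHull_pair, ← direction_affineSpan, affineSpan_convexHull, direction_affineSpan]
    rw [h1, vectorSpan_pair]
    refine finrank_span_singleton ?_
    rw [vsub_eq_sub]
    exact sub_ne_zero.2 (Ne.symm hZV)
  -- Z is an extreme point of the segment, hence of P
  have hZseg : Z ∈ Set.extremePoints ℝ (segment ℝ V Z) := by
    rw [mem_extremePoints_iff_forall_segment]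
    refine ⟨right_mem_segment ℝ V Z, ?_⟩
    intro x₁ hx₁ x₂ hx₂ hxmem
    set q := Z - V with hq
    have hqpos : 0 < dot q q := Stmt7.dot_self_pos (sub_ne_zero.2 hZV)
    have hVZ : dot q Z - dot q V = dot q q := by rw [hq, Stmt7.dot_sub_right]
    have hbound : ∀ x ∈ segment ℝ V Z, dot q x ≤ dot q Z ∧ (dot q x = dot q Z → x = Z) := by
      intro x hx
      obtain ⟨u, v, hu, hv, huv, hxe⟩ := hx
      have hv1 : v = 1 - u := by linarith
      have hd : dot q x = u * dot q V + (1-u) * dot q Z := by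
        rw [← hxe, Stmt7.dot_pair_right, hv1]
      constructor
      · nlinarith [mul_nonneg hu (le_of_lt hqpos)]
      · intro he
        have h7 : u * (dot q Z - dot q V) = 0 := by linarith
        rw [hVZ] at h7
        have hu0 : u = 0 := (mul_eq_zero.1 h7).resolve_right (ne_of_gt hqpos)
        rw [← hxe, hu0, hv1, hu0, zero_smul, zero_add, sub_zero, one_smul]
    obtain ⟨b₁, e₁⟩ := hbound x₁ hx₁
    obtain ⟨b₂, e₂⟩ := hbound x₂ hx₂
    obtain ⟨t, t', ht, ht', htt, hZe⟩ := hxmem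
    have hd : dot q Z = t * dot q x₁ + t' * dot q x₂ := by
      rw [← hZe, Stmt7.dot_pair_right]
    by_cases h1 : dot q x₁ = dot q Z
    · exact Or.inl (e₁ h1)
    · have hlt : dot q x₁ < dot q Z := lt_of_le_of_ne b₁ h1
      have h5 : t' * dot q x₂ ≤ t' * dot q Z := mul_le_mul_of_nonneg_left b₂ ht'
      have ht'1 : t' = 1 - t := by linarith
      rw [ht'1] at hd h5
      have ht0 : t ≤ 0 := by nlinarith
      have ht00 : t = 0 := le_antisymm ht0 ht
      rw [ht00, ht'1, ht00, zero_smul, zero_add, sub_zero, one_smul] at hZe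
      exact Or.inr hZe
  have hZext : Z ∈ Set.extremePoints ℝ P :=
    (hexp.isExtreme).extremePoints_subset_extremePoints hZseg
  have hZN : Z ∈ Nplus := by
    rw [hNp]
    exact ⟨⟨hZext, hZV, ⟨V, left_mem_segment ℝ V Z⟩, hexp, hrank⟩, haZ⟩
  have hslopeZ : (dot E Z - dot E V) / (dot a Z - dot a V) = β := by
    have hZc0 : dot c₀ Z = dot c₀ V := (Finset.mem_filter.1 hZS0).2
    rw [hc₀, hc₀] at hZc0
    have hd : dot a Z - dot a V ≠ 0 := ne_of_gt (sub_pos.2 haZ)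
    rw [div_eq_iff hd]; nlinarith
  have hlow : γp ≤ (dot E Z - dot E V) / (dot a Z - dot a V) := hγp.2 ⟨Z, hZN, rfl⟩
  rwa [hslopeZ] at hlow
end

section
/- Let S ⊆ (Fin n → ℝ) be finite, P = convexHull ℝ S, a, E : Fin n → ℝ, and let V be a cost-optimal extreme point of P. Assume the set N₊ of edge-neighbors Z of V with a·Z > a·V is nonempty, and let Z ∈ N₊ attain the minimal gradient: (E·Z − E·V)/(a·Z − a·V) ≤ (E·Z' − E·V)/(a·Z' − a·V) for all Z' ∈ N₊. Then for every r ∈ [0, 1] the point p(r) = V + r • (Z − V) is cost-optimal: for every q ∈ P with a·q = a·p(r) one has E·p(r) ≤ E·q. -/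
namespace Stmt8

open Finset

variable {n : ℕ}

/-- `dot a` as a linear map. -/
noncomputable def dlin (a : Fin n → ℝ) : (Fin n → ℝ) →ₗ[ℝ] ℝ where
  toFun x := dot a x
  map_add' x y := by simp [dot, mul_add, Finset.sum_add_distrib]
  map_smul' r x := by simp [dot, Finset.mul_sum, mul_left_comm]

@[simp] lemma dlin_apply (a x : Fin n → ℝ) : dlin a x = dot a x := rfl

lemma hull_le (W : (Fin n → ℝ) →ₗ[ℝ] ℝ) {S : Set (Fin n → ℝ)} {m : ℝ}
    (h : ∀ s ∈ S, W s ≤ m) : ∀ p ∈ convexHull ℝ S, W p ≤ m :=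
  fun _p hp => convexHull_min h (convex_halfSpace_le W.isLinear m) hp

lemma face_mem (B : Finset (Fin n → ℝ)) (W : (Fin n → ℝ) →ₗ[ℝ] ℝ) {m : ℝ}
    (hB : ∀ s ∈ B, W s ≤ m) {p : Fin n → ℝ}
    (hp : p ∈ convexHull ℝ (B : Set (Fin n → ℝ))) (hpm : m ≤ W p) :
    p ∈ convexHull ℝ {s : Fin n → ℝ | s ∈ B ∧ W s = m} := by
  classical
  rw [Finset.convexHull_eq] at hp
  obtain ⟨w, hw0, hw1, hwc⟩ := hp
  have hWp : W p = ∑ y ∈ B, w y * W y := by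
    rw [← hwc, Finset.centerMass, hw1]
    simp [map_sum, map_smul]
  have hterm : ∀ y ∈ B, 0 ≤ w y * (m - W y) := fun y hy =>
    mul_nonneg (hw0 y hy) (sub_nonneg.2 (hB y hy))
  have hsum : ∑ y ∈ B, w y * (m - W y) = 0 := by
    have h1 : ∑ y ∈ B, w y * (m - W y) = m - ∑ y ∈ B, w y * W y := by
      simp [mul_sub, Finset.sum_sub_distrib, ← Finset.sum_mul, hw1]
    have h3 : 0 ≤ ∑ y ∈ B, w y * (m - W y) := Finset.sum_nonneg hterm
    rw [h1] at h3 ⊢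
    linarith [hWp ▸ hpm]
  have hkey : ∀ y ∈ B, w y ≠ 0 → W y = m := by
    intro y hy hwy
    have := (Finset.sum_eq_zero_iff_of_nonneg hterm).1 hsum y hy
    rcases mul_eq_zero.1 this with h | h
    · exact absurd h hwy
    · linarith
  rw [← Finset.centerMass_filter_ne_zero] at hwc
  rw [← hwc]
  refine Finset.centerMass_mem_convexHull _ (fun y hy => hw0 y (Finset.mem_filter.1 hy).1) ?_ ?_
  · rw [Finset.sum_filter_ne_zero]
    · rw [hw1]; norm_num
  · intro y hy
    rw [Finset.mem_filter] at hy
    exact ⟨hy.1, hkey y hy.1 hy.2⟩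

lemma face_lemma {S : Set (Fin n → ℝ)} (hS : S.Finite) {V z : Fin n → ℝ}
    (hV : V ∈ S) (hz : z ∈ S) (hzV : z ≠ V) (W : (Fin n → ℝ) →ₗ[ℝ] ℝ)
    (h1 : ∀ s ∈ S, W s ≤ W V) (hWz : W z = W V)
    (h3 : ∀ s ∈ S, s ∉ segment ℝ V z → W s < W V) :
    IsExposed ℝ (convexHull ℝ S) (segment ℝ V z) ∧
      z ∈ Set.extremePoints ℝ (convexHull ℝ S) := by
  classical
  set P := convexHull ℝ S with hPdef
  have hVP : V ∈ P := subset_convexHull ℝ S hV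
  have hzP : z ∈ P := subset_convexHull ℝ S hz
  have hseg : segment ℝ V z ⊆ P := (convex_convexHull ℝ S).segment_subset hVP hzP
  have hmax : ∀ p ∈ P, W p ≤ W V := hull_le W h1
  have hWseg : ∀ x ∈ segment ℝ V z, W x = W V := by
    intro x hx
    rw [segment_eq_image'] at hx
    obtain ⟨t, _, rfl⟩ := hx
    simp only [map_add, map_smul, map_sub, smul_eq_mul, hWz]
    ring
  have hface : ∀ p ∈ P, W V ≤ W p → p ∈ segment ℝ V z := by
    intro p hp hpm
    have hp' : p ∈ convexHull ℝ ((hS.toFinset : Finset _) : Set (Fin n → ℝ)) := by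
      rwa [hS.coe_toFinset]
    have hmem := face_mem hS.toFinset W (fun s hs => h1 s (hS.mem_toFinset.1 hs)) hp' hpm
    refine convexHull_min ?_ (convex_segment V z) hmem
    rintro s ⟨hsB, hsW⟩
    by_contra hns
    exact absurd hsW (ne_of_lt (h3 s (hS.mem_toFinset.1 hsB) hns))
  -- parametrization facts
  have hd : z - V ≠ 0 := sub_ne_zero.2 hzV
  set φ : (Fin n → ℝ) →ₗ[ℝ] ℝ := dlin (z - V) with hφ
  have hφd : 0 < φ (z - V) := by
    have : φ (z - V) = ∑ i, (z - V) i * (z - V) i := rfl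
    rw [this]
    have hne : ∃ i, (z - V) i ≠ 0 := by
      by_contra hcon
      push_neg at hcon
      exact hd (funext fun i => hcon i)
    obtain ⟨i, hi⟩ := hne
    refine Finset.sum_pos' (fun j _ => mul_self_nonneg _) ⟨i, Finset.mem_univ i, ?_⟩
    exact mul_self_pos.2 hi
  -- injectivity-style fact on the segment
  have hparam : ∀ x ∈ segment ℝ V z, ∃ t : ℝ, t ∈ Set.Icc (0:ℝ) 1 ∧ x = V + t • (z - V) := by
    intro x hx
    rw [segment_eq_image'] at hx
    obtain ⟨t, ht, rfl⟩ := hx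
    exact ⟨t, ht, rfl⟩
  constructor
  · intro _
    refine ⟨LinearMap.toContinuousLinearMap W, ?_⟩
    ext x
    simp only [Set.mem_setOf_eq, LinearMap.coe_toContinuousLinearMap']
    constructor
    · intro hx
      exact ⟨hseg hx, fun y hy => (hmax y hy).trans_eq (hWseg x hx).symm⟩
    · rintro ⟨hxP, hmx⟩
      exact hface x hxP (hmx V hVP)
  · rw [mem_extremePoints]
    refine ⟨hzP, ?_⟩
    intro x₁ hx₁ x₂ hx₂ hzo
    obtain ⟨α, β, hα, hβ, hαβ, hcomb⟩ := hzo
    have hWx1 : W x₁ ≤ W V := hmax x₁ hx₁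
    have hWx2 : W x₂ ≤ W V := hmax x₂ hx₂
    have hWcomb : α * W x₁ + β * W x₂ = W V := by
      have : W (α • x₁ + β • x₂) = W z := by rw [hcomb]
      simpa [map_add, map_smul, hWz] using this
    have hWx1' : W x₁ = W V := by
      by_contra hne
      have hlt : W x₁ < W V := lt_of_le_of_ne hWx1 hne
      have hlt2 : α * W x₁ + β * W x₂ < α * W V + β * W V :=
        add_lt_add_of_lt_of_le (mul_lt_mul_of_pos_left hlt hα)
          (mul_le_mul_of_nonneg_left hWx2 hβ.le)
      have heq2 : α * W V + β * W V = W V := by rw [← add_mul, hαβ, one_mul]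
      linarith
    have hWx2' : W x₂ = W V := by
      by_contra hne
      have hlt : W x₂ < W V := lt_of_le_of_ne hWx2 hne
      have hlt2 : α * W x₁ + β * W x₂ < α * W V + β * W V :=
        add_lt_add_of_le_of_lt (mul_le_mul_of_nonneg_left hWx1 hα.le)
          (mul_lt_mul_of_pos_left hlt hβ)
      have heq2 : α * W V + β * W V = W V := by rw [← add_mul, hαβ, one_mul]
      linarith
    have hx1s : x₁ ∈ segment ℝ V z := hface x₁ hx₁ hWx1'.ge
    have hx2s : x₂ ∈ segment ℝ V z := hface x₂ hx₂ hWx2'.ge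
    obtain ⟨t₁, ht₁, rfl⟩ := hparam x₁ hx1s
    obtain ⟨t₂, ht₂, rfl⟩ := hparam x₂ hx2s
    have hφx1 : φ (V + t₁ • (z - V)) = φ V + t₁ * φ (z - V) := by
      rw [map_add, map_smul]; rfl
    have hφx2 : φ (V + t₂ • (z - V)) = φ V + t₂ * φ (z - V) := by
      rw [map_add, map_smul]; rfl
    have hφz : φ z = φ V + φ (z - V) := by rw [map_sub]; ring
    have key : α * (φ V + t₁ * φ (z - V)) + β * (φ V + t₂ * φ (z - V))
        = φ V + φ (z - V) := by
      have hc := congrArg φ hcomb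
      rw [map_add, map_smul, map_smul, smul_eq_mul, smul_eq_mul, hφx1, hφx2, hφz] at hc
      exact hc
    have hts : α * t₁ + β * t₂ = 1 := by
      have h5 : (α * t₁ + β * t₂) * φ (z - V) = 1 * φ (z - V) := by
        linear_combination key - (φ V) * hαβ
      exact mul_right_cancel₀ (ne_of_gt hφd) h5
    have p1 : 0 ≤ α * (1 - t₁) := mul_nonneg hα.le (by linarith [ht₁.2])
    have p2 : 0 ≤ β * (1 - t₂) := mul_nonneg hβ.le (by linarith [ht₂.2])
    have e : α * (1 - t₁) + β * (1 - t₂) = 0 := by ring_nf; linarith [hts, hαβ]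
    have h6 : α * (1 - t₁) = 0 := by linarith
    have h7 : β * (1 - t₂) = 0 := by linarith
    have ht₁1 : t₁ = 1 := by
      rcases mul_eq_zero.1 h6 with h | h
      · exact absurd h (ne_of_gt hα)
      · linarith
    have ht₂1 : t₂ = 1 := by
      rcases mul_eq_zero.1 h7 with h | h
      · exact absurd h (ne_of_gt hβ)
      · linarith
    constructor
    · rw [ht₁1, one_smul]; abel
    · rw [ht₂1, one_smul]; abel

lemma rot (B : Finset (Fin n → ℝ)) (V : Fin n → ℝ) (c u : (Fin n → ℝ) →ₗ[ℝ] ℝ)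
    (hc : ∀ s ∈ B, s ≠ V → c s < c V) (hu : ∃ s ∈ B, u V < u s) :
    ∃ (l : (Fin n → ℝ) →ₗ[ℝ] ℝ) (A : Finset (Fin n → ℝ)), A ⊆ B ∧ A.Nonempty ∧
      (∀ s ∈ A, u V < u s) ∧ (∀ s ∈ B, l s ≤ l V) ∧ (∀ s ∈ A, l s = l V) ∧
      (∀ s ∈ B, s ≠ V → s ∉ A → l s < l V) := by
  classical
  set Du := B.filter (fun s => u V < u s) with hDu
  have hDune : Du.Nonempty := by
    obtain ⟨s, hs, hus⟩ := hu
    exact ⟨s, Finset.mem_filter.2 ⟨hs, hus⟩⟩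
  set μ : (Fin n → ℝ) → ℝ := fun s => (c V - c s) / (u s - u V) with hμ
  obtain ⟨s₀, hs₀, hmin⟩ := Finset.exists_min_image Du μ hDune
  have hposnum : ∀ s ∈ Du, 0 < c V - c s := by
    intro s hs
    have h := Finset.mem_filter.1 hs
    have hne : s ≠ V := fun h' => lt_irrefl _ (h' ▸ h.2)
    linarith [hc s h.1 hne]
  have hposden : ∀ s ∈ Du, 0 < u s - u V := fun s hs =>
    sub_pos.2 (Finset.mem_filter.1 hs).2
  have hm : 0 < μ s₀ := div_pos (hposnum s₀ hs₀) (hposden s₀ hs₀)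
  set m := μ s₀ with hmdef
  set l : (Fin n → ℝ) →ₗ[ℝ] ℝ := c + m • u with hl
  have happ : ∀ x, l x = c x + m * u x := fun x => rfl
  have hDu_le : ∀ s ∈ Du, l s ≤ l V := by
    intro s hs
    have h1 : m ≤ (c V - c s) / (u s - u V) := hmin s hs
    rw [le_div_iff₀ (hposden s hs)] at h1
    rw [happ, happ]; nlinarith
  have hDu_eq : ∀ s ∈ Du, l s = l V ↔ μ s = m := by
    intro s hs
    have hden := ne_of_gt (hposden s hs)
    constructor
    · intro h
      have h' : c s + m * u s = c V + m * u V := by rw [← happ, ← happ, h]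
      show (c V - c s) / (u s - u V) = m
      rw [div_eq_iff hden]; linarith
    · intro h
      have h' : c V - c s = m * (u s - u V) := (div_eq_iff hden).1 h
      rw [happ, happ]; linarith
  set A := Du.filter (fun s => l s = l V) with hA
  have hnotDu : ∀ s ∈ B, s ≠ V → s ∉ Du → l s < l V := by
    intro s hs hne hnd
    have h1 : ¬ (u V < u s) := fun h => hnd (Finset.mem_filter.2 ⟨hs, h⟩)
    have h2 := hc s hs hne
    rw [happ, happ]
    push_neg at h1
    nlinarith
  refine ⟨l, A, ?_, ⟨s₀, ?_⟩, ?_, ?_, ?_, ?_⟩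
  · exact (Finset.filter_subset _ _).trans (Finset.filter_subset _ _)
  · refine Finset.mem_filter.2 ⟨hs₀, ?_⟩
    exact (hDu_eq s₀ hs₀).2 rfl
  · intro s hs
    exact (Finset.mem_filter.1 ((Finset.filter_subset _ _) hs)).2
  · intro s hs
    by_cases hsne : s = V
    · exact le_of_eq (by rw [hsne])
    by_cases hsd : s ∈ Du
    · exact hDu_le s hsd
    · exact (hnotDu s hs hsne hsd).le
  · intro s hs
    exact (Finset.mem_filter.1 hs).2
  · intro s hs hne hnA
    by_cases hsd : s ∈ Du
    · rcases lt_or_eq_of_le (hDu_le s hsd) with h | h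
      · exact h
      · exact absurd (Finset.mem_filter.2 ⟨hsd, h⟩) hnA
    · exact hnotDu s hs hne hsd

lemma glue (B A' : Finset (Fin n → ℝ)) (hA'B : A' ⊆ B) (V z : Fin n → ℝ)
    (hV : V ∈ A') (hz : z ∈ A') (l w : (Fin n → ℝ) →ₗ[ℝ] ℝ)
    (hl1 : ∀ s ∈ B, l s ≤ l V) (hl2 : ∀ s ∈ A', l s = l V)
    (hl3 : ∀ s ∈ B, s ∉ A' → l s < l V)
    (hw1 : ∀ s ∈ A', w s ≤ w V) (hw2 : w z = w V)
    (hw3 : ∀ s ∈ A', s ∉ segment ℝ V z → w s < w V) :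
    ∃ W : (Fin n → ℝ) →ₗ[ℝ] ℝ, (∀ s ∈ B, W s ≤ W V) ∧ W z = W V ∧
      (∀ s ∈ B, s ∉ segment ℝ V z → W s < W V) := by
  classical
  set T := B \ A' with hT
  have hTs : ∀ s ∈ T, l s < l V := fun s hs =>
    hl3 s (Finset.mem_sdiff.1 hs).1 (Finset.mem_sdiff.1 hs).2
  set g : (Fin n → ℝ) → ℝ := fun s => (l V - l s) / (2 * max 1 (w s - w V)) with hg
  have hgpos : ∀ s ∈ T, 0 < g s := by
    intro s hs
    have h1 : (0:ℝ) < max 1 (w s - w V) := lt_of_lt_of_le one_pos (le_max_left _ _)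
    exact div_pos (sub_pos.2 (hTs s hs)) (by linarith)
  set ε : ℝ := if hTne : T.Nonempty then T.inf' hTne g else 1 with hε
  have hεpos : 0 < ε := by
    rw [hε]; split_ifs with h
    · exact (Finset.lt_inf'_iff _).2 (hgpos)
    · norm_num
  have hεle : ∀ s ∈ T, ε ≤ g s := by
    intro s hs
    rw [hε, dif_pos ⟨s, hs⟩]
    exact Finset.inf'_le _ hs
  set W : (Fin n → ℝ) →ₗ[ℝ] ℝ := l + ε • w with hW
  have happ : ∀ x, W x = l x + ε * w x := fun x => rfl
  have hTstrict : ∀ s ∈ T, W s < W V := by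
    intro s hs
    rw [happ, happ]
    rcases le_or_gt (w s) (w V) with h | h
    · have h2 : ε * (w s - w V) ≤ 0 :=
        mul_nonpos_of_nonneg_of_nonpos hεpos.le (by linarith)
      have := hTs s hs
      nlinarith
    · have hd : 0 < w s - w V := sub_pos.2 h
      have hm1 : w s - w V ≤ max 1 (w s - w V) := le_max_right _ _
      have hm0 : (0:ℝ) < max 1 (w s - w V) := lt_of_lt_of_le one_pos (le_max_left _ _)
      have h2 : ε * (w s - w V) ≤ g s * (w s - w V) :=
        mul_le_mul_of_nonneg_right (hεle s hs) hd.le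
      have h3 : g s * (w s - w V) ≤ (l V - l s) / 2 := by
        rw [hg]
        rw [div_mul_eq_mul_div, div_le_div_iff₀ (by linarith) two_pos]
        have h4 : 0 ≤ (l V - l s) * (max 1 (w s - w V) - (w s - w V)) :=
          mul_nonneg (sub_pos.2 (hTs s hs)).le (by linarith)
        nlinarith
      have h5 := hTs s hs
      nlinarith
  refine ⟨W, ?_, ?_, ?_⟩
  · intro s hs
    by_cases hsA : s ∈ A'
    · rw [happ, happ, hl2 s hsA]
      have := mul_le_mul_of_nonneg_left (hw1 s hsA) hεpos.le
      linarith
    · exact (hTstrict s (Finset.mem_sdiff.2 ⟨hs, hsA⟩)).le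
  · rw [happ, happ, hl2 z hz, hw2]
  · intro s hs hns
    by_cases hsA : s ∈ A'
    · rw [happ, happ, hl2 s hsA]
      have := mul_lt_mul_of_pos_left (hw3 s hsA hns) hεpos
      linarith
    · exact hTstrict s (Finset.mem_sdiff.2 ⟨hs, hsA⟩)

lemma dual_pair {v1 v2 : Fin n → ℝ} (h : LinearIndependent ℝ ![v1, v2]) :
    ∃ u : (Fin n → ℝ) →ₗ[ℝ] ℝ, u v1 = 1 ∧ u v2 = 0 := by
  have h2 := linearIndependent_fin2.1 h
  have hv1 : v1 ∉ Submodule.span ℝ {v2} := by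
    rw [Submodule.mem_span_singleton]
    push_neg
    intro a
    exact h2.2 a
  set p := Submodule.span ℝ ({v2} : Set (Fin n → ℝ)) with hp
  have hq : p.mkQ v1 ≠ 0 := by
    rw [Submodule.mkQ_apply, Ne, Submodule.Quotient.mk_eq_zero]
    exact hv1
  have : ¬ ∀ φ : Module.Dual ℝ ((Fin n → ℝ) ⧸ p), φ (p.mkQ v1) = 0 := by
    rw [Module.forall_dual_apply_eq_zero_iff]
    exact hq
  push_neg at this
  obtain ⟨φ, hφ⟩ := this
  refine ⟨(φ (p.mkQ v1))⁻¹ • (φ.comp p.mkQ), ?_, ?_⟩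
  · simp only [LinearMap.smul_apply, LinearMap.comp_apply, smul_eq_mul]
    exact inv_mul_cancel₀ hφ
  · have hv2 : p.mkQ v2 = 0 := by
      rw [Submodule.mkQ_apply, Submodule.Quotient.mk_eq_zero]
      exact Submodule.mem_span_singleton_self v2
    simp [hv2]


lemma key_line (B : Finset (Fin n → ℝ)) (V : Fin n → ℝ) (c : (Fin n → ℝ) →ₗ[ℝ] ℝ)
    (hVB : V ∈ B) (hc : ∀ s ∈ B, s ≠ V → c s < c V) (hne : ∃ s ∈ B, s ≠ V)
    (hnopair : ∀ s1 ∈ B, ∀ s2 ∈ B, ¬ LinearIndependent ℝ ![s1 - V, s2 - V]) :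
    ∃ z ∈ B, z ≠ V ∧ ∃ W : (Fin n → ℝ) →ₗ[ℝ] ℝ, (∀ s ∈ B, W s ≤ W V) ∧ W z = W V ∧
      (∀ s ∈ B, s ∉ segment ℝ V z → W s < W V) := by
  classical
  obtain ⟨s₀, hs₀, hs₀ne⟩ := hne
  set v0 := s₀ - V with hv0def
  have hv0 : v0 ≠ 0 := sub_ne_zero.2 hs₀ne
  have hspan : ∀ s ∈ B, ∃ t : ℝ, s - V = t • v0 := by
    intro s hs
    have hni := hnopair s hs s₀ hs₀
    rw [linearIndependent_fin2] at hni
    push_neg at hni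
    simp only [Matrix.cons_val_one, Matrix.head_cons, Matrix.cons_val_zero] at hni
    obtain ⟨a, ha⟩ := hni hv0
    exact ⟨a, ha.symm⟩
  set γ := c v0 with hγ
  have hγneg : γ < 0 := by
    have : c v0 = c s₀ - c V := by rw [hv0def, map_sub]
    rw [hγ, this]
    linarith [hc s₀ hs₀ hs₀ne]
  obtain ⟨z, hzB, hzmin⟩ := B.exists_min_image c ⟨V, hVB⟩
  have hzne : z ≠ V := by
    intro h
    have := hzmin s₀ hs₀
    rw [h] at this
    linarith [hc s₀ hs₀ hs₀ne]
  obtain ⟨tz, htz⟩ := hspan z hzB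
  have hcz : c z - c V = tz * γ := by rw [← map_sub c z V, htz, map_smul, smul_eq_mul, hγ]
  have htzpos : 0 < tz := by
    have h1 : c z ≤ c s₀ := hzmin s₀ hs₀
    have h2 : c s₀ - c V = γ := by rw [hγ, hv0def, map_sub]
    nlinarith
  refine ⟨z, hzB, hzne, 0, by simp, by simp, ?_⟩
  intro s hs hseg
  exfalso
  apply hseg
  obtain ⟨ts, hts⟩ := hspan s hs
  have hcs : c s - c V = ts * γ := by rw [← map_sub c s V, hts, map_smul, smul_eq_mul, hγ]
  have hts0 : 0 ≤ ts := by
    by_cases hsV : s = V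
    · have : c s - c V = 0 := by rw [hsV]; ring
      rw [hcs] at this
      nlinarith
    · nlinarith [hc s hs hsV]
  have htsz : ts ≤ tz := by
    have := hzmin s hs
    nlinarith
  rw [segment_eq_image']
  refine ⟨ts / tz, ⟨div_nonneg hts0 htzpos.le, (div_le_one htzpos).2 htsz⟩, ?_⟩
  show V + (ts / tz) • (z - V) = s
  have : (ts / tz) • (z - V) = ts • v0 := by
    rw [htz, smul_smul, div_mul_cancel₀ _ (ne_of_gt htzpos)]
  rw [this, ← hts]
  abel

theorem key : ∀ (k : ℕ) (B : Finset (Fin n → ℝ)) (V : Fin n → ℝ)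
    (c : (Fin n → ℝ) →ₗ[ℝ] ℝ),
    Module.finrank ℝ ↥(vectorSpan ℝ (B : Set (Fin n → ℝ))) ≤ k → V ∈ B →
    (∀ s ∈ B, s ≠ V → c s < c V) → (∃ s ∈ B, s ≠ V) →
    ∃ z ∈ B, z ≠ V ∧ ∃ W : (Fin n → ℝ) →ₗ[ℝ] ℝ, (∀ s ∈ B, W s ≤ W V) ∧ W z = W V ∧
      (∀ s ∈ B, s ∉ segment ℝ V z → W s < W V) := by
  intro k
  induction k with
  | zero =>
    intro B V c hrk hVB hc hne
    exact key_line B V c hVB hc hne (by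
      intro s1 hs1 s2 hs2 hind
      have hsp : Submodule.span ℝ (Set.range ![s1 - V, s2 - V]) ≤
          vectorSpan ℝ (B : Set (Fin n → ℝ)) := by
        rw [Submodule.span_le]
        rintro x hx
        obtain ⟨i, rfl⟩ := hx
        fin_cases i
        · exact vsub_mem_vectorSpan ℝ hs1 hVB
        · exact vsub_mem_vectorSpan ℝ hs2 hVB
      have h2 : Module.finrank ℝ ↥(Submodule.span ℝ (Set.range ![s1 - V, s2 - V])) = 2 := by
        rw [finrank_span_eq_card hind]
        simp
      have h3 := Submodule.finrank_mono hsp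
      omega)
  | succ k ih =>
    intro B V c hrk hVB hc hne
    by_cases hpair : ∃ s1 ∈ B, ∃ s2 ∈ B, LinearIndependent ℝ ![s1 - V, s2 - V]
    · obtain ⟨s1, hs1, s2, hs2, hind⟩ := hpair
      obtain ⟨u, hu1, hu2⟩ := dual_pair hind
      have hs2ne : s2 ≠ V := by
        intro h
        apply (linearIndependent_fin2.1 hind).1
        simp [h]
      have huex : ∃ s ∈ B, u V < u s := by
        refine ⟨s1, hs1, ?_⟩
        have : u s1 - u V = 1 := by rw [← map_sub, hu1]
        linarith
      obtain ⟨l, A, hAB, hAne, hAu, hlle, hleq, hlstrict⟩ := rot B V c u hc huex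
      set B' : Finset (Fin n → ℝ) := insert V A with hB'
      have hAneV : ∀ s ∈ A, s ≠ V := by
        intro s hs h
        have := hAu s hs
        rw [h] at this
        exact lt_irrefl _ this
      have hB'B : B' ⊆ B := by
        intro x hx
        rcases Finset.mem_insert.1 hx with h | h
        · rw [h]; exact hVB
        · exact hAB h
      have hl2' : ∀ s ∈ B', l s = l V := by
        intro s hs
        rcases Finset.mem_insert.1 hs with h | h
        · rw [h]
        · exact hleq s h
      -- dimension drop
      have hus2 : u s2 = u V := by
        have : u (s2 - V) = 0 := hu2
        rw [map_sub] at this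
        linarith
      have hs2nA : s2 ∉ A := by
        intro h
        have := hAu s2 h
        rw [hus2] at this
        exact lt_irrefl _ this
      have hls2 : l s2 < l V := hlstrict s2 hs2 hs2ne hs2nA
      have hdrop : Module.finrank ℝ ↥(vectorSpan ℝ (B' : Set (Fin n → ℝ))) ≤ k := by
        have hlt : vectorSpan ℝ (B' : Set (Fin n → ℝ)) < vectorSpan ℝ (B : Set (Fin n → ℝ)) := by
          refine lt_of_le_of_ne (vectorSpan_mono ℝ (Finset.coe_subset.2 hB'B)) ?_
          intro heq
          have hker : ∀ x ∈ vectorSpan ℝ (B' : Set (Fin n → ℝ)), l x = 0 := by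
            intro x hx
            rw [vectorSpan_def] at hx
            refine Submodule.span_induction ?_ ?_ ?_ ?_ hx
            · rintro y hy
              obtain ⟨p, hp, q, hq, rfl⟩ := Set.mem_vsub.1 hy
              rw [vsub_eq_sub, map_sub, hl2' p (Finset.mem_coe.1 hp), hl2' q (Finset.mem_coe.1 hq)]
              ring
            · simp
            · intro x y _ _ hx hy
              rw [map_add, hx, hy]; ring
            · intro r x _ hx
              rw [map_smul, hx, smul_eq_mul]; ring
          have hw : s2 - V ∈ vectorSpan ℝ (B' : Set (Fin n → ℝ)) := by
            rw [heq]
            exact vsub_mem_vectorSpan ℝ hs2 hVB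
          have := hker _ hw
          rw [map_sub] at this
          linarith
        have := Submodule.finrank_lt_finrank_of_lt hlt
        omega
      obtain ⟨s₀, hs₀A⟩ := hAne
      have hB'ne : ∃ s ∈ B', s ≠ V := ⟨s₀, Finset.mem_insert_of_mem hs₀A, hAneV s₀ hs₀A⟩
      have hcB' : ∀ s ∈ B', s ≠ V → c s < c V := fun s hs hsne => hc s (hB'B hs) hsne
      obtain ⟨z, hzB', hzne, w, hw1, hw2, hw3⟩ :=
        ih B' V c hdrop (Finset.mem_insert_self V A) hcB' hB'ne
      have hl3 : ∀ s ∈ B, s ∉ B' → l s < l V := by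
        intro s hs hsB'
        have hsne : s ≠ V := fun h => hsB' (h ▸ Finset.mem_insert_self V A)
        have hsnA : s ∉ A := fun h => hsB' (Finset.mem_insert_of_mem h)
        exact hlstrict s hs hsne hsnA
      obtain ⟨W, hW1, hW2, hW3⟩ := glue B B' hB'B V z (Finset.mem_insert_self V A) hzB'
        l w hlle hl2' hl3 hw1 hw2 hw3
      exact ⟨z, hB'B hzB', hzne, W, hW1, hW2, hW3⟩
    · push_neg at hpair
      exact key_line B V c hVB hc hne hpair

lemma vertex_sep {S : Set (Fin n → ℝ)} (hS : S.Finite) {V : Fin n → ℝ}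
    (hV : V ∈ Set.extremePoints ℝ (convexHull ℝ S)) :
    V ∈ S ∧ ∃ c : (Fin n → ℝ) →ₗ[ℝ] ℝ, ∀ s ∈ S, s ≠ V → c s < c V := by
  have hVS : V ∈ S := extremePoints_convexHull_subset hV
  have hnot : V ∉ convexHull ℝ (S \ {V}) := by
    have h := (convex_convexHull ℝ S).mem_extremePoints_iff_mem_diff_convexHull_diff.1 hV
    intro hmem
    exact h.2 (convexHull_mono (Set.diff_subset_diff_left (subset_convexHull ℝ S)) hmem)
  have hclosed : IsClosed (convexHull ℝ (S \ {V})) :=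
    ((hS.subset Set.diff_subset).isCompact_convexHull ℝ).isClosed
  obtain ⟨f, u, hfu, huV⟩ :=
    geometric_hahn_banach_closed_point (convex_convexHull ℝ _) hclosed hnot
  refine ⟨hVS, (f : (Fin n → ℝ) →ₗ[ℝ] ℝ), fun s hs hsne => ?_⟩
  exact lt_trans (hfu s (subset_convexHull ℝ _ ⟨hs, hsne⟩)) huV


lemma seg_rank {V z : Fin n → ℝ} (h : z ≠ V) :
    Module.finrank ℝ ↥(vectorSpan ℝ (segment ℝ V z)) = 1 := by
  have h1 : vectorSpan ℝ (segment ℝ V z) = vectorSpan ℝ ({V, z} : Set (Fin n → ℝ)) := by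
    apply le_antisymm
    · have hsub : segment ℝ V z ⊆ (affineSpan ℝ ({V, z} : Set (Fin n → ℝ)) : Set (Fin n → ℝ)) := by
        rw [← convexHull_pair]
        exact convexHull_subset_affineSpan _
      calc vectorSpan ℝ (segment ℝ V z)
          ≤ vectorSpan ℝ ((affineSpan ℝ ({V, z} : Set (Fin n → ℝ))) : Set (Fin n → ℝ)) :=
            vectorSpan_mono ℝ hsub
        _ = vectorSpan ℝ ({V, z} : Set (Fin n → ℝ)) := direction_affineSpan ℝ _
    · refine vectorSpan_mono ℝ ?_
      intro x hx
      rcases hx with h' | h'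
      · rw [h']; exact left_mem_segment ℝ V z
      · rw [Set.mem_singleton_iff] at h'; rw [h']; exact right_mem_segment ℝ V z
  rw [h1, vectorSpan_pair]
  have : V -ᵥ z ≠ 0 := by
    rw [vsub_eq_sub]
    exact sub_ne_zero.2 (Ne.symm h)
  exact finrank_span_singleton this


end Stmt8

open Stmt8 in
/-- At a cost-optimal vertex `V`, moving along the edge towards the
target-increasing edge-neighbor `Z` of minimal gradient stays cost-optimal: every point
`V + r • (Z − V)`, `r ∈ [0,1]`, has minimal cost among points of `P` with the same target. -/
theorem stmt_8 (n : ℕ) (S : Set (Fin n → ℝ)) (hS : S.Finite)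
    (P : Set (Fin n → ℝ)) (hP : P = convexHull ℝ S)
    (a E : Fin n → ℝ)
    (V : Fin n → ℝ) (hV : V ∈ Set.extremePoints ℝ P)
    (hopt : ∀ p ∈ P, dot a p = dot a V → dot E V ≤ dot E p)
    (Z : Fin n → ℝ) (hZ : EdgeNeighbor P V Z) (hZa : dot a V < dot a Z)
    (hZmin : ∀ Z', EdgeNeighbor P V Z' → dot a V < dot a Z' →
      (dot E Z - dot E V) / (dot a Z - dot a V) ≤
        (dot E Z' - dot E V) / (dot a Z' - dot a V)) :
    ∀ r ∈ Set.Icc (0 : ℝ) 1, ∀ q ∈ P,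
      dot a q = dot a (V + r • (Z - V)) → dot E (V + r • (Z - V)) ≤ dot E q := by
  classical
  subst hP
  set Δ := dot a Z - dot a V with hΔ
  have hΔpos : 0 < Δ := sub_pos.2 hZa
  set lam := (dot E Z - dot E V) / Δ with hlam
  have hlamΔ : lam * Δ = dot E Z - dot E V := div_mul_cancel₀ _ (ne_of_gt hΔpos)
  set f : (Fin n → ℝ) →ₗ[ℝ] ℝ := dlin E - lam • dlin a with hf
  have hfapp : ∀ x, f x = dot E x - lam * dot a x := fun x => rfl
  -- Lemma L : V minimizes f over P ∩ {a ≥ a V}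
  have hL : ∀ p ∈ convexHull ℝ S, dot a V ≤ dot a p → f V ≤ f p := by
    intro p hp hap
    by_contra hcon
    push_neg at hcon
    -- a p = a V case
    rcases eq_or_lt_of_le hap with heq | hlt
    · have := hopt p hp heq.symm
      rw [hfapp, hfapp, ← heq] at hcon
      linarith
    -- D nonempty
    have hD : ∃ s ∈ S, f s < f V := by
      by_contra hno
      push_neg at hno
      have hbound : ∀ s ∈ S, (-f) s ≤ (-f) V := by
        intro s hs
        simp only [LinearMap.neg_apply]
        linarith [hno s hs]
      have := hull_le (-f) hbound p hp
      simp only [LinearMap.neg_apply] at this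
      linarith
    by_cases hDlow : ∃ s ∈ S, f s < f V ∧ dot a s ≤ dot a V
    · obtain ⟨s, hsS, hfs, has⟩ := hDlow
      have hsP : s ∈ convexHull ℝ S := subset_convexHull ℝ S hsS
      rcases eq_or_lt_of_le has with heq | hlt2
      · have := hopt s hsP heq
        rw [hfapp, hfapp, heq] at hfs
        linarith
      · -- combine s and p
        set θ := (dot a p - dot a V) / (dot a p - dot a s) with hθ
        have hden : 0 < dot a p - dot a s := by linarith
        have hθ0 : 0 < θ := div_pos (by linarith) hden
        have hθ1 : θ < 1 := (div_lt_one hden).2 (by linarith)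
        set x := θ • s + (1 - θ) • p with hx
        have hxP : x ∈ convexHull ℝ S :=
          (convex_convexHull ℝ S) hsP hp hθ0.le (by linarith) (by ring)
        have hax : dot a x = dot a V := by
          have h1 : dlin a x = θ * dlin a s + (1 - θ) * dlin a p := by
            rw [hx, map_add, map_smul, map_smul, smul_eq_mul, smul_eq_mul]
          simp only [dlin_apply] at h1
          rw [h1, hθ]
          field_simp
          ring
        have hfx : f x = θ * f s + (1 - θ) * f p := by
          rw [hx, map_add, map_smul, map_smul, smul_eq_mul, smul_eq_mul]
        have hfxlt : f x < f V := by
          have h1 : θ * f s < θ * f V := mul_lt_mul_of_pos_left hfs hθ0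
          have h2 : (1 - θ) * f p < (1 - θ) * f V :=
            mul_lt_mul_of_pos_left hcon (by linarith)
          rw [hfx]
          nlinarith
        have hEx := hopt x hxP hax
        rw [hfapp, hfapp, hax] at hfxlt
        linarith
    · push_neg at hDlow
      obtain ⟨hVS, c, hc⟩ := vertex_sep hS hV
      set B := hS.toFinset with hB
      have hcB : ∀ s ∈ B, s ≠ V → c s < c V := fun s hs hsne =>
        hc s (hS.mem_toFinset.1 hs) hsne
      have huex : ∃ s ∈ B, (-f) V < (-f) s := by
        obtain ⟨s, hsS, hfs⟩ := hD
        refine ⟨s, hS.mem_toFinset.2 hsS, ?_⟩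
        simp only [LinearMap.neg_apply]
        linarith
      obtain ⟨l, A, hAB, hAne, hAu, hlle, hleq, hlstrict⟩ := rot B V c (-f) hcB huex
      set B' : Finset (Fin n → ℝ) := insert V A with hB'
      have hAneV : ∀ s ∈ A, s ≠ V := by
        intro s hs h
        have := hAu s hs
        rw [h] at this
        exact lt_irrefl _ this
      have hB'B : B' ⊆ B := by
        intro x hx
        rcases Finset.mem_insert.1 hx with h | h
        · rw [h]; exact hS.mem_toFinset.2 hVS
        · exact hAB h
      have hcB' : ∀ s ∈ B', s ≠ V → c s < c V := fun s hs hsne => hcB s (hB'B hs) hsne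
      obtain ⟨s₀, hs₀A⟩ := hAne
      obtain ⟨z, hzB', hzne, w, hw1, hw2, hw3⟩ :=
        key (Module.finrank ℝ ↥(vectorSpan ℝ (B' : Set (Fin n → ℝ)))) B' V c
          le_rfl (Finset.mem_insert_self V A) hcB'
          ⟨s₀, Finset.mem_insert_of_mem hs₀A, hAneV s₀ hs₀A⟩
      have hl2' : ∀ s ∈ B', l s = l V := by
        intro s hs
        rcases Finset.mem_insert.1 hs with h | h
        · rw [h]
        · exact hleq s h
      have hl3 : ∀ s ∈ B, s ∉ B' → l s < l V := by
        intro s hs hsB'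
        have hsne : s ≠ V := fun h => hsB' (h ▸ Finset.mem_insert_self V A)
        have hsnA : s ∉ A := fun h => hsB' (Finset.mem_insert_of_mem h)
        exact hlstrict s hs hsne hsnA
      obtain ⟨W, hW1, hW2, hW3⟩ := glue B B' hB'B V z (Finset.mem_insert_self V A) hzB'
        l w hlle hl2' hl3 hw1 hw2 hw3
      have hzA : z ∈ A := by
        rcases Finset.mem_insert.1 hzB' with h | h
        · exact absurd h hzne
        · exact h
      have hzS : z ∈ S := hS.mem_toFinset.1 (hB'B hzB')
      have hfz : f z < f V := by
        have := hAu z hzA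
        simp only [LinearMap.neg_apply] at this
        linarith
      obtain ⟨hexp, hzext⟩ := face_lemma hS hVS hzS hzne W
        (fun s hs => hW1 s (hS.mem_toFinset.2 hs)) hW2
        (fun s hs hns => hW3 s (hS.mem_toFinset.2 hs) hns)
      have hza : dot a V < dot a z := hDlow z hzS hfz
      have hedge : EdgeNeighbor (convexHull ℝ S) V z :=
        ⟨hzext, hzne, ⟨V, left_mem_segment ℝ V z⟩, hexp, seg_rank hzne⟩
      have hgrad := hZmin z hedge hza
      rw [le_div_iff₀ (sub_pos.2 hza)] at hgrad
      rw [hfapp, hfapp] at hfz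
      linarith
  -- conclude
  intro r hr q hq haq
  have haff : ∀ b : Fin n → ℝ, dot b (V + r • (Z - V)) = dot b V + r * (dot b Z - dot b V) := by
    intro b
    have : dlin b (V + r • (Z - V)) = dlin b V + r * (dlin b Z - dlin b V) := by
      rw [map_add, map_smul, map_sub, smul_eq_mul]
    simpa using this
  have haq' : dot a q = dot a V + r * Δ := by rw [haq, haff]
  have hge : dot a V ≤ dot a q := by
    rw [haq']
    nlinarith [hr.1, hΔpos]
  have hLq := hL q hq hge
  rw [hfapp, hfapp] at hLq
  rw [haff]
  have : r * (dot E Z - dot E V) = lam * (r * Δ) := by rw [← hlamΔ]; ring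
  rw [haq'] at hLq
  linarith
end
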